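/- arXiv:1206.4752 — 8 statements merged into one kernel-verified Lean document; each statement's English description precedes it below -/
import Mathlib

section
/- Let G be a locally compact abelian Hausdorff topological group (written additively) and let w : G → ℝ be a weight, i.e. w is continuous, w(t) ≥ 1, w(s+t) ≤ w(s)·w(t) and w(−t) = w(t) for all s,t ∈ G, and Σ_{n=1}^∞ n⁻² · log w(n·t) < ∞ for every t ∈ G. Then for every compact set K ⊆ G one has (1/n)·log w(s + n·t) → 0 as n → ∞ uniformly with respect to s, t ∈ K; that is, for every ε > 0 there exists N such that (1/n)·log w(s + n·t) < ε for all n ≥ N and all s, t ∈ K. -/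
/-- For a weight `w` on a locally compact abelian Hausdorff group `G`
(continuous, `w ≥ 1`, submultiplicative, symmetric, Beurling–Domar condition),
`(1/n) log w(s + n • t) → 0` uniformly for `s, t` in any compact `K ⊆ G`. -/
theorem weight_log_uniform_limit
    {G : Type*} [AddCommGroup G] [TopologicalSpace G] [IsTopologicalAddGroup G]
    [LocallyCompactSpace G] [T2Space G]
    (w : G → ℝ)
    (hw_cont : Continuous w)
    (hw_one : ∀ t : G, 1 ≤ w t)
    (hw_submul : ∀ s t : G, w (s + t) ≤ w s * w t)
    (hw_symm : ∀ t : G, w (-t) = w t)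
    (hw_BD : ∀ t : G, Summable fun n : ℕ => Real.log (w (n • t)) / (n : ℝ) ^ 2) :
    ∀ K : Set G, IsCompact K → ∀ ε > 0, ∃ N : ℕ, ∀ n : ℕ, N ≤ n →
      ∀ s ∈ K, ∀ t ∈ K, (1 / (n : ℝ)) * Real.log (w (s + n • t)) < ε := by
  intro K hK ε hε
  rcases K.eq_empty_or_nonempty with hKe | hKne
  · exact ⟨0, fun n _ s hs => absurd hs (by simp [hKe])⟩
  have hw_pos : ∀ x : G, 0 < w x := fun x => lt_of_lt_of_le one_pos (hw_one x)
  set a : ℕ → G → ℝ := fun n t => Real.log (w (n • t)) with ha_def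
  have ha_nonneg : ∀ n t, 0 ≤ a n t := fun n t => Real.log_nonneg (hw_one _)
  have ha_add : ∀ m n (t : G), a (m + n) t ≤ a m t + a n t := by
    intro m n t
    have h1 : w ((m + n) • t) ≤ w (m • t) * w (n • t) := by
      rw [add_smul]; exact hw_submul _ _
    calc a (m + n) t ≤ Real.log (w (m • t) * w (n • t)) :=
          Real.log_le_log (hw_pos _) h1
      _ = a m t + a n t := Real.log_mul (hw_pos _).ne' (hw_pos _).ne'
  set c0 : ℝ := Real.log (w 0) with hc0_def
  have hc0_nonneg : 0 ≤ c0 := Real.log_nonneg (hw_one 0)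
  have ha_zero : ∀ t : G, a 0 t = c0 := by intro t; simp [ha_def, hc0_def]
  have ha_mul : ∀ (q m : ℕ) (t : G), a (q * m) t ≤ c0 + q * a m t := by
    intro q m t
    induction q with
    | zero => simp [ha_zero]
    | succ q ih =>
      have h1 : a ((q + 1) * m) t ≤ a (q * m) t + a m t := by
        have : (q + 1) * m = q * m + m := by ring
        rw [this]; exact ha_add _ _ _
      have : ((q : ℝ) + 1) * a m t = q * a m t + a m t := by ring
      push_cast
      linarith
  -- pointwise smallness from Beurling–Domar
  have hpt : ∀ t : G, ∀ δ : ℝ, 0 < δ → ∃ n : ℕ, 1 ≤ n ∧ a n t < δ * n := by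
    intro t δ hδ
    by_contra h
    push_neg at h
    have hs : Summable (fun n : ℕ => δ * (n : ℝ)⁻¹) := by
      apply Summable.of_nonneg_of_le (fun n => by positivity) _ (hw_BD t)
      intro n
      rcases Nat.eq_zero_or_pos n with rfl | hn
      · simp
      · have hn' : (0:ℝ) < n := by exact_mod_cast hn
        have hle := h n hn
        have : δ * (n : ℝ)⁻¹ = δ * n / (n : ℝ) ^ 2 := by field_simp
        rw [this]
        gcongr
    have : Summable (fun n : ℕ => (n : ℝ)⁻¹) :=
      (summable_mul_left_iff hδ.ne').mp hs
    exact Real.not_summable_natCast_inv this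
  have ha_cont : ∀ n : ℕ, Continuous fun t : G => a n t := by
    intro n
    exact (hw_cont.comp (continuous_id.nsmul n)).log (fun x => (hw_pos _).ne')
  -- uniform smallness along powers of two, via compactness
  have hunif : ∀ δ : ℝ, 0 < δ → ∃ k : ℕ, ∀ t ∈ K, a (2 ^ k) t < δ * 2 ^ k := by
    intro δ hδ
    set U : ℕ → Set G := fun k => {t | a (2 ^ k) t < δ * 2 ^ k} with hU_def
    have hUopen : ∀ k, IsOpen (U k) :=
      fun k => isOpen_lt (ha_cont (2 ^ k)) continuous_const
    have hUmono : Monotone U := by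
      apply monotone_nat_of_le_succ
      intro k t ht
      have h1 : a (2 ^ (k + 1)) t ≤ a (2 ^ k) t + a (2 ^ k) t := by
        have : 2 ^ (k + 1) = 2 ^ k + 2 ^ k := by ring
        rw [this]; exact ha_add _ _ _
      have ht' : a (2 ^ k) t < δ * 2 ^ k := ht
      have : (2:ℝ) ^ (k+1) = 2 ^ k + 2 ^ k := by ring
      show a (2 ^ (k + 1)) t < δ * 2 ^ (k + 1)
      rw [this] at *
      linarith
    have hcover : ∀ t ∈ K, ∃ k : ℕ, t ∈ U k := by
      intro t _
      obtain ⟨n, hn1, hn⟩ := hpt t (δ / 2) (by positivity)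
      obtain ⟨k, hk⟩ := pow_unbounded_of_one_lt
        ((2 * c0 + n * a 1 t) / (δ / 2)) (one_lt_two : (1:ℝ) < 2)
      have hk' : 2 * c0 + n * a 1 t < δ / 2 * 2 ^ k := by
        rw [div_lt_iff₀ (by positivity : (0:ℝ) < δ / 2)] at hk
        linarith
      refine ⟨k, ?_⟩
      set q := 2 ^ k / n with hq_def
      set r := 2 ^ k % n with hr_def
      have hqr : q * n + r = 2 ^ k := by rw [hq_def, hr_def, mul_comm]; exact Nat.div_add_mod _ _
      have h2 : a (2 ^ k) t ≤ a (q * n) t + a r t := by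
        rw [← hqr]; exact ha_add _ _ _
      have h3 : a (q * n) t ≤ c0 + q * a n t := ha_mul q n t
      have h4 : a r t ≤ c0 + r * a 1 t := by
        have := ha_mul r 1 t
        simpa using this
      have hqn : (q : ℝ) * n ≤ 2 ^ k := by
        have : q * n ≤ 2 ^ k := Nat.div_mul_le_self _ _
        exact_mod_cast this
      have h5 : (q : ℝ) * a n t ≤ δ / 2 * 2 ^ k := by
        calc (q : ℝ) * a n t ≤ (q : ℝ) * (δ / 2 * n) :=
              mul_le_mul_of_nonneg_left hn.le (Nat.cast_nonneg q)
          _ = δ / 2 * ((q : ℝ) * n) := by ring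
          _ ≤ δ / 2 * 2 ^ k := by
              apply mul_le_mul_of_nonneg_left hqn (by positivity)
      have h6 : (r : ℝ) * a 1 t ≤ (n : ℝ) * a 1 t := by
        have hr : (r : ℝ) ≤ n := by
          have : r < n := Nat.mod_lt _ (Nat.lt_of_lt_of_le Nat.zero_lt_one hn1)
          exact_mod_cast this.le
        exact mul_le_mul_of_nonneg_right hr (ha_nonneg 1 t)
      show a (2 ^ k) t < δ * 2 ^ k
      have : δ * 2 ^ k = δ / 2 * 2 ^ k + δ / 2 * 2 ^ k := by ring
      rw [this]
      linarith
    obtain ⟨s, hs⟩ := hK.elim_finite_subcover U hUopen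
      (fun t ht => Set.mem_iUnion.mpr (hcover t ht))
    refine ⟨s.sup id, fun t ht => ?_⟩
    obtain ⟨i, hi, hti⟩ := Set.mem_iUnion₂.mp (hs ht)
    exact hUmono (Finset.le_sup (f := id) hi) hti
  -- uniform bound for `a 1` on `K`
  obtain ⟨t0, -, hA'max⟩ := hK.exists_isMaxOn hKne hw_cont.continuousOn
  have hA : ∀ t ∈ K, w t ≤ w t0 := hA'max
  set A : ℝ := max (Real.log (w t0)) 0 with hA_def
  have hA0 : 0 ≤ A := le_max_right _ _
  have hA' : ∀ t ∈ K, a 1 t ≤ A := by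
    intro t ht
    have h1 : w (1 • t) ≤ w t0 := by
      rw [one_nsmul]; exact hA t ht
    exact le_trans (Real.log_le_log (hw_pos _) h1) (le_max_left _ _)
  -- main argument
  obtain ⟨k, hk⟩ := hunif (ε / 4) (by positivity)
  set C : ℝ := A + 2 * c0 + (2 : ℝ) ^ k * A with hC_def
  have hC0 : 0 ≤ C := by positivity
  obtain ⟨N, hN⟩ := exists_nat_gt (C / (ε / 2))
  refine ⟨N + 1, fun n hn s hs t ht => ?_⟩
  have hn1 : 1 ≤ n := le_trans (Nat.le_add_left 1 N) hn
  have hnR : (0:ℝ) < n := by exact_mod_cast hn1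
  have h1 : Real.log (w (s + n • t)) ≤ a 1 s + a n t := by
    have hsub : w (s + n • t) ≤ w s * w (n • t) := hw_submul _ _
    calc Real.log (w (s + n • t)) ≤ Real.log (w s * w (n • t)) :=
          Real.log_le_log (hw_pos _) hsub
      _ = a 1 s + a n t := by
          rw [Real.log_mul (hw_pos _).ne' (hw_pos _).ne']
          simp [ha_def, one_nsmul]
  set q := n / 2 ^ k with hq_def
  set r := n % 2 ^ k with hr_def
  have hqr : q * 2 ^ k + r = n := by
    rw [hq_def, hr_def, mul_comm]; exact Nat.div_add_mod _ _
  have h2 : a n t ≤ a (q * 2 ^ k) t + a r t := by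
    rw [← hqr]; exact ha_add _ _ _
  have h3 : a (q * 2 ^ k) t ≤ c0 + q * a (2 ^ k) t := ha_mul _ _ _
  have h4 : a r t ≤ c0 + r * a 1 t := by
    have := ha_mul r 1 t
    simpa using this
  have hq2 : (q : ℝ) * 2 ^ k ≤ n := by
    have : q * 2 ^ k ≤ n := Nat.div_mul_le_self _ _
    exact_mod_cast this
  have h5 : a (2 ^ k) t < ε / 4 * 2 ^ k := hk t ht
  have h6 : (q : ℝ) * a (2 ^ k) t ≤ ε / 4 * n := by
    calc (q : ℝ) * a (2 ^ k) t ≤ (q : ℝ) * (ε / 4 * 2 ^ k) :=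
          mul_le_mul_of_nonneg_left h5.le (Nat.cast_nonneg q)
      _ = ε / 4 * ((q : ℝ) * 2 ^ k) := by ring
      _ ≤ ε / 4 * n := mul_le_mul_of_nonneg_left hq2 (by positivity)
  have h7 : (r : ℝ) * a 1 t ≤ (2 : ℝ) ^ k * A := by
    have hr : (r : ℝ) ≤ 2 ^ k := by
      have : r < 2 ^ k := Nat.mod_lt _ (pow_pos two_pos k)
      exact_mod_cast this.le
    calc (r : ℝ) * a 1 t ≤ (r : ℝ) * A :=
          mul_le_mul_of_nonneg_left (hA' t ht) (Nat.cast_nonneg r)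
      _ ≤ (2 : ℝ) ^ k * A := mul_le_mul_of_nonneg_right hr hA0
  have htot : Real.log (w (s + n • t)) ≤ C + ε / 4 * n := by
    have hAs := hA' s hs
    have : C = A + 2 * c0 + (2 : ℝ) ^ k * A := hC_def
    linarith
  have hNC : C < ε / 2 * n := by
    rw [div_lt_iff₀ (by positivity : (0:ℝ) < ε / 2)] at hN
    have hNn : (N : ℝ) + 1 ≤ n := by exact_mod_cast hn
    nlinarith
  have hlt : Real.log (w (s + n • t)) < ε * n := by nlinarith
  calc (1 / (n : ℝ)) * Real.log (w (s + n • t)) < (1 / (n : ℝ)) * (ε * n) := by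
        apply mul_lt_mul_of_pos_left hlt (by positivity)
    _ = ε := by field_simp
end

section
/- Let G be a locally compact abelian Hausdorff topological group and let w : G → ℝ be continuous with w(t) > 0 for all t. Then 1/w vanishes at infinity on G (i.e. for every ε > 0 the set {t ∈ G : 1/w(t) ≥ ε} is compact) if and only if both of the following hold: (i) for each compact neighbourhood H of 0 there is a compact set K ⊇ H such that sup_{t∈K} w(t) ≤ inf_{t∉K} w(t); and (ii) G is compact or w is unbounded. -/
/-- For a continuous positive function `w` on a locally compact abelian
Hausdorff group `G`, `1/w` vanishes at infinity iff condition (2.6) holds and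
(`G` is compact or `w` is unbounded). -/
theorem one_div_weight_zero_at_infty_iff
    {G : Type*} [AddCommGroup G] [TopologicalSpace G] [IsTopologicalAddGroup G]
    [LocallyCompactSpace G] [T2Space G]
    (w : G → ℝ) (hw_cont : Continuous w) (hw_pos : ∀ t : G, 0 < w t) :
    (∀ ε > 0, IsCompact {t : G | ε ≤ 1 / w t}) ↔
      ((∀ H : Set G, IsCompact H → H ∈ nhds (0 : G) →
          ∃ K : Set G, IsCompact K ∧ H ⊆ K ∧ ∀ s ∈ K, ∀ t ∉ K, w s ≤ w t) ∧
        (CompactSpace G ∨ ∀ M : ℝ, ∃ t : G, M < w t)) := by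
  have key : ∀ ε : ℝ, 0 < ε → ∀ t : G, (ε ≤ 1 / w t ↔ w t ≤ 1 / ε) := by
    intro ε hε t
    rw [le_div_iff₀ (hw_pos t), le_div_iff₀ hε, mul_comm]
  constructor
  · intro h
    constructor
    · intro H hHc hHn
      obtain ⟨x, hxH, hx⟩ := hHc.exists_isMaxOn ⟨0, mem_of_mem_nhds hHn⟩
        (hw_cont.continuousOn)
      have hM : 0 < w x := hw_pos x
      refine ⟨{t : G | 1 / w x ≤ 1 / w t}, h _ (by positivity), ?_, ?_⟩
      · intro s hs
        show 1 / w x ≤ 1 / w s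
        rw [key _ (by positivity), one_div_one_div]
        exact hx hs
      · intro s hs t ht
        have hs' : w s ≤ w x := by
          have := hs; rw [Set.mem_setOf_eq, key _ (by positivity), one_div_one_div] at this
          exact this
        have ht' : w x < w t := by
          by_contra hwt
          exact ht (by rw [Set.mem_setOf_eq, key _ (by positivity), one_div_one_div]; linarith)
        linarith
    · by_cases hG : CompactSpace G
      · exact Or.inl hG
      · refine Or.inr fun M => ?_
        set M' : ℝ := max M 0 + 1 with hM'
        have hM'pos : 0 < M' := by positivity
        have hC := h (1 / M') (by positivity)
        by_contra hcon
        push_neg at hcon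
        have : {t : G | 1 / M' ≤ 1 / w t} = Set.univ := by
          ext t
          simp only [Set.mem_setOf_eq, Set.mem_univ, iff_true]
          rw [key _ (by positivity), one_div_one_div]
          have := hcon t
          have : M ≤ max M 0 := le_max_left _ _
          linarith [hcon t]
        rw [this] at hC
        exact hG (isCompact_univ_iff.mp hC)
  · rintro ⟨h1, h2⟩ ε hε
    have hSeq : {t : G | ε ≤ 1 / w t} = {t : G | w t ≤ 1 / ε} := by
      ext t; exact key ε hε t
    have hScl : IsClosed {t : G | ε ≤ 1 / w t} := by
      rw [hSeq]; exact isClosed_le hw_cont continuous_const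
    rcases h2 with hG | hub
    · exact hScl.isCompact
    · obtain ⟨t₁, ht₁⟩ := hub (1 / ε)
      obtain ⟨H₀, hH₀c, hH₀n⟩ := exists_compact_mem_nhds (0 : G)
      set H : Set G := H₀ ∪ (fun s => t₁ + s) '' H₀ with hH
      have hHc : IsCompact H := hH₀c.union (hH₀c.image (continuous_const.add continuous_id))
      have hHn : H ∈ nhds (0 : G) := Filter.mem_of_superset hH₀n Set.subset_union_left
      obtain ⟨K, hKc, hHK, hord⟩ := h1 H hHc hHn
      have ht₁K : t₁ ∈ K := hHK (Or.inr ⟨0, mem_of_mem_nhds hH₀n, add_zero t₁⟩)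
      refine hKc.of_isClosed_subset hScl ?_
      intro t ht
      by_contra htK
      have h1 : w t₁ ≤ w t := hord t₁ ht₁K t htK
      rw [Set.mem_setOf_eq, key ε hε] at ht
      linarith
end

section
/- Let X be a complex Banach space, n ∈ ℕ, and p : ℝ → X a continuous function. Then Δ_t^{n+1} p = 0 for every t ∈ ℝ if and only if there exist x_0, x_1, …, x_n ∈ X such that p(t) = Σ_{k=0}^n t^k · x_k for all t ∈ ℝ. -/
/-- The difference operator `Δ_h f (t) = f (t + h) - f t`. -/
def fdiff {G X : Type*} [Add G] [Sub X] (h : G) (f : G → X) : G → X :=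
  fun t => f (t + h) - f t

set_option linter.unusedSectionVars false

open Polynomial Finset

section helpers
variable {E : Type*} [NormedAddCommGroup E] [NormedSpace ℝ E]

lemma iter_smul_const (h : ℝ) (f : ℝ → ℝ) (x : E) (m : ℕ) :
    (fwdDiff h)^[m] (fun t => f t • x) = fun t => ((fwdDiff h)^[m] f t) • x := by
  induction m generalizing f with
  | zero => rfl
  | succ m ih =>
    rw [Function.iterate_succ_apply, Function.iterate_succ_apply,
      show fwdDiff h (fun t => f t • x) = fun t => (fwdDiff h f t) • x from
        funext fun t => by simp [fwdDiff, sub_smul], ih]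

lemma natDegree_comp_sub (q : ℝ[X]) (h : ℝ) {n : ℕ} (hq : q.natDegree ≤ n + 1) :
    (q.comp (X + C h) - q).natDegree ≤ n := by
  rw [Polynomial.natDegree_le_iff_coeff_eq_zero]
  intro N hN
  have hdc : (q.comp (X + C h)).natDegree = q.natDegree := by
    rw [natDegree_comp, natDegree_X_add_C, mul_one]
  rw [Polynomial.coeff_sub]
  rcases lt_or_ge q.natDegree N with hlt | hle
  · rw [Polynomial.coeff_eq_zero_of_natDegree_lt (hdc ▸ hlt),
      Polynomial.coeff_eq_zero_of_natDegree_lt hlt, sub_zero]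
  · have hNd : N = q.natDegree := by omega
    have h1 : (q.comp (X + C h)).coeff N = (q.comp (X + C h)).leadingCoeff := by
      rw [Polynomial.leadingCoeff, hdc, hNd]
    have h2 : (q.comp (X + C h)).leadingCoeff = q.leadingCoeff := by
      rw [Polynomial.leadingCoeff_comp (by rw [natDegree_X_add_C]; exact one_ne_zero),
        (monic_X_add_C h).leadingCoeff, one_pow, mul_one]
    rw [h1, h2, Polynomial.leadingCoeff, ← hNd, sub_self]

lemma fwdDiff_iter_polyeval (n : ℕ) : ∀ (q : ℝ[X]), q.natDegree ≤ n → ∀ h : ℝ,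
    (fwdDiff h)^[n + 1] (fun t => q.eval t) = 0 := by
  induction n with
  | zero =>
    intro q hq h
    rw [Polynomial.eq_C_of_natDegree_le_zero hq]
    funext t
    simp [fwdDiff]
  | succ n ih =>
    intro q hq h
    rw [Function.iterate_succ_apply,
      show fwdDiff h (fun t => q.eval t) = fun t => (q.comp (X + C h) - q).eval t from
        funext fun t => by simp [fwdDiff, Polynomial.eval_comp]]
    exact ih _ (natDegree_comp_sub q h hq) h

end helpers
open Polynomial Finset

section
variable {E : Type*} [NormedAddCommGroup E] [NormedSpace ℝ E]

lemma fwdDiff_iter_zero' {M G : Type*} [AddCommMonoid M] [AddCommGroup G] (h : M) (m : ℕ) :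
    (fwdDiff h)^[m] (0 : M → G) = 0 := by
  induction m with
  | zero => rfl
  | succ m ih =>
    rw [Function.iterate_succ_apply, show fwdDiff h (0 : M → G) = 0 from
      funext fun t => sub_self _, ih]

lemma newton_grid (n : ℕ) (p : ℝ → E) (h y : ℝ)
    (hΔ : (fwdDiff h)^[n + 1] p = 0) (k : ℕ) :
    p (y + k • h) = ∑ j ∈ Finset.range (n + 1), k.choose j • ((fwdDiff h)^[j] p y) := by
  rw [shift_eq_sum_fwdDiff_iter h p k y]
  have hvanish : ∀ j, n + 1 ≤ j → (fwdDiff h)^[j] p = 0 := by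
    intro j hj
    obtain ⟨r, rfl⟩ := Nat.exists_eq_add_of_le hj
    rw [add_comm, Function.iterate_add_apply, hΔ, fwdDiff_iter_zero']
  rcases le_total k n with hkn | hnk
  · refine Finset.sum_subset (Finset.range_subset_range.mpr (by omega)) fun j hj hjk => ?_
    rw [Finset.mem_range] at hj
    rw [Finset.mem_range, not_lt] at hjk
    rw [Nat.choose_eq_zero_of_lt (by omega), zero_smul]
  · symm
    refine Finset.sum_subset (Finset.range_subset_range.mpr (by omega)) fun j hj hjn => ?_
    rw [Finset.mem_range, not_lt] at hjn
    rw [hvanish j (by omega)]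
    simp

lemma sum_polyeval_smul {ι : Type*} (s : Finset ι) (q : ι → ℝ[X]) (v : ι → E) (n : ℕ)
    (hq : ∀ j ∈ s, (q j).natDegree < n + 1) (t : ℝ) :
    ∑ j ∈ s, (q j).eval t • v j
      = ∑ i : Fin (n + 1), t ^ (i : ℕ) • (∑ j ∈ s, (q j).coeff i • v j) := by
  simp_rw [Finset.smul_sum]
  rw [Finset.sum_comm]
  refine Finset.sum_congr rfl fun j hj => ?_
  rw [Polynomial.eval_eq_sum_range' (hq j hj) t, Finset.sum_smul,
    ← Fin.sum_univ_eq_sum_range (fun i => ((q j).coeff i * t ^ i) • v j)]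
  congr 1 with i
  rw [smul_smul, mul_comm]

lemma coeffs_eq_zero (n : ℕ)
    (x : Fin (n + 1) → E) (s : Fin (n + 1) → ℝ) (hs : Function.Injective s)
    (hz : ∀ j, ∑ i : Fin (n + 1), (s j) ^ (i : ℕ) • x i = 0) : ∀ i, x i = 0 := by
  intro i
  apply NormedSpace.eq_zero_of_forall_dual_eq_zero ℝ
  intro φ
  set f : ℝ[X] := ∑ i : Fin (n + 1), C (φ (x i)) * X ^ (i : ℕ) with hf
  have hdeg : f.degree < (Finset.univ : Finset (Fin (n + 1))).card := by
    rw [Finset.card_univ, Fintype.card_fin]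
    refine lt_of_le_of_lt (Polynomial.degree_sum_le _ _) ?_
    refine (Finset.sup_lt_iff (by exact WithBot.bot_lt_coe _)).mpr fun i _ => ?_
    exact lt_of_le_of_lt (Polynomial.degree_C_mul_X_pow_le _ _)
      (by exact_mod_cast Nat.cast_lt.mpr i.isLt)
  have hzero : f = 0 := by
    refine Polynomial.eq_zero_of_degree_lt_of_eval_index_eq_zero
      (s := (Finset.univ : Finset (Fin (n + 1)))) (v := s)
      (Set.injOn_of_injective hs) hdeg fun j _ => ?_
    have h2 := congrArg φ (hz j)
    rw [map_sum, map_zero] at h2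
    simp only [map_smul, smul_eq_mul] at h2
    rw [hf]
    simp only [Polynomial.eval_finset_sum, Polynomial.eval_mul, Polynomial.eval_C,
      Polynomial.eval_pow, Polynomial.eval_X]
    rw [← h2]
    exact Finset.sum_congr rfl fun i _ => mul_comm _ _
  have hcoeff : f.coeff (i : ℕ) = φ (x i) := by
    rw [hf]
    simp only [Polynomial.finset_sum_coeff, Polynomial.coeff_C_mul, Polynomial.coeff_X_pow]
    rw [Finset.sum_eq_single i]
    · simp
    · intro k _ hk
      rw [if_neg (fun hik : (i : ℕ) = (k : ℕ) => hk (Fin.val_injective hik.symm)), mul_zero]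
    · intro hi; exact absurd (Finset.mem_univ i) hi
  rw [← hcoeff, hzero, Polynomial.coeff_zero]

lemma rational_eq (n : ℕ) (p : ℝ → E)
    (hc : ∀ h : ℝ, (fwdDiff h)^[n + 1] p = 0) (r : ℚ) :
    p (r : ℝ) = ∑ j ∈ Finset.range (n + 1),
      (Lagrange.basis (Finset.range (n + 1)) (fun i : ℕ => (i : ℝ)) j).eval (r : ℝ) • p j := by
  classical
  have hinj : Set.InjOn (fun i : ℕ => (i : ℝ)) (Finset.range (n + 1)) :=
    fun a _ b _ hab => Nat.cast_injective hab
  set L : ℕ → ℝ[X] := fun j => Lagrange.basis (Finset.range (n + 1)) (fun i : ℕ => (i : ℝ)) j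
    with hLdef
  have hLdeg : ∀ j ∈ Finset.range (n + 1), (L j).natDegree < n + 1 := by
    intro j hj
    rw [hLdef]
    rw [Lagrange.natDegree_basis hinj hj, Finset.card_range]
    omega
  -- basic data
  have hmpos : 0 < r.den := r.pos
  have hm0 : (0 : ℝ) < (r.den : ℝ) := by exact_mod_cast hmpos
  set m : ℕ := r.den with hmdef
  set M : ℕ := r.num.natAbs with hMdef
  set h : ℝ := (m : ℝ)⁻¹ with hhdef
  set y : ℝ := -(M : ℝ) with hydef
  have hΔ : (fwdDiff h)^[n + 1] p = 0 := hc h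
  -- the natural number k with y + k h = r
  have h1 : (1 : ℤ) ≤ (m : ℤ) := by exact_mod_cast hmpos
  have h2 : (M : ℤ) ≤ (M : ℤ) * m := le_mul_of_one_le_right (by positivity) h1
  have h3 : -r.num ≤ (M : ℤ) := by rw [hMdef]; omega
  have hknn : 0 ≤ r.num + (M : ℤ) * m := by omega
  set k : ℕ := (r.num + (M : ℤ) * m).toNat with hkdef
  have hkz : (k : ℤ) = r.num + (M : ℤ) * m := Int.toNat_of_nonneg hknn
  have hkr : y + k • h = (r : ℝ) := by
    rw [nsmul_eq_mul, hydef, hhdef]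
    have : (k : ℝ) = (r.num : ℝ) + (M : ℝ) * m := by exact_mod_cast congrArg (Int.cast : ℤ → ℝ) hkz
    rw [this, Rat.cast_def, hmdef]
    field_simp
    ring
  -- Newton data
  set d : ℕ → E := fun j => (fwdDiff h)^[j] p y with hddef
  have hN : ∀ k' : ℕ, p (y + k' • h) = ∑ j ∈ Finset.range (n + 1), k'.choose j • d j :=
    newton_grid n p h y hΔ
  -- polynomials q1 (binomial side)
  set q1 : ℕ → ℝ[X] := fun j => C ((j.factorial : ℝ)⁻¹) * descPochhammer ℝ j with hq1def
  have hq1deg : ∀ j ∈ Finset.range (n + 1), (q1 j).natDegree < n + 1 := by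
    intro j hj
    rw [Finset.mem_range] at hj
    calc (q1 j).natDegree ≤ (descPochhammer ℝ j).natDegree := Polynomial.natDegree_C_mul_le _ _
      _ = j := descPochhammer_natDegree ℝ j
      _ < n + 1 := hj
  have hq1eval : ∀ (j k' : ℕ), (q1 j).eval ((k' : ℝ)) = (k'.choose j : ℝ) := by
    intro j k'
    rw [hq1def]
    simp only [Polynomial.eval_mul, Polynomial.eval_C]
    rw [descPochhammer_eval_eq_descFactorial ℝ k' j, Nat.descFactorial_eq_factorial_mul_choose]
    push_cast
    rw [← mul_assoc, inv_mul_cancel₀ (by exact_mod_cast j.factorial_ne_zero), one_mul]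
  set a : Fin (n + 1) → E := fun i => ∑ j ∈ Finset.range (n + 1), (q1 j).coeff i • d j with hadef
  have hG : ∀ t : ℝ, ∑ j ∈ Finset.range (n + 1), (q1 j).eval t • d j
      = ∑ i : Fin (n + 1), t ^ (i : ℕ) • a i :=
    fun t => sum_polyeval_smul _ _ _ _ hq1deg t
  have hNs : ∀ k' : ℕ, (∑ j ∈ Finset.range (n + 1), (q1 j).eval ((k' : ℝ)) • d j)
      = p (y + k' • h) := by
    intro k'
    rw [hN k']
    refine Finset.sum_congr rfl fun j _ => ?_
    rw [hq1eval j k', Nat.cast_smul_eq_nsmul]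
  -- polynomials q2 (Lagrange side)
  set q2 : ℕ → ℝ[X] := fun j => (L j).comp (C y + C h * X) with hq2def
  have hlin : (C y + C h * X : ℝ[X]).natDegree ≤ 1 := by
    refine le_trans (Polynomial.natDegree_add_le _ _) (max_le (by simp) ?_)
    exact le_trans (Polynomial.natDegree_C_mul_le _ _) (by simp)
  have hq2deg : ∀ j ∈ Finset.range (n + 1), (q2 j).natDegree < n + 1 := by
    intro j hj
    calc (q2 j).natDegree ≤ (L j).natDegree * (C y + C h * X : ℝ[X]).natDegree :=
          Polynomial.natDegree_comp_le
      _ ≤ n * 1 := Nat.mul_le_mul (by have := hLdeg j hj; omega) hlin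
      _ < n + 1 := by omega
  have hq2eval : ∀ (j : ℕ) (t : ℝ), (q2 j).eval t = (L j).eval (y + h * t) := by
    intro j t
    rw [hq2def]
    simp [Polynomial.eval_comp]
  set b : Fin (n + 1) → E := fun i => ∑ j ∈ Finset.range (n + 1), (q2 j).coeff i • p j with hbdef
  have hH : ∀ t : ℝ, ∑ j ∈ Finset.range (n + 1), (q2 j).eval t • p j
      = ∑ i : Fin (n + 1), t ^ (i : ℕ) • b i :=
    fun t => sum_polyeval_smul _ _ _ _ hq2deg t
  -- nodes
  set sN : Fin (n + 1) → ℝ := fun j => (((M + (j : ℕ)) * m : ℕ) : ℝ) with hsNdef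
  have hsinj : Function.Injective sN := by
    intro i j hij
    have h4 : ((M + (i : ℕ)) * m : ℕ) = ((M + (j : ℕ)) * m : ℕ) := Nat.cast_injective hij
    have h5 : M + (i : ℕ) = M + (j : ℕ) := Nat.eq_of_mul_eq_mul_right hmpos h4
    exact Fin.ext (by omega)
  have hnode : ∀ j : Fin (n + 1), y + ((M + (j : ℕ)) * m) • h = (((j : ℕ) : ℝ)) := by
    intro j
    rw [nsmul_eq_mul, hydef, hhdef]
    push_cast
    field_simp
    ring
  have hkron : ∀ jj : Fin (n + 1),
      ∑ j' ∈ Finset.range (n + 1), (L j').eval (((jj : ℕ) : ℝ)) • p j' = p ((jj : ℕ) : ℝ) := by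
    intro jj
    have hjjmem : (jj : ℕ) ∈ Finset.range (n + 1) := Finset.mem_range.mpr jj.isLt
    rw [Finset.sum_eq_single_of_mem (jj : ℕ) hjjmem]
    · rw [hLdef, Lagrange.eval_basis_self hinj hjjmem, one_smul]
    · intro j' hj' hne
      rw [hLdef]
      rw [show ((jj : ℕ) : ℝ) = (fun i : ℕ => (i : ℝ)) (jj : ℕ) from rfl,
        Lagrange.eval_basis_of_ne hne hjjmem, zero_smul]
  -- values at the nodes coincide
  have hGval : ∀ jj : Fin (n + 1),
      ∑ i : Fin (n + 1), (sN jj) ^ (i : ℕ) • a i = p ((jj : ℕ) : ℝ) := by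
    intro jj
    rw [← hG (sN jj), hsNdef]
    rw [hNs ((M + (jj : ℕ)) * m), hnode jj]
  have hHval : ∀ jj : Fin (n + 1),
      ∑ i : Fin (n + 1), (sN jj) ^ (i : ℕ) • b i = p ((jj : ℕ) : ℝ) := by
    intro jj
    rw [← hH (sN jj)]
    have : ∀ j' ∈ Finset.range (n + 1),
        (q2 j').eval (sN jj) = (L j').eval (((jj : ℕ) : ℝ)) := by
      intro j' _
      rw [hq2eval j' (sN jj)]
      congr 1
      rw [hsNdef, mul_comm h _, ← nsmul_eq_mul]
      exact hnode jj
    rw [Finset.sum_congr rfl fun j' hj' => by rw [this j' hj']]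
    exact hkron jj
  -- conclude a = b
  have hab : ∀ i, a i = b i := by
    have hz : ∀ jj : Fin (n + 1), ∑ i : Fin (n + 1), (sN jj) ^ (i : ℕ) • (a i - b i) = 0 := by
      intro jj
      simp_rw [smul_sub]
      rw [Finset.sum_sub_distrib, hGval jj, hHval jj, sub_self]
    intro i
    have := coeffs_eq_zero n (fun i => a i - b i) sN hsinj hz i
    exact sub_eq_zero.mp this
  -- evaluate at k
  calc p (r : ℝ) = p (y + k • h) := by rw [hkr]
    _ = ∑ j ∈ Finset.range (n + 1), (q1 j).eval ((k : ℝ)) • d j := (hNs k).symm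
    _ = ∑ i : Fin (n + 1), (k : ℝ) ^ (i : ℕ) • a i := hG _
    _ = ∑ i : Fin (n + 1), (k : ℝ) ^ (i : ℕ) • b i := by
        exact Finset.sum_congr rfl fun i _ => by rw [hab i]
    _ = ∑ j ∈ Finset.range (n + 1), (q2 j).eval ((k : ℝ)) • p j := (hH _).symm
    _ = ∑ j ∈ Finset.range (n + 1), (L j).eval (r : ℝ) • p j := by
        refine Finset.sum_congr rfl fun j _ => ?_
        rw [hq2eval j ((k : ℝ)), mul_comm h _, ← nsmul_eq_mul, hkr]

end


/-- a continuous `p : ℝ → X` satisfies `Δ_t^{n+1} p = 0` for all `t`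
iff it is an ordinary polynomial of degree at most `n` with coefficients in `X`. -/
theorem poly_iff_monomial_sum
    {X : Type*} [NormedAddCommGroup X] [NormedSpace ℂ X] [CompleteSpace X]
    (n : ℕ) (p : ℝ → X) (hp : Continuous p) :
    (∀ t : ℝ, (fdiff t)^[n + 1] p = 0) ↔
      ∃ x : Fin (n + 1) → X, ∀ t : ℝ, p t = ∑ k : Fin (n + 1), t ^ (k : ℕ) • x k := by
  have hfd : ∀ h : ℝ, (fdiff h : (ℝ → X) → (ℝ → X)) = fwdDiff h := fun _ => rfl
  constructor
  · intro hc
    have hc' : ∀ h : ℝ, (fwdDiff h)^[n + 1] p = 0 := fun h => by rw [← hfd]; exact hc h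
    have hinj : Set.InjOn (fun i : ℕ => (i : ℝ)) (Finset.range (n + 1)) :=
      fun a _ b _ hab => Nat.cast_injective hab
    set L : ℕ → Polynomial ℝ :=
      fun j => Lagrange.basis (Finset.range (n + 1)) (fun i : ℕ => (i : ℝ)) j with hLdef
    have hLdeg : ∀ j ∈ Finset.range (n + 1), (L j).natDegree < n + 1 := by
      intro j hj
      rw [hLdef, Lagrange.natDegree_basis hinj hj, Finset.card_range]
      omega
    set P : ℝ → X := fun t => ∑ j ∈ Finset.range (n + 1), (L j).eval t • p j with hPdef
    have hPeq : p = P := by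
      have hcont : Continuous P := by
        apply continuous_finset_sum
        intro j _
        exact ((L j).continuous).smul continuous_const
      refine Continuous.ext_on Rat.denseRange_cast hp hcont ?_
      rintro _ ⟨r, rfl⟩
      exact rational_eq n p hc' r
    refine ⟨fun i => ∑ j ∈ Finset.range (n + 1), (L j).coeff i • p j, fun t => ?_⟩
    calc p t = P t := by rw [hPeq]
      _ = ∑ i : Fin (n + 1), t ^ (i : ℕ) •
            (∑ j ∈ Finset.range (n + 1), (L j).coeff i • p j) := by
          rw [hPdef]
          exact sum_polyeval_smul _ _ _ _ hLdeg t
  · rintro ⟨x, hx⟩ t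
    rw [hfd t]
    have hpfun : p = ∑ i : Fin (n + 1), (fun s : ℝ => s ^ (i : ℕ) • x i) := by
      funext s
      rw [hx s]
      simp [Finset.sum_apply]
    rw [hpfun, fwdDiff_iter_finset_sum]
    refine Finset.sum_eq_zero fun i _ => ?_
    rw [iter_smul_const t (fun s => s ^ (i : ℕ)) (x i) (n + 1)]
    have hz : (fwdDiff t)^[n + 1] (fun s : ℝ => s ^ (i : ℕ)) = 0 := by
      have := fwdDiff_iter_polyeval n ((Polynomial.X : Polynomial ℝ) ^ (i : ℕ))
        (by rw [Polynomial.natDegree_X_pow]; omega) t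
      simpa using this
    rw [hz]
    funext s
    simp
end

section
/- Let G be a Hausdorff topological abelian group, X a complex Banach space, and J ⊆ G a subsemigroup containing 0, with nonempty interior, such that G = J − J = {u − v : u, v ∈ J}. Fix n ∈ ℕ. Then for every continuous q : J → X with Δ_v^{n+1} q = 0 for all v ∈ J there exists a unique continuous p : G → X with Δ_t^{n+1} p = 0 for all t ∈ G whose restriction to J equals q. In particular the restriction map P^n(G,X) → P^n(J,X) is a linear bijection. -/
open Finset Nat Function fwdDiff

lemma fdiff_eq_fwdDiff {G X : Type*} [AddCommMonoid G] [AddCommGroup X] (h : G) (f : G → X) :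
    fdiff h f = fwdDiff h f := rfl

section Seq

variable {M : Type*} [AddCommMonoid M] {X : Type*} [AddCommGroup X]

lemma fwdDiff_iter_zero_fun (h : M) (k : ℕ) :
    (fwdDiff h)^[k] (0 : M → X) = 0 := by
  induction k with
  | zero => rfl
  | succ k ih => rw [Function.iterate_succ_apply, show fwdDiff h (0 : M → X) = 0 by
      funext t; simp [fwdDiff], ih]

lemma fwdDiff_iter_eq_zero_of_le {h : M} {f : M → X} {a b : ℕ} (hab : a ≤ b)
    (hf : (fwdDiff h)^[a] f = 0) : (fwdDiff h)^[b] f = 0 := by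
  obtain ⟨c, rfl⟩ := Nat.exists_eq_add_of_le hab
  rw [Nat.add_comm, Function.iterate_add_apply, hf, fwdDiff_iter_zero_fun]

/-- Truncated Gregory-Newton formula. -/
lemma newton_trunc {m : ℕ} {u : ℕ → X} (hu : (fwdDiff (1:ℕ))^[m] u = 0) (t : ℕ) :
    u t = ∑ i ∈ range m, t.choose i • (fwdDiff (1:ℕ))^[i] u 0 := by
  have h0 : u t = ∑ i ∈ range (t+1), t.choose i • (fwdDiff (1:ℕ))^[i] u 0 := by
    have := shift_eq_sum_fwdDiff_iter (1:ℕ) u t 0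
    simpa using this
  have hbig : ∀ N, t + 1 ≤ N → m ≤ N →
      u t = ∑ i ∈ range N, t.choose i • (fwdDiff (1:ℕ))^[i] u 0 := by
    intro N h1 h2
    rw [h0]
    apply Finset.sum_subset (by intro i hi; simp at hi ⊢; omega)
    intro i hi hni
    simp only [mem_range] at hi hni
    have : t < i := by omega
    rw [Nat.choose_eq_zero_of_lt this, zero_smul]
  rw [hbig (max (t+1) m) (le_max_left _ _) (le_max_right _ _)]
  symm
  apply Finset.sum_subset (by intro i hi; simp at hi ⊢; omega)
  intro i hi hni
  simp only [mem_range] at hi hni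
  have : m ≤ i := by omega
  rw [fwdDiff_iter_eq_zero_of_le this hu, Pi.zero_apply, smul_zero]

/-- Pull back iterated difference along an arithmetic progression. -/
lemma pullback (h : M) :
    ∀ (j : ℕ) (f : M → X) (x : M) (k0 : ℕ),
      (fwdDiff (1:ℕ))^[j] (fun k => f (x + k • h)) k0 = (fwdDiff h)^[j] f (x + k0 • h) := by
  intro j
  induction j with
  | zero => intro f x k0; rfl
  | succ j ih =>
    intro f x k0
    rw [Function.iterate_succ_apply, Function.iterate_succ_apply]
    have : fwdDiff (1:ℕ) (fun k => f (x + k • h)) = fun k => (fwdDiff h f) (x + k • h) := by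
      funext k
      simp only [fwdDiff, smul_eq_mul, mul_one]
      rw [succ_nsmul, ← add_assoc]
    rw [this, ih]

lemma pullback_neg {M : Type*} [AddCommGroup M] (h : M) :
    ∀ (j : ℕ) (f : M → X) (x : M) (k0 : ℕ),
      (fwdDiff (1:ℕ))^[j] (fun k => f (x - k • h)) k0
        = ((-1:ℤ)^j) • (fwdDiff h)^[j] f (x - (k0 + j) • h) := by
  intro j
  induction j with
  | zero => intro f x k0; simp
  | succ j ih =>
    intro f x k0
    rw [Function.iterate_succ_apply, Function.iterate_succ_apply]
    have : fwdDiff (1:ℕ) (fun k => f (x - k • h))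
        = fun k => (-1:ℤ) • (fwdDiff h f) ((x - h) - k • h) := by
      funext k
      simp only [fwdDiff, smul_eq_mul, mul_one, neg_smul, one_smul, neg_sub]
      rw [succ_nsmul]
      abel_nf
    rw [this]
    have hsm : ∀ (g : ℕ → X), (fwdDiff (1:ℕ))^[j] (fun k => (-1:ℤ) • g k) k0
        = (-1:ℤ) • (fwdDiff (1:ℕ))^[j] g k0 := by
      intro g
      have := fwdDiff_iter_const_smul (1:ℕ) (-1:ℤ) g j
      calc (fwdDiff (1:ℕ))^[j] (fun k => (-1:ℤ) • g k) k0
          = (fwdDiff (1:ℕ))^[j] ((-1:ℤ) • g) k0 := rfl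
        _ = ((-1:ℤ) • (fwdDiff (1:ℕ))^[j] g) k0 := by rw [this]
        _ = (-1:ℤ) • (fwdDiff (1:ℕ))^[j] g k0 := rfl
    rw [hsm, ih (fwdDiff h f) (x - h) k0]
    rw [smul_smul]
    rw [show (-1 : ℤ) * (-1)^j = (-1)^(j+1) by ring]
    congr 2
    rw [sub_sub]
    congr 1
    rw [show k0 + (j+1) = (k0 + j) + 1 by omega, succ_nsmul]
    abel

end Seq
section ZSeq

lemma fwdDiff_iter_shift : ∀ (j : ℕ) (f : ℕ → ℤ),
    (fwdDiff (1:ℕ))^[j] (fun k => f (k+1)) = fun k => ((fwdDiff (1:ℕ))^[j] f) (k+1) := by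
  intro j
  induction j with
  | zero => intro f; rfl
  | succ j ih =>
    intro f
    rw [Function.iterate_succ_apply, Function.iterate_succ_apply]
    have : fwdDiff (1:ℕ) (fun k => f (k+1)) = fun k => (fwdDiff (1:ℕ) f) (k+1) := rfl
    rw [this, ih (fwdDiff (1:ℕ) f)]

lemma fwdDiff_mul (f g : ℕ → ℤ) :
    fwdDiff (1:ℕ) (f * g)
      = (fun k => f (k+1)) * fwdDiff (1:ℕ) g + fwdDiff (1:ℕ) f * g := by
  funext k
  simp only [fwdDiff, Pi.mul_apply, Pi.add_apply]
  ring

lemma prod_deg : ∀ (N a b : ℕ) (f g : ℕ → ℤ), a + b = N →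
    (fwdDiff (1:ℕ))^[a+1] f = 0 → (fwdDiff (1:ℕ))^[b+1] g = 0 →
    (fwdDiff (1:ℕ))^[a+b+1] (f * g) = 0 := by
  intro N
  induction N with
  | zero =>
    intro a b f g hab hf hg
    have ha : a = 0 := by omega
    have hb : b = 0 := by omega
    subst ha; subst hb
    have hf' : fwdDiff (1:ℕ) f = 0 := by rwa [show (0:ℕ)+1 = 1 by rfl, Function.iterate_one] at hf
    rw [show (0:ℕ)+0+1 = 1 by rfl, Function.iterate_one, fwdDiff_mul, hf']
    have hg' : fwdDiff (1:ℕ) g = 0 := by rwa [show (0:ℕ)+1 = 1 by rfl, Function.iterate_one] at hg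
    rw [hg']
    simp
  | succ N ihN =>
    intro a b f g hab hf hg
    rw [show a+b+1 = (a+b)+1 from rfl, Function.iterate_succ_apply, fwdDiff_mul,
      fwdDiff_iter_add 1 _ _ (a+b)]
    have h1 : (fwdDiff (1:ℕ))^[a+b] ((fun k => f (k+1)) * fwdDiff (1:ℕ) g) = 0 := by
      rcases Nat.eq_zero_or_pos b with hb | hb
      · subst hb
        have hg' : fwdDiff (1:ℕ) g = 0 := by rwa [show (0:ℕ)+1 = 1 by rfl, Function.iterate_one] at hg
        rw [hg']
        simpa using fwdDiff_iter_zero_fun (1:ℕ) (a+0) (X := ℤ)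
      · obtain ⟨b', rfl⟩ : ∃ b', b = b' + 1 := ⟨b - 1, by omega⟩
        have hf' : (fwdDiff (1:ℕ))^[a+1] (fun k => f (k+1)) = 0 := by
          rw [fwdDiff_iter_shift, hf]; rfl
        have hg' : (fwdDiff (1:ℕ))^[b'+1] (fwdDiff (1:ℕ) g) = 0 := by
          rw [← Function.iterate_succ_apply]; exact hg
        have := ihN a b' (fun k => f (k+1)) (fwdDiff (1:ℕ) g) (by omega) hf' hg'
        rw [show a + (b'+1) = (a + b') + 1 by omega]
        exact this
    have h2 : (fwdDiff (1:ℕ))^[a+b] (fwdDiff (1:ℕ) f * g) = 0 := by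
      rcases Nat.eq_zero_or_pos a with ha | ha
      · subst ha
        have hf' : fwdDiff (1:ℕ) f = 0 := by rwa [show (0:ℕ)+1 = 1 by rfl, Function.iterate_one] at hf
        rw [hf']
        simpa using fwdDiff_iter_zero_fun (1:ℕ) (0+b) (X := ℤ)
      · obtain ⟨a', rfl⟩ : ∃ a', a = a' + 1 := ⟨a - 1, by omega⟩
        have hf' : (fwdDiff (1:ℕ))^[a'+1] (fwdDiff (1:ℕ) f) = 0 := by
          rw [← Function.iterate_succ_apply]; exact hf
        have := ihN a' b (fwdDiff (1:ℕ) f) g (by omega) hf' hg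
        rw [show a' + 1 + b = (a' + b) + 1 by omega]
        exact this
    rw [h1, h2, add_zero]

/-- `Δ^[i+1] (choose · i) = 0` -/
lemma choose_deg (i : ℕ) :
    (fwdDiff (1:ℕ))^[i+1] (fun k => ((k.choose i : ℤ))) = 0 := by
  rw [Function.iterate_succ_apply']
  have h := fwdDiff_iter_choose 0 i
  simp only [Nat.add_zero] at h
  rw [h]
  funext k
  simp [fwdDiff]

/-- sum form of iterated difference at 0 on ℤ sequences -/
lemma sumform (m : ℕ) (g : ℕ → ℤ) :
    ∑ k ∈ Finset.range (m+1), ((-1:ℤ)^(m-k) * (m.choose k)) * g k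
      = (fwdDiff (1:ℕ))^[m] g 0 := by
  rw [fwdDiff_iter_eq_sum_shift]
  apply Finset.sum_congr rfl
  intro k _
  simp [smul_eq_mul]

/-- the basic vanishing: if `Δ^[d] g = 0` with `d ≤ m` then the alternating sum vanishes -/
lemma sum_vanish {m d : ℕ} {g : ℕ → ℤ} (hd : d ≤ m) (hg : (fwdDiff (1:ℕ))^[d] g = 0) :
    ∑ k ∈ Finset.range (m+1), ((-1:ℤ)^(m-k) * (m.choose k)) * g k = 0 := by
  rw [sumform, fwdDiff_iter_eq_zero_of_le hd hg]
  rfl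

/-- alternating partial sums of binomials: `∑_{l ≤ i} (-1)^{i-l} C(r+1, l) = C(r, i)` -/
lemma altsum_choose (i : ℕ) : ∀ r : ℕ,
    ∑ l ∈ Finset.range (i+1), (-1:ℤ)^(i-l) * ((r+1).choose l) = (r.choose i : ℤ) := by
  induction i with
  | zero => intro r; simp
  | succ i ih =>
    intro r
    rw [Finset.sum_range_succ]
    have : ∀ l ∈ Finset.range (i+1), (-1:ℤ)^(i+1-l) * ((r+1).choose l)
        = (-1) * ((-1:ℤ)^(i-l) * ((r+1).choose l)) := by
      intro l hl
      simp only [Finset.mem_range] at hl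
      rw [show i+1-l = (i-l)+1 by omega, pow_succ]
      ring
    rw [Finset.sum_congr rfl this, ← Finset.mul_sum, ih r]
    simp only [Nat.sub_self, pow_zero, one_mul]
    rw [Nat.choose_succ_succ' r i]
    push_cast
    ring

/-- positivity of `ν`. -/
lemma nu_pos : ∀ (m : ℕ), (∀ L, 0 ≤ (fwdDiff (1:ℕ))^[m] (fun k : ℕ => (k:ℤ)^L) 0)
    ∧ (∀ L, m ≤ L → (1 ≤ m ∨ L = 0) → 0 < (fwdDiff (1:ℕ))^[m] (fun k : ℕ => (k:ℤ)^L) 0) := by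
  have hdiff : ∀ L : ℕ, fwdDiff (1:ℕ) (fun k : ℕ => (k:ℤ)^L)
      = ∑ i ∈ Finset.range L, ((L.choose i : ℤ)) • (fun k : ℕ => (k:ℤ)^i) := by
    intro L
    funext k
    simp only [fwdDiff, Finset.sum_apply, Pi.smul_apply, smul_eq_mul]
    have hc : ((k+1:ℕ):ℤ) = (k:ℤ) + 1 := by push_cast; ring
    rw [hc, add_pow, Finset.sum_range_succ]
    simp only [one_pow, mul_one, Nat.choose_self, Nat.cast_one]
    rw [add_sub_cancel_right]
    exact Finset.sum_congr rfl (fun i _ => by ring)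
  intro m
  induction m with
  | zero =>
    constructor
    · intro L; simp only [Function.iterate_zero, id_eq]; positivity
    · intro L _ hL
      rcases hL with h | h
      · omega
      · subst h; simp
  | succ m ih =>
    have key : ∀ L, (fwdDiff (1:ℕ))^[m+1] (fun k : ℕ => (k:ℤ)^L) 0
        = ∑ i ∈ Finset.range L, (L.choose i : ℤ) * (fwdDiff (1:ℕ))^[m] (fun k : ℕ => (k:ℤ)^i) 0 := by
      intro L
      rw [Function.iterate_succ_apply, hdiff L, fwdDiff_iter_finset_sum]
      rw [Finset.sum_apply]
      apply Finset.sum_congr rfl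
      intro i _
      rw [fwdDiff_iter_const_smul]
      simp [smul_eq_mul]
    constructor
    · intro L
      rw [key L]
      apply Finset.sum_nonneg
      intro i _
      have := ih.1 i
      positivity
    · intro L hL _
      rw [key L]
      have hmem : m ∈ Finset.range L := Finset.mem_range.mpr (by omega)
      apply Finset.sum_pos' (fun i _ => by have := ih.1 i; positivity)
      refine ⟨m, hmem, ?_⟩
      have h1 : 0 < (L.choose m : ℤ) := by
        have := Nat.choose_pos (show m ≤ L by omega)
        exact_mod_cast this
      have h2 : 0 < (fwdDiff (1:ℕ))^[m] (fun k : ℕ => (k:ℤ)^m) 0 := ih.2 m le_rfl (by omega)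
      positivity

end ZSeq
section Alpha

lemma gk_rec (k i : ℕ) :
    fwdDiff (1:ℕ) (fun c => (((k*c).choose (i+1) : ℕ) : ℤ))
      = ∑ pq ∈ Finset.HasAntidiagonal.antidiagonal i,
          (∑ r ∈ Finset.range k, ((r.choose pq.2 : ℕ):ℤ)) • (fun c => (((k*c).choose pq.1 : ℕ):ℤ)) := by
  funext c
  simp only [fwdDiff, Finset.sum_apply, Pi.smul_apply, smul_eq_mul]
  have h1 : k*(c+1) = k*c + k := by ring
  rw [h1]
  have h2 : (((k*c + k).choose (i+1) : ℕ) : ℤ) - (((k*c).choose (i+1) : ℕ):ℤ)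
      = ∑ r ∈ Finset.range k, (((k*c + r).choose i : ℕ) : ℤ) := by
    have hts := Finset.sum_range_sub (f := fun r => (((k*c + r).choose (i+1) : ℕ) : ℤ)) k
    simp only [Nat.add_zero] at hts
    rw [← hts]
    apply Finset.sum_congr rfl
    intro r _
    have hps : (k*c + (r+1)).choose (i+1) = (k*c + r).choose i + (k*c + r).choose (i+1) := by
      rw [show k*c + (r+1) = (k*c + r) + 1 by ring]
      exact Nat.choose_succ_succ _ _
    rw [show k*c + (r+1) = k*c + r + 1 by ring] at *
    rw [hps]
    push_cast
    ring
  rw [h2]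
  have h3 : ∀ r, ((k*c + r).choose i : ℤ)
      = ∑ pq ∈ Finset.HasAntidiagonal.antidiagonal i, ((k*c).choose pq.1 : ℤ) * (r.choose pq.2 : ℤ) := by
    intro r
    rw [Nat.add_choose_eq]
    push_cast
    rfl
  rw [Finset.sum_congr rfl (fun r _ => h3 r), Finset.sum_comm]
  apply Finset.sum_congr rfl
  intro pq _
  rw [Finset.sum_mul]
  apply Finset.sum_congr rfl
  intro r _
  ring

lemma alphaP (k : ℕ) : ∀ i : ℕ,
    ((fwdDiff (1:ℕ))^[i] (fun c => (((k*c).choose i : ℕ):ℤ)) = fun _ => (k:ℤ)^i)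
    ∧ (∀ a, i < a → (fwdDiff (1:ℕ))^[a] (fun c => (((k*c).choose i : ℕ):ℤ)) = 0) := by
  intro i
  induction i using Nat.strong_induction_on with
  | _ i ih =>
  rcases i with _ | i
  · constructor
    · funext c; simp
    · intro a ha
      obtain ⟨a', rfl⟩ : ∃ a', a = a' + 1 := ⟨a - 1, by omega⟩
      rw [Function.iterate_succ_apply]
      have : fwdDiff (1:ℕ) (fun c => (((k*c).choose 0 : ℕ):ℤ)) = 0 := by
        funext c; simp [fwdDiff]
      rw [this, fwdDiff_iter_zero_fun]
  · -- i+1 case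
    have hrec := gk_rec k i
    have hsum : ∀ b : ℕ, (fwdDiff (1:ℕ))^[b] (fwdDiff (1:ℕ) (fun c => (((k*c).choose (i+1) : ℕ):ℤ)))
        = ∑ pq ∈ Finset.HasAntidiagonal.antidiagonal i,
            (∑ r ∈ Finset.range k, ((r.choose pq.2 : ℕ):ℤ))
              • (fwdDiff (1:ℕ))^[b] (fun c => (((k*c).choose pq.1 : ℕ):ℤ)) := by
      intro b
      rw [hrec, fwdDiff_iter_finset_sum]
      exact Finset.sum_congr rfl (fun pq _ => fwdDiff_iter_const_smul _ _ _ _)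
    constructor
    · rw [Function.iterate_succ_apply, hsum i]
      rw [Finset.sum_eq_single (i, 0)]
      · have h1 := (ih i (by omega)).1
        rw [h1]
        funext c
        simp only [Pi.smul_apply, smul_eq_mul, Nat.choose_zero_right, Nat.cast_one,
          Finset.sum_const, Finset.card_range, nsmul_eq_mul, mul_one]
        rw [pow_succ]
        ring
      · intro pq hpq hne
        have hp : pq.1 + pq.2 = i := Finset.HasAntidiagonal.mem_antidiagonal.mp hpq
        have hplt : pq.1 < i := by
          rcases Nat.lt_or_ge pq.1 i with h | h
          · exact h
          · exfalso; apply hne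
            have : pq.1 = i := by omega
            have : pq.2 = 0 := by omega
            ext <;> simp_all
        rw [(ih pq.1 (by omega)).2 i hplt, smul_zero]
      · intro h
        exfalso; exact h (Finset.HasAntidiagonal.mem_antidiagonal.mpr (by simp))
    · intro a ha
      obtain ⟨a', rfl⟩ : ∃ a', a = a' + 1 := ⟨a - 1, by omega⟩
      rw [Function.iterate_succ_apply, hsum a']
      apply Finset.sum_eq_zero
      intro pq hpq
      have hp : pq.1 + pq.2 = i := Finset.HasAntidiagonal.mem_antidiagonal.mp hpq
      rw [(ih pq.1 (by omega)).2 a' (by omega), smul_zero]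

/-- `α k i a = Δ^[a] (c ↦ C(kc,i)) 0` in alternating-sum form -/
lemma alpha_eq (k i a : ℕ) :
    ∑ c ∈ Finset.range (a+1), ((-1:ℤ)^(a-c) * (a.choose c)) * ((k*c).choose i : ℤ)
      = (fwdDiff (1:ℕ))^[a] (fun c => (((k*c).choose i : ℕ):ℤ)) 0 :=
  sumform a _

lemma alpha_lt {k i a : ℕ} (h : i < a) :
    ∑ c ∈ Finset.range (a+1), ((-1:ℤ)^(a-c) * (a.choose c)) * ((k*c).choose i : ℤ) = 0 := by
  rw [alpha_eq, (alphaP k i).2 a h]; rfl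

lemma alpha_self (k a : ℕ) :
    ∑ c ∈ Finset.range (a+1), ((-1:ℤ)^(a-c) * (a.choose c)) * ((k*c).choose a : ℤ) = (k:ℤ)^a := by
  rw [alpha_eq, (alphaP k a).1]

end Alpha
section Taylor2

variable {X : Type*} [AddCommGroup X]

/-- first-variable Taylor coefficient functions -/
def coefA (H : ℕ → ℕ → X) (i : ℕ) : ℕ → X :=
  fun t => (fwdDiff (1:ℕ))^[i] (fun s => H s t) 0

/-- bivariate Taylor coefficients (difference in `s` first, then in `t`) -/
def coefB (H : ℕ → ℕ → X) (i j : ℕ) : X :=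
  (fwdDiff (1:ℕ))^[j] (coefA H i) 0

lemma coefA_eq_sum (H : ℕ → ℕ → X) (i t : ℕ) :
    coefA H i t = ∑ p ∈ Finset.range (i+1), ((-1:ℤ)^(i-p) * (i.choose p)) • H p t := by
  rw [coefA, fwdDiff_iter_eq_sum_shift]
  apply Finset.sum_congr rfl
  intro p _
  simp [smul_eq_mul]

lemma coefA_deg (m : ℕ) (H : ℕ → ℕ → X) (h2 : ∀ s, (fwdDiff (1:ℕ))^[m] (fun t => H s t) = 0)
    (i : ℕ) : (fwdDiff (1:ℕ))^[m] (coefA H i) = 0 := by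
  have hre : coefA H i = ∑ p ∈ Finset.range (i+1),
      ((-1:ℤ)^(i-p) * (i.choose p)) • (fun t => H p t) := by
    funext t
    rw [coefA_eq_sum]
    simp
  rw [hre, fwdDiff_iter_finset_sum]
  apply Finset.sum_eq_zero
  intro p _
  rw [fwdDiff_iter_const_smul, h2 p, smul_zero]

/-- bivariate truncated Newton formula -/
lemma taylor2 (m : ℕ) (H : ℕ → ℕ → X)
    (h1 : ∀ t, (fwdDiff (1:ℕ))^[m] (fun s => H s t) = 0)
    (h2 : ∀ s, (fwdDiff (1:ℕ))^[m] (fun t => H s t) = 0) (s t : ℕ) :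
    H s t = ∑ i ∈ Finset.range m, s.choose i •
              ∑ j ∈ Finset.range m, t.choose j • coefB H i j := by
  have hs : H s t = ∑ i ∈ Finset.range m, s.choose i • coefA H i t :=
    newton_trunc (h1 t) s
  rw [hs]
  apply Finset.sum_congr rfl
  intro i _
  congr 1
  exact newton_trunc (coefA_deg m H h2 i) t

/-- iterated difference of `s ↦ u s • x` -/
lemma smul_const_iter (x : X) : ∀ (i : ℕ) (u : ℕ → ℤ) (s0 : ℕ),
    (fwdDiff (1:ℕ))^[i] (fun s => u s • x) s0 = ((fwdDiff (1:ℕ))^[i] u s0) • x := by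
  intro i
  induction i with
  | zero => intro u s0; rfl
  | succ i ih =>
    intro u s0
    rw [Function.iterate_succ_apply, Function.iterate_succ_apply]
    have : fwdDiff (1:ℕ) (fun s => u s • x) = fun s => (fwdDiff (1:ℕ) u s) • x := by
      funext s
      simp only [fwdDiff, sub_smul]
    rw [this, ih]

lemma coefB_zero_fun (a b : ℕ) : coefB (fun _ _ => (0:X)) a b = 0 := by
  rw [coefB]
  have h1 : coefA (fun _ _ => (0:X)) a = 0 := by
    funext t
    rw [coefA, show (fun _ : ℕ => (0:X)) = (0 : ℕ → X) from rfl, fwdDiff_iter_zero_fun]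
    rfl
  rw [h1, fwdDiff_iter_zero_fun]
  rfl

lemma coefB_sum {α : Type*} (F : Finset α) (G : α → ℕ → ℕ → X) (a b : ℕ) :
    coefB (fun s t => ∑ z ∈ F, G z s t) a b = ∑ z ∈ F, coefB (G z) a b := by
  have hA : coefA (fun s t => ∑ z ∈ F, G z s t) a = fun t => ∑ z ∈ F, coefA (G z) a t := by
    funext t
    rw [coefA]
    have : (fun s => ∑ z ∈ F, G z s t) = ∑ z ∈ F, (fun s => G z s t) := by
      funext s; simp
    rw [this, fwdDiff_iter_finset_sum]
    simp [coefA]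
  rw [coefB, hA]
  have : (fun t => ∑ z ∈ F, coefA (G z) a t) = ∑ z ∈ F, coefA (G z) a := by
    funext t; simp
  rw [this, fwdDiff_iter_finset_sum]
  simp [coefB]

lemma coefB_smul_const (g : ℕ → ℕ → ℤ) (x : X) (a b : ℕ) :
    coefB (fun s t => g s t • x) a b = coefB g a b • x := by
  rw [coefB, coefB]
  have hA : coefA (fun s t => g s t • x) a = fun t => coefA g a t • x := by
    funext t
    rw [coefA, coefA, smul_const_iter]
  rw [hA, smul_const_iter]

lemma coefB_prod (z : ℤ) (u v : ℕ → ℤ) (a b : ℕ) :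
    coefB (fun c d => z * u c * v d) a b
      = z * ((fwdDiff (1:ℕ))^[a] u 0) * ((fwdDiff (1:ℕ))^[b] v 0) := by
  have hA : coefA (fun c d => z * u c * v d) a
      = fun d => (z * ((fwdDiff (1:ℕ))^[a] u 0)) * v d := by
    funext d
    rw [coefA]
    have h : (fun c => z * u c * v d) = (z * v d) • u := by
      funext c; simp [smul_eq_mul]; ring
    rw [h, fwdDiff_iter_const_smul]
    simp [smul_eq_mul]; ring
  rw [coefB, hA]
  have h2 : (fun d => (z * ((fwdDiff (1:ℕ))^[a] u 0)) * v d)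
      = (z * ((fwdDiff (1:ℕ))^[a] u 0)) • v := by
    funext d; simp [smul_eq_mul]
  rw [h2, fwdDiff_iter_const_smul]
  simp [smul_eq_mul, mul_assoc]

end Taylor2
section Biv

variable {X : Type*} [AddCommGroup X]

lemma biv (hz : ∀ (c : ℤ) (x : X), c • x = 0 → c = 0 ∨ x = 0)
    (m : ℕ) (hm : 0 < m) (H : ℕ → ℕ → X)
    (hyp : ∀ c d s t : ℕ, ∑ k ∈ Finset.range (m+1),
        (((-1:ℤ)^(m-k) * (m.choose k))) • H (s + k*c) (t + k*d) = 0) :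
    ∀ a b : ℕ, m ≤ a + b → coefB H a b = 0 := by
  have h1 : ∀ t, (fwdDiff (1:ℕ))^[m] (fun s => H s t) = 0 := by
    intro t; funext s
    rw [fwdDiff_iter_eq_sum_shift]
    have h := hyp 1 0 s t
    simp only [Nat.mul_one, Nat.mul_zero, Nat.add_zero] at h
    simpa [smul_eq_mul] using h
  have h2 : ∀ s, (fwdDiff (1:ℕ))^[m] (fun t => H s t) = 0 := by
    intro s; funext t
    rw [fwdDiff_iter_eq_sum_shift]
    have h := hyp 0 1 s t
    simp only [Nat.mul_one, Nat.mul_zero, Nat.add_zero] at h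
    simpa [smul_eq_mul] using h
  have htay := taylor2 m H h1 h2
  -- the master relation
  have hR : ∀ c d : ℕ, ∑ i ∈ Finset.range m, ∑ j ∈ Finset.range m,
      (∑ k ∈ Finset.range (m+1), ((-1:ℤ)^(m-k) * (m.choose k))
          * ((k*c).choose i : ℤ) * ((k*d).choose j : ℤ)) • coefB H i j = 0 := by
    intro c d
    have h0 := hyp c d 0 0
    simp only [Nat.zero_add] at h0
    rw [← h0]
    calc ∑ i ∈ Finset.range m, ∑ j ∈ Finset.range m,
        (∑ k ∈ Finset.range (m+1), ((-1:ℤ)^(m-k) * (m.choose k))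
            * ((k*c).choose i : ℤ) * ((k*d).choose j : ℤ)) • coefB H i j
        = ∑ i ∈ Finset.range m, ∑ j ∈ Finset.range m, ∑ k ∈ Finset.range (m+1),
            (((-1:ℤ)^(m-k) * (m.choose k))
              * ((k*c).choose i : ℤ) * ((k*d).choose j : ℤ)) • coefB H i j := by
          apply Finset.sum_congr rfl; intro i _
          apply Finset.sum_congr rfl; intro j _
          rw [Finset.sum_smul]
      _ = ∑ i ∈ Finset.range m, ∑ k ∈ Finset.range (m+1), ∑ j ∈ Finset.range m,
            (((-1:ℤ)^(m-k) * (m.choose k))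
              * ((k*c).choose i : ℤ) * ((k*d).choose j : ℤ)) • coefB H i j := by
          apply Finset.sum_congr rfl; intro i _
          exact Finset.sum_comm
      _ = ∑ k ∈ Finset.range (m+1), ∑ i ∈ Finset.range m, ∑ j ∈ Finset.range m,
            (((-1:ℤ)^(m-k) * (m.choose k))
              * ((k*c).choose i : ℤ) * ((k*d).choose j : ℤ)) • coefB H i j := by
          exact Finset.sum_comm
      _ = ∑ k ∈ Finset.range (m+1),
            ((-1:ℤ)^(m-k) * (m.choose k)) • H (k*c) (k*d) := by
          apply Finset.sum_congr rfl; intro k _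
          rw [htay (k*c) (k*d), Finset.smul_sum]
          apply Finset.sum_congr rfl; intro i _
          rw [← natCast_zsmul (∑ j ∈ Finset.range m, (k*d).choose j • coefB H i j)
              ((k*c).choose i), smul_smul, Finset.smul_sum]
          apply Finset.sum_congr rfl; intro j _
          rw [← natCast_zsmul (coefB H i j) ((k*d).choose j), smul_smul]
  -- evaluation of the (a,b) difference-combination of the master relation
  have hk : ∀ a b : ℕ,
      coefB (fun c d => ∑ i ∈ Finset.range m, ∑ j ∈ Finset.range m,
        (∑ k ∈ Finset.range (m+1), ((-1:ℤ)^(m-k) * (m.choose k))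
            * ((k*c).choose i : ℤ) * ((k*d).choose j : ℤ)) • coefB H i j) a b
      = ∑ i ∈ Finset.range m, ∑ j ∈ Finset.range m,
          (∑ k ∈ Finset.range (m+1), ((-1:ℤ)^(m-k) * (m.choose k))
            * ((fwdDiff (1:ℕ))^[a] (fun c => (((k*c).choose i : ℕ):ℤ)) 0)
            * ((fwdDiff (1:ℕ))^[b] (fun d => (((k*d).choose j : ℕ):ℤ)) 0)) • coefB H i j := by
    intro a b
    rw [coefB_sum]
    apply Finset.sum_congr rfl; intro i _
    rw [coefB_sum]
    apply Finset.sum_congr rfl; intro j _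
    rw [coefB_smul_const]
    congr 1
    rw [coefB_sum (Finset.range (m+1))
      (fun k => fun c d => ((-1:ℤ)^(m-k) * (m.choose k)) * ((k*c).choose i : ℤ) * ((k*d).choose j : ℤ))]
    apply Finset.sum_congr rfl; intro k _
    exact coefB_prod _ _ _ a b
  -- case analysis helpers
  have caseA : ∀ a b : ℕ, m ≤ a → coefB H a b = 0 := by
    intro a b ha
    have hzero : coefA H a = 0 := by
      funext t
      rw [coefA, fwdDiff_iter_eq_zero_of_le ha (h1 t)]; rfl
    rw [coefB, hzero, fwdDiff_iter_zero_fun]; rfl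
  have caseB : ∀ a b : ℕ, m ≤ b → coefB H a b = 0 := by
    intro a b hb
    rw [coefB, fwdDiff_iter_eq_zero_of_le hb (coefA_deg m H h2 a)]; rfl
  -- the downward induction
  have main : ∀ r a b : ℕ, m ≤ a + b → 2*m ≤ a + b + r → coefB H a b = 0 := by
    intro r
    induction r with
    | zero =>
      intro a b hab h2m
      rcases le_or_gt m a with ha | ha
      · exact caseA a b ha
      · exact caseB a b (by omega)
    | succ r ih =>
      intro a b hab h2m
      rcases le_or_gt m a with ha | ha
      · exact caseA a b ha
      rcases le_or_gt m b with hb | hb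
      · exact caseB a b hb
      -- a, b < m
      have hRfun : (fun c d => ∑ i ∈ Finset.range m, ∑ j ∈ Finset.range m,
          (∑ k ∈ Finset.range (m+1), ((-1:ℤ)^(m-k) * (m.choose k))
              * ((k*c).choose i : ℤ) * ((k*d).choose j : ℤ)) • coefB H i j)
          = fun _ _ => (0:X) := by
        funext c d; exact hR c d
      have rel : ∑ i ∈ Finset.range m, ∑ j ∈ Finset.range m,
          (∑ k ∈ Finset.range (m+1), ((-1:ℤ)^(m-k) * (m.choose k))
            * ((fwdDiff (1:ℕ))^[a] (fun c => (((k*c).choose i : ℕ):ℤ)) 0)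
            * ((fwdDiff (1:ℕ))^[b] (fun d => (((k*d).choose j : ℕ):ℤ)) 0)) • coefB H i j = 0 := by
        rw [← hk a b, hRfun, coefB_zero_fun]
      -- all terms except (a,b) vanish
      have houter : ∀ i ∈ Finset.range m, i ≠ a →
          (∑ j ∈ Finset.range m,
            (∑ k ∈ Finset.range (m+1), ((-1:ℤ)^(m-k) * (m.choose k))
              * ((fwdDiff (1:ℕ))^[a] (fun c => (((k*c).choose i : ℕ):ℤ)) 0)
              * ((fwdDiff (1:ℕ))^[b] (fun d => (((k*d).choose j : ℕ):ℤ)) 0)) • coefB H i j) = 0 := by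
        intro i hi hne
        apply Finset.sum_eq_zero
        intro j hj
        rcases lt_or_gt_of_ne hne with hlt | hgt
        · have hzeroi : ∀ k : ℕ, (fwdDiff (1:ℕ))^[a] (fun c => (((k*c).choose i : ℕ):ℤ)) 0 = 0 := by
            intro k
            rw [(alphaP k i).2 a hlt]; rfl
          have : (∑ k ∈ Finset.range (m+1), ((-1:ℤ)^(m-k) * (m.choose k))
              * ((fwdDiff (1:ℕ))^[a] (fun c => (((k*c).choose i : ℕ):ℤ)) 0)
              * ((fwdDiff (1:ℕ))^[b] (fun d => (((k*d).choose j : ℕ):ℤ)) 0)) = 0 := by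
            apply Finset.sum_eq_zero
            intro k _
            rw [hzeroi k]; ring
          rw [this, zero_smul]
        · rcases le_or_gt b j with hbj | hbj
          · have : coefB H i j = 0 := by
              apply ih i j (by omega) (by omega)
            rw [this, smul_zero]
          · have hzeroj : ∀ k : ℕ, (fwdDiff (1:ℕ))^[b] (fun d => (((k*d).choose j : ℕ):ℤ)) 0 = 0 := by
              intro k
              rw [(alphaP k j).2 b hbj]; rfl
            have : (∑ k ∈ Finset.range (m+1), ((-1:ℤ)^(m-k) * (m.choose k))
                * ((fwdDiff (1:ℕ))^[a] (fun c => (((k*c).choose i : ℕ):ℤ)) 0)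
                * ((fwdDiff (1:ℕ))^[b] (fun d => (((k*d).choose j : ℕ):ℤ)) 0)) = 0 := by
              apply Finset.sum_eq_zero
              intro k _
              rw [hzeroj k]; ring
            rw [this, zero_smul]
      have hinner : ∀ j ∈ Finset.range m, j ≠ b →
          (∑ k ∈ Finset.range (m+1), ((-1:ℤ)^(m-k) * (m.choose k))
            * ((fwdDiff (1:ℕ))^[a] (fun c => (((k*c).choose a : ℕ):ℤ)) 0)
            * ((fwdDiff (1:ℕ))^[b] (fun d => (((k*d).choose j : ℕ):ℤ)) 0)) • coefB H a j = 0 := by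
        intro j hj hne
        rcases lt_or_gt_of_ne hne with hlt | hgt
        · have hzeroj : ∀ k : ℕ, (fwdDiff (1:ℕ))^[b] (fun d => (((k*d).choose j : ℕ):ℤ)) 0 = 0 := by
            intro k
            rw [(alphaP k j).2 b hlt]; rfl
          have : (∑ k ∈ Finset.range (m+1), ((-1:ℤ)^(m-k) * (m.choose k))
              * ((fwdDiff (1:ℕ))^[a] (fun c => (((k*c).choose a : ℕ):ℤ)) 0)
              * ((fwdDiff (1:ℕ))^[b] (fun d => (((k*d).choose j : ℕ):ℤ)) 0)) = 0 := by
            apply Finset.sum_eq_zero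
            intro k _
            rw [hzeroj k]; ring
          rw [this, zero_smul]
        · have : coefB H a j = 0 := ih a j (by omega) (by omega)
          rw [this, smul_zero]
      have hsingle : (∑ k ∈ Finset.range (m+1), ((-1:ℤ)^(m-k) * (m.choose k))
            * ((fwdDiff (1:ℕ))^[a] (fun c => (((k*c).choose a : ℕ):ℤ)) 0)
            * ((fwdDiff (1:ℕ))^[b] (fun d => (((k*d).choose b : ℕ):ℤ)) 0)) • coefB H a b = 0 := by
        rw [← rel]
        rw [Finset.sum_eq_single_of_mem a (Finset.mem_range.mpr ha) houter]
        rw [Finset.sum_eq_single_of_mem b (Finset.mem_range.mpr hb) hinner]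
      -- compute the scalar
      have hscal : (∑ k ∈ Finset.range (m+1), ((-1:ℤ)^(m-k) * (m.choose k))
            * ((fwdDiff (1:ℕ))^[a] (fun c => (((k*c).choose a : ℕ):ℤ)) 0)
            * ((fwdDiff (1:ℕ))^[b] (fun d => (((k*d).choose b : ℕ):ℤ)) 0))
          = (fwdDiff (1:ℕ))^[m] (fun k : ℕ => (k:ℤ)^(a+b)) 0 := by
        rw [← sumform]
        apply Finset.sum_congr rfl
        intro k _
        rw [(alphaP k a).1, (alphaP k b).1]
        rw [pow_add]
        ring
      have hpos : 0 < (fwdDiff (1:ℕ))^[m] (fun k : ℕ => (k:ℤ)^(a+b)) 0 :=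
        (nu_pos m).2 (a+b) hab (Or.inl hm)
      rw [hscal] at hsingle
      rcases hz _ _ hsingle with h | h
      · exfalso; rw [h] at hpos; exact lt_irrefl 0 hpos
      · exact h
  intro a b hab
  exact main (2*m) a b hab (by omega)

end Biv
section Mixed

variable {G : Type*} [AddCommMonoid G] {X : Type*} [AddCommGroup X]

lemma nsmulMemS {S : Set G} (hadd : ∀ a ∈ S, ∀ b ∈ S, a + b ∈ S) {v : G} (hv : v ∈ S) :
    ∀ k : ℕ, 0 < k → k • v ∈ S := by
  intro k
  induction k with
  | zero => intro h; omega
  | succ k ih =>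
    intro _
    rcases Nat.eq_zero_or_pos k with hk | hk
    · subst hk; simpa using hv
    · rw [succ_nsmul]
      exact hadd _ (ih hk) _ hv

lemma add_nsmul_memD {S D : Set G} (hD : ∀ x ∈ D, ∀ s ∈ S, x + s ∈ D)
    {x v : G} (hx : x ∈ D) (hv : v ∈ S) : ∀ k : ℕ, x + k • v ∈ D := by
  intro k
  induction k with
  | zero => simpa using hx
  | succ k ih =>
    rw [succ_nsmul, ← add_assoc]
    exact hD _ ih _ hv

lemma fwdDiff_zero_dir (f : G → X) : fwdDiff (0:G) f = 0 := by
  funext t; simp [fwdDiff]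

lemma mixed (S : Set G) (hSadd : ∀ a ∈ S, ∀ b ∈ S, a + b ∈ S)
    (D : Set G) (hD : ∀ x ∈ D, ∀ s ∈ S, x + s ∈ D)
    (hz : ∀ (c : ℤ) (x : X), c • x = 0 → c = 0 ∨ x = 0)
    (m : ℕ) (hm : 0 < m) (f : G → X) (hf : ∀ v ∈ S, ∀ x ∈ D, (fwdDiff v)^[m] f x = 0) :
    ∀ v ∈ S, ∀ w ∈ S, ∀ a b : ℕ, m ≤ a + b → ∀ x ∈ D,
      (fwdDiff w)^[b] ((fwdDiff v)^[a] f) x = 0 := by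
  intro v hv w hw a b hab x hx
  have key : coefB (fun s t => f (x + s • v + t • w)) a b = 0 := by
    apply biv hz m hm _ ?_ a b hab
    intro c d s t
    have harith : ∀ k : ℕ, x + (s + k*c) • v + (t + k*d) • w
        = (x + s • v + t • w) + k • (c • v + d • w) := by
      intro k
      simp only [add_smul, smul_add, smul_smul]
      abel
    calc ∑ k ∈ Finset.range (m+1), ((-1:ℤ)^(m-k) * (m.choose k))
          • (fun s t => f (x + s • v + t • w)) (s + k*c) (t + k*d)
        = ∑ k ∈ Finset.range (m+1), ((-1:ℤ)^(m-k) * (m.choose k))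
          • f ((x + s • v + t • w) + k • (c • v + d • w)) := by
          apply Finset.sum_congr rfl
          intro k _
          simp only []
          rw [harith k]
      _ = (fwdDiff (c • v + d • w))^[m] f (x + s • v + t • w) :=
          (fwdDiff_iter_eq_sum_shift _ f m _).symm
      _ = 0 := by
          have hyD : (x + s • v + t • w) ∈ D :=
            add_nsmul_memD hD (add_nsmul_memD hD hx hv s) hw t
          rcases Nat.eq_zero_or_pos c with hc | hc
          · rcases Nat.eq_zero_or_pos d with hd | hd
            · subst hc; subst hd
              obtain ⟨m', rfl⟩ : ∃ m', m = m'+1 := ⟨m-1, by omega⟩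
              rw [show (0:ℕ)•v + (0:ℕ)•w = (0:G) by simp,
                Function.iterate_succ_apply, fwdDiff_zero_dir, fwdDiff_iter_zero_fun]
              rfl
            · subst hc
              have hmem : (0:ℕ)•v + d•w ∈ S := by simpa using nsmulMemS hSadd hw d hd
              exact hf _ hmem _ hyD
          · rcases Nat.eq_zero_or_pos d with hd | hd
            · subst hd
              have hmem : c•v + (0:ℕ)•w ∈ S := by simpa using nsmulMemS hSadd hv c hc
              exact hf _ hmem _ hyD
            · exact hf _ (hSadd _ (nsmulMemS hSadd hv c hc) _ (nsmulMemS hSadd hw d hd)) _ hyD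
  have hA : coefA (fun s t => f (x + s • v + t • w)) a
      = fun t => (fwdDiff v)^[a] f (x + t • w) := by
    funext t
    rw [coefA]
    have hfe : (fun s : ℕ => f (x + s • v + t • w)) = fun s : ℕ => f ((x + t • w) + s • v) := by
      funext s; rw [add_right_comm]
    rw [hfe]
    have hp := pullback v a f (x + t • w) 0
    simpa using hp
  rw [coefB, hA] at key
  have h2 := pullback w b ((fwdDiff v)^[a] f) x 0
  simp only [zero_smul, add_zero] at h2
  rw [← h2]
  exact key

end Mixed
section Scalars

lemma neg_one_pow_sub {p q : ℕ} (h : q ≤ p) : (-1:ℤ)^(p-q) = (-1)^p * (-1)^q := by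
  have hpq : p + q = (p - q) + 2*q := by omega
  rw [← pow_add, hpq, pow_add, pow_mul]
  simp

lemma identity1 {m i : ℕ} (hi : i < m) :
    ∑ k ∈ Finset.range (m+1), ((-1:ℤ)^(m-k) * (m.choose k)) * (k.choose i : ℤ) = 0 :=
  sum_vanish hi (choose_deg i)

lemma identity3 {m i j : ℕ} (hij : i + j < m) :
    ∑ k ∈ Finset.range (m+1), ((-1:ℤ)^(m-k) * (m.choose k))
      * ((k.choose i : ℤ) * (k.choose j : ℤ)) = 0 := by
  have hp := prod_deg (i+j) i j (fun k => (k.choose i : ℤ)) (fun k => (k.choose j : ℤ)) rfl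
    (choose_deg i) (choose_deg j)
  exact sum_vanish (by omega) hp

lemma const_deg (c : ℤ) (d : ℕ) : (fwdDiff (1:ℕ))^[d+1] (fun _ : ℕ => c) = 0 := by
  rw [Function.iterate_succ_apply, fwdDiff_const,
    show (fun _ : ℕ => (0:ℤ)) = (0 : ℕ → ℤ) from rfl, fwdDiff_iter_zero_fun]

lemma identity2 {m i j : ℕ} (hij : i + j < m) :
    ∑ r ∈ Finset.range m, ((-1:ℤ)^r * (m.choose (r+1)))
      * ((r.choose i : ℤ) * (((r+1).choose j : ℤ) - ((0:ℕ).choose j : ℤ))) = 0 := by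
  set u : ℕ → ℤ := fun k => ∑ l ∈ Finset.range (i+1), (-1:ℤ)^(i-l) * (k.choose l) with hu
  set v : ℕ → ℤ := fun k => (k.choose j : ℤ) - ((0:ℕ).choose j : ℤ) with hv
  have hudeg : (fwdDiff (1:ℕ))^[i+1] u = 0 := by
    have : u = ∑ l ∈ Finset.range (i+1), ((-1:ℤ)^(i-l)) • (fun k => (k.choose l : ℤ)) := by
      funext k; simp [hu, smul_eq_mul]
    rw [this, fwdDiff_iter_finset_sum]
    apply Finset.sum_eq_zero
    intro l hl
    rw [fwdDiff_iter_const_smul,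
      fwdDiff_iter_eq_zero_of_le (by simp at hl; omega) (choose_deg l), smul_zero]
  have hvdeg : (fwdDiff (1:ℕ))^[j+1] v = 0 := by
    have : v = (fun k => (k.choose j : ℤ)) + (fun _ => -((0:ℕ).choose j : ℤ)) := by
      funext k; simp [hv]; ring
    rw [this, fwdDiff_iter_add, choose_deg j, const_deg]
    simp
  have hprod := prod_deg (i+j) i j u v rfl hudeg hvdeg
  have hzero := sum_vanish (show i+j+1 ≤ m by omega) hprod
  rw [Finset.sum_range_succ'] at hzero
  have hg0 : ((-1:ℤ)^(m-0) * (m.choose 0)) * (u * v) 0 = 0 := by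
    simp [hu, hv]
  rw [hg0, add_zero] at hzero
  have hterm : ∀ r ∈ Finset.range m,
      ((-1:ℤ)^(m-(r+1)) * (m.choose (r+1))) * (u * v) (r+1)
        = (-(-1:ℤ)^m) * (((-1:ℤ)^r * (m.choose (r+1)))
            * ((r.choose i : ℤ) * (((r+1).choose j : ℤ) - ((0:ℕ).choose j : ℤ)))) := by
    intro r hr
    simp only [Finset.mem_range] at hr
    have h1 : (-1:ℤ)^(m-(r+1)) = (-1)^m * (-1)^(r+1) := neg_one_pow_sub (by omega)
    have h2 : (u * v) (r+1) = (r.choose i : ℤ) * (((r+1).choose j : ℤ) - ((0:ℕ).choose j : ℤ)) := by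
      simp only [Pi.mul_apply, hu, hv]
      rw [altsum_choose i r]
    rw [h1, h2, pow_succ]
    ring
  rw [Finset.sum_congr rfl hterm, ← Finset.mul_sum] at hzero
  rcases mul_eq_zero.mp hzero with h | h
  · simp at h
  · exact h

lemma identity0 {m : ℕ} (hm : 0 < m) :
    ∑ r ∈ Finset.range m, ((-1:ℤ)^r * (m.choose (r+1))) = 1 := by
  have h := Int.alternating_sum_range_choose_of_ne (show m ≠ 0 by omega)
  rw [Finset.sum_range_succ'] at h
  simp only [Nat.choose_zero_right, Nat.cast_one, pow_zero, mul_one] at h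
  have h2 : ∀ r ∈ Finset.range m, (-1:ℤ)^(r+1) * ((m.choose (r+1) : ℕ) : ℤ)
      = -((-1:ℤ)^r * (m.choose (r+1))) := by
    intro r _
    rw [pow_succ]; ring
  rw [Finset.sum_congr rfl h2, Finset.sum_neg_distrib] at h
  linarith

end Scalars
section Helpers

variable {X : Type*} [AddCommGroup X]

lemma nested_to_z (m a b : ℕ) (B : ℕ → ℕ → X) :
    ∑ i ∈ Finset.range m, a.choose i • ∑ j ∈ Finset.range m, b.choose j • B i j
      = ∑ i ∈ Finset.range m, ∑ j ∈ Finset.range m,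
          ((a.choose i : ℤ) * (b.choose j : ℤ)) • B i j := by
  apply Finset.sum_congr rfl; intro i _
  rw [← natCast_zsmul (∑ j ∈ Finset.range m, b.choose j • B i j) (a.choose i), Finset.smul_sum]
  apply Finset.sum_congr rfl; intro j _
  rw [← natCast_zsmul (B i j) (b.choose j), smul_smul]

lemma push2 (K : Finset ℕ) (c : ℕ → ℤ) (m : ℕ) (w : ℕ → ℕ → ℕ → ℤ) (B : ℕ → ℕ → X) :
    ∑ k ∈ K, c k • (∑ i ∈ Finset.range m, ∑ j ∈ Finset.range m, (w k i j) • B i j)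
      = ∑ i ∈ Finset.range m, ∑ j ∈ Finset.range m, (∑ k ∈ K, c k * w k i j) • B i j := by
  calc ∑ k ∈ K, c k • (∑ i ∈ Finset.range m, ∑ j ∈ Finset.range m, (w k i j) • B i j)
      = ∑ k ∈ K, ∑ i ∈ Finset.range m, ∑ j ∈ Finset.range m, (c k * w k i j) • B i j := by
        apply Finset.sum_congr rfl; intro k _
        rw [Finset.smul_sum]
        apply Finset.sum_congr rfl; intro i _
        rw [Finset.smul_sum]
        apply Finset.sum_congr rfl; intro j _
        rw [smul_smul]
    _ = ∑ i ∈ Finset.range m, ∑ k ∈ K, ∑ j ∈ Finset.range m, (c k * w k i j) • B i j :=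
        Finset.sum_comm
    _ = ∑ i ∈ Finset.range m, ∑ j ∈ Finset.range m, ∑ k ∈ K, (c k * w k i j) • B i j := by
        apply Finset.sum_congr rfl; intro i _
        exact Finset.sum_comm
    _ = ∑ i ∈ Finset.range m, ∑ j ∈ Finset.range m, (∑ k ∈ K, c k * w k i j) • B i j := by
        apply Finset.sum_congr rfl; intro i _
        apply Finset.sum_congr rfl; intro j _
        rw [Finset.sum_smul]

lemma coefB_eq_mixed {G : Type*} [AddCommMonoid G] (f : G → X) (v w x : G) (a b : ℕ) :
    coefB (fun s t => f (x + s • v + t • w)) a b = (fwdDiff w)^[b] ((fwdDiff v)^[a] f) x := by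
  have hA : coefA (fun s t => f (x + s • v + t • w)) a
      = fun t => (fwdDiff v)^[a] f (x + t • w) := by
    funext t
    rw [coefA]
    have hfe : (fun s : ℕ => f (x + s • v + t • w)) = fun s : ℕ => f ((x + t • w) + s • v) := by
      funext s; rw [add_right_comm]
    rw [hfe]
    have hp := pullback v a f (x + t • w) 0
    simpa using hp
  rw [coefB, hA]
  have h2 := pullback w b ((fwdDiff v)^[a] f) x 0
  simpa using h2

lemma coefB_eq_mixed_neg {G : Type*} [AddCommGroup G] (f : G → X) (v w x : G) (a b : ℕ) :
    coefB (fun s t => f (x + s • v - t • w)) a b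
      = ((-1:ℤ)^b) • (fwdDiff w)^[b] ((fwdDiff v)^[a] f) (x - b • w) := by
  have hA : coefA (fun s t => f (x + s • v - t • w)) a
      = fun t => (fwdDiff v)^[a] f (x - t • w) := by
    funext t
    rw [coefA]
    have hfe : (fun s : ℕ => f (x + s • v - t • w)) = fun s : ℕ => f ((x - t • w) + s • v) := by
      funext s
      congr 1
      abel
    rw [hfe]
    have hp := pullback v a f (x - t • w) 0
    simpa using hp
  rw [coefB, hA]
  have h2 := pullback_neg w b ((fwdDiff v)^[a] f) x 0
  simpa using h2

end Helpers
/-- polynomials of degree at most `n` on a generating subsemigroup `J`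
(`0 ∈ J`, nonempty interior, `G = J - J`) extend uniquely to polynomials on `G`;
i.e. the restriction map `P^n(G,X) → P^n(J,X)` is a bijection. -/
theorem poly_extension_unique
    {G : Type*} [AddCommGroup G] [TopologicalSpace G] [IsTopologicalAddGroup G] [T2Space G]
    {X : Type*} [NormedAddCommGroup X] [NormedSpace ℂ X] [CompleteSpace X]
    (J : Set G) (hJ0 : (0 : G) ∈ J)
    (hJadd : ∀ a ∈ J, ∀ b ∈ J, a + b ∈ J)
    (hJint : (interior J).Nonempty)
    (hJgen : ∀ g : G, ∃ u ∈ J, ∃ v ∈ J, g = u - v)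
    (n : ℕ) (q : G → X) (hq_cont : ContinuousOn q J)
    (hq_poly : ∀ v ∈ J, ∀ t ∈ J, (fdiff v)^[n + 1] q t = 0) :
    ∃! p : G → X, Continuous p ∧ (∀ t : G, (fdiff t)^[n + 1] p = 0) ∧ ∀ t ∈ J, p t = q t := by
  classical
  have hm0 : 0 < n + 1 := Nat.succ_pos n
  -- X is ℤ-torsion-free
  have hz : ∀ (c : ℤ) (x : X), c • x = 0 → c = 0 ∨ x = 0 := by
    intro c x hcx
    rcases eq_or_ne c 0 with h | h
    · exact Or.inl h
    · right
      have h1 : ((c : ℂ)) • x = 0 := by rwa [Int.cast_smul_eq_zsmul]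
      have hc : (c : ℂ) ≠ 0 := Int.cast_ne_zero.mpr h
      rcases smul_eq_zero.mp h1 with h2 | h2
      · exact absurd h2 hc
      · exact h2
  have hq_poly' : ∀ v ∈ J, ∀ x ∈ J, (fwdDiff v)^[n+1] q x = 0 := by
    intro v hv x hx
    have := hq_poly v hv x hx
    exact this
  have hDJ : ∀ x ∈ J, ∀ s ∈ J, x + s ∈ J := hJadd
  have mixedq := mixed J hJadd J hDJ hz (n+1) hm0 q hq_poly'
  choose U hU W hW hUW using hJgen
  have hUWadd : ∀ g : G, g + W g = U g := fun g => eq_sub_iff_add_eq.mp (hUW g)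
  -- Taylor package for q on J
  have hq_h1 : ∀ u ∈ J, ∀ v ∈ J, ∀ w ∈ J, ∀ t : ℕ,
      (fwdDiff (1:ℕ))^[n+1] (fun s : ℕ => q (u + s • v + t • w)) = 0 := by
    intro u hu v hv w hw t
    funext s
    have hfe : (fun s : ℕ => q (u + s • v + t • w)) = fun s : ℕ => q ((u + t • w) + s • v) := by
      funext s'; rw [add_right_comm]
    rw [hfe, pullback]
    exact hq_poly' v hv _ (add_nsmul_memD hDJ (add_nsmul_memD hDJ hu hw t) hv s)
  have hq_h2 : ∀ u ∈ J, ∀ v ∈ J, ∀ w ∈ J, ∀ s : ℕ,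
      (fwdDiff (1:ℕ))^[n+1] (fun t : ℕ => q (u + s • v + t • w)) = 0 := by
    intro u hu v hv w hw s
    funext t
    rw [pullback]
    exact hq_poly' w hw _ (add_nsmul_memD hDJ (add_nsmul_memD hDJ hu hv s) hw t)
  have hqtay : ∀ u ∈ J, ∀ v ∈ J, ∀ w ∈ J, ∀ s t : ℕ,
      q (u + s • v + t • w) = ∑ i ∈ Finset.range (n+1), ∑ j ∈ Finset.range (n+1),
        ((s.choose i : ℤ) * (t.choose j : ℤ))
          • coefB (fun s' t' => q (u + s' • v + t' • w)) i j := by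
    intro u hu v hv w hw s t
    rw [taylor2 (n+1) _ (fun t' => hq_h1 u hu v hv w hw t') (fun s' => hq_h2 u hu v hv w hw s') s t,
      nested_to_z]
  have hqvan : ∀ u ∈ J, ∀ v ∈ J, ∀ w ∈ J, ∀ i j : ℕ, n+1 ≤ i + j →
      coefB (fun s' t' => q (u + s' • v + t' • w)) i j = 0 := by
    intro u hu v hv w hw i j hij
    rw [coefB_eq_mixed]
    exact mixedq v hv w hw i j hij u hu
  -- the extension formula
  set F : G → G → X := fun u w => ∑ r ∈ Finset.range (n+1),
    ((-1:ℤ)^r * ((n+1).choose (r+1))) • q (u + r • w) with hF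
  -- translation invariance
  have Finv : ∀ u ∈ J, ∀ w ∈ J, ∀ z ∈ J, F (u+z) (w+z) = F u w := by
    intro u hu w hw z hz'
    have htay := hqtay u hu w hw z hz'
    have hvan := hqvan u hu w hw z hz'
    set B := coefB (fun s' t' => q (u + s' • w + t' • z)) with hB
    have e1 : ∀ r : ℕ, (u+z) + r • (w+z) = u + r • w + (r+1) • z := by
      intro r; rw [smul_add, succ_nsmul]; abel
    have step1 : F (u+z) (w+z) = ∑ i ∈ Finset.range (n+1), ∑ j ∈ Finset.range (n+1),
        (∑ r ∈ Finset.range (n+1), ((-1:ℤ)^r * ((n+1).choose (r+1)))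
          * ((r.choose i : ℤ) * (((r+1).choose j : ℤ)))) • B i j := by
      calc F (u+z) (w+z)
          = ∑ r ∈ Finset.range (n+1), ((-1:ℤ)^r * ((n+1).choose (r+1)))
              • q (u + r • w + (r+1) • z) := by
            apply Finset.sum_congr rfl; intro r _; rw [e1 r]
        _ = ∑ r ∈ Finset.range (n+1), ((-1:ℤ)^r * ((n+1).choose (r+1)))
              • (∑ i ∈ Finset.range (n+1), ∑ j ∈ Finset.range (n+1),
                  ((r.choose i : ℤ) * (((r+1).choose j : ℤ))) • B i j) := by
            apply Finset.sum_congr rfl; intro r _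
            rw [htay r (r+1)]
        _ = _ := push2 _ _ _ _ _
    have step2 : F u w = ∑ i ∈ Finset.range (n+1), ∑ j ∈ Finset.range (n+1),
        (∑ r ∈ Finset.range (n+1), ((-1:ℤ)^r * ((n+1).choose (r+1)))
          * ((r.choose i : ℤ) * (((0:ℕ).choose j : ℤ)))) • B i j := by
      calc F u w
          = ∑ r ∈ Finset.range (n+1), ((-1:ℤ)^r * ((n+1).choose (r+1)))
              • q (u + r • w + 0 • z) := by
            apply Finset.sum_congr rfl; intro r _
            rw [show u + r • w + (0:ℕ) • z = u + r • w by simp]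
        _ = ∑ r ∈ Finset.range (n+1), ((-1:ℤ)^r * ((n+1).choose (r+1)))
              • (∑ i ∈ Finset.range (n+1), ∑ j ∈ Finset.range (n+1),
                  ((r.choose i : ℤ) * (((0:ℕ).choose j : ℤ))) • B i j) := by
            apply Finset.sum_congr rfl; intro r _
            rw [htay r 0]
        _ = _ := push2 _ _ _ _ _
    rw [step1, step2]
    apply Finset.sum_congr rfl; intro i hi
    apply Finset.sum_congr rfl; intro j hj
    rcases le_or_gt (n+1) (i+j) with hij | hij
    · rw [hvan i j hij, smul_zero, smul_zero]
    · congr 1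
      have hid := identity2 (m := n+1) (i := i) (j := j) hij
      have hsplit : ∑ r ∈ Finset.range (n+1), ((-1:ℤ)^r * ((n+1).choose (r+1)))
            * ((r.choose i : ℤ) * (((r+1).choose j : ℤ)))
          - ∑ r ∈ Finset.range (n+1), ((-1:ℤ)^r * ((n+1).choose (r+1)))
            * ((r.choose i : ℤ) * (((0:ℕ).choose j : ℤ)))
          = ∑ r ∈ Finset.range (n+1), ((-1:ℤ)^r * ((n+1).choose (r+1)))
            * ((r.choose i : ℤ) * (((r+1).choose j : ℤ) - ((0:ℕ).choose j : ℤ))) := by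
        rw [← Finset.sum_sub_distrib]
        apply Finset.sum_congr rfl; intro r _; ring
      have h2 := hsplit.trans hid
      linarith
  -- well-definedness
  have WD2 : ∀ u ∈ J, ∀ w ∈ J, ∀ g : G, g = u - w → F (U g) (W g) = F u w := by
    intro u hu w hw g hg
    have h1 : U g - W g = u - w := by rw [← hUW g, hg]
    have h2 : U g + w = u + W g := by
      rw [← sub_eq_sub_iff_add_eq_add]; exact h1
    calc F (U g) (W g) = F (U g + w) (W g + w) := (Finv _ (hU g) _ (hW g) w hw).symm
      _ = F (u + W g) (w + W g) := by rw [h2, add_comm (W g) w]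
      _ = F u w := Finv u hu w hw _ (hW g)
  set p : G → X := fun g => F (U g) (W g) with hp
  have p_eq' : ∀ u ∈ J, ∀ w ∈ J, ∀ g : G, g = u - w → p g = F u w := by
    intro u hu w hw g hg
    exact WD2 u hu w hw g hg
  -- restriction to J
  have p_res : ∀ t ∈ J, p t = q t := by
    intro t ht
    rw [p_eq' t ht 0 hJ0 t (by rw [sub_zero])]
    have he : ∀ r ∈ Finset.range (n+1), ((-1:ℤ)^r * ((n+1).choose (r+1))) • q (t + r • (0:G))
        = ((-1:ℤ)^r * ((n+1).choose (r+1))) • q t := by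
      intro r _
      rw [smul_zero, add_zero]
    rw [hF]
    simp only []
    rw [Finset.sum_congr rfl he, ← Finset.sum_smul, identity0 hm0, one_smul]
  -- first polynomial property: increments in J, arbitrary base point
  have hyp1 : ∀ y ∈ J, ∀ x : G, (fwdDiff y)^[n+1] p x = 0 := by
    intro y hy x
    have htay := hqtay (U x) (hU x) y hy (W x) (hW x)
    set B := coefB (fun s' t' => q (U x + s' • y + t' • W x)) with hB
    have hpk : ∀ k : ℕ, p (x + k • y) = ∑ r ∈ Finset.range (n+1),
        ((-1:ℤ)^r * ((n+1).choose (r+1))) • q (U x + k • y + r • W x) := by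
      intro k
      have hmem : U x + k • y ∈ J := add_nsmul_memD hDJ (hU x) hy k
      have hdec : x + k • y = (U x + k • y) - W x := by
        have hh : (U x + k • y) - W x = (U x - W x) + k • y := by abel
        rw [hh, ← hUW x]
      rw [p_eq' _ hmem _ (hW x) _ hdec]
    rw [fwdDiff_iter_eq_sum_shift]
    calc ∑ k ∈ Finset.range (n+1+1), ((-1:ℤ)^(n+1-k) * ((n+1).choose k)) • p (x + k • y)
        = ∑ k ∈ Finset.range (n+1+1), ((-1:ℤ)^(n+1-k) * ((n+1).choose k))
            • (∑ i ∈ Finset.range (n+1), ∑ j ∈ Finset.range (n+1),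
                (∑ r ∈ Finset.range (n+1), ((-1:ℤ)^r * ((n+1).choose (r+1)))
                  * ((k.choose i : ℤ) * (r.choose j : ℤ))) • B i j) := by
          apply Finset.sum_congr rfl; intro k _
          rw [hpk k]
          congr 1
          calc ∑ r ∈ Finset.range (n+1), ((-1:ℤ)^r * ((n+1).choose (r+1)))
                • q (U x + k • y + r • W x)
              = ∑ r ∈ Finset.range (n+1), ((-1:ℤ)^r * ((n+1).choose (r+1)))
                • (∑ i ∈ Finset.range (n+1), ∑ j ∈ Finset.range (n+1),
                    ((k.choose i : ℤ) * (r.choose j : ℤ)) • B i j) := by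
                apply Finset.sum_congr rfl; intro r _
                rw [htay k r]
            _ = _ := push2 _ _ _ _ _
      _ = ∑ i ∈ Finset.range (n+1), ∑ j ∈ Finset.range (n+1),
            (∑ k ∈ Finset.range (n+1+1), ((-1:ℤ)^(n+1-k) * ((n+1).choose k))
              * (∑ r ∈ Finset.range (n+1), ((-1:ℤ)^r * ((n+1).choose (r+1)))
                  * ((k.choose i : ℤ) * (r.choose j : ℤ)))) • B i j := push2 _ _ _ _ _
      _ = 0 := by
          apply Finset.sum_eq_zero; intro i hi
          apply Finset.sum_eq_zero; intro j hj
          have hfac : ∀ k ∈ Finset.range (n+1+1),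
              ((-1:ℤ)^(n+1-k) * ((n+1).choose k))
                * (∑ r ∈ Finset.range (n+1), ((-1:ℤ)^r * ((n+1).choose (r+1)))
                    * ((k.choose i : ℤ) * (r.choose j : ℤ)))
              = (((-1:ℤ)^(n+1-k) * ((n+1).choose k)) * (k.choose i : ℤ))
                  * (∑ r ∈ Finset.range (n+1), ((-1:ℤ)^r * ((n+1).choose (r+1)))
                      * (r.choose j : ℤ)) := by
            intro k _
            rw [Finset.mul_sum, Finset.mul_sum]
            apply Finset.sum_congr rfl; intro r _
            ring
          rw [Finset.sum_congr rfl hfac, ← Finset.sum_mul]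
          have : ∑ k ∈ Finset.range (n+1+1),
              ((-1:ℤ)^(n+1-k) * ((n+1).choose k)) * (k.choose i : ℤ) = 0 :=
            identity1 (Finset.mem_range.mp hi)
          rw [this, zero_mul, zero_smul]
  -- mixed differences of p everywhere
  have mixedp := mixed J hJadd Set.univ (fun x _ s _ => Set.mem_univ _) hz (n+1) hm0 p
    (fun v hv x _ => hyp1 v hv x)
  -- full polynomial property
  have p_poly : ∀ t0 : G, (fdiff t0)^[n+1] p = 0 := by
    intro t0
    funext x
    have ht0 : t0 = U t0 - W t0 := hUW t0
    set v := U t0 with hv0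
    set w := W t0 with hw0
    have hv : v ∈ J := hU t0
    have hw : w ∈ J := hW t0
    set M : ℕ → ℕ → X := fun s t => p (x + s • v - t • w) with hM
    have h1 : ∀ t : ℕ, (fwdDiff (1:ℕ))^[n+1] (fun s : ℕ => M s t) = 0 := by
      intro t; funext s
      have hfe : (fun s : ℕ => M s t) = fun s : ℕ => p ((x - t • w) + s • v) := by
        funext s'; simp only [hM]; congr 1; abel
      rw [hfe, pullback]
      exact hyp1 v hv _
    have h2 : ∀ s : ℕ, (fwdDiff (1:ℕ))^[n+1] (fun t : ℕ => M s t) = 0 := by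
      intro s; funext t
      have hfe : (fun t : ℕ => M s t) = fun t : ℕ => p ((x + s • v) - t • w) := rfl
      rw [hfe, pullback_neg w (n+1) p (x + s • v) t, hyp1 w hw _, smul_zero]
      simp
    have hvanM : ∀ i j : ℕ, n+1 ≤ i + j → coefB M i j = 0 := by
      intro i j hij
      rw [hM, coefB_eq_mixed_neg, mixedp v hv w hw i j hij (x - j • w) (Set.mem_univ _),
        smul_zero]
    have htayM : ∀ s t : ℕ, M s t = ∑ i ∈ Finset.range (n+1), ∑ j ∈ Finset.range (n+1),
        ((s.choose i : ℤ) * (t.choose j : ℤ)) • coefB M i j := by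
      intro s t
      rw [taylor2 (n+1) M h1 h2 s t, nested_to_z]
    show (fwdDiff t0)^[n+1] p x = 0
    rw [fwdDiff_iter_eq_sum_shift]
    calc ∑ k ∈ Finset.range (n+1+1), ((-1:ℤ)^(n+1-k) * ((n+1).choose k)) • p (x + k • t0)
        = ∑ k ∈ Finset.range (n+1+1), ((-1:ℤ)^(n+1-k) * ((n+1).choose k)) • M k k := by
          apply Finset.sum_congr rfl; intro k _
          congr 1
          simp only [hM]
          congr 1
          rw [ht0, smul_sub]
          abel
      _ = ∑ k ∈ Finset.range (n+1+1), ((-1:ℤ)^(n+1-k) * ((n+1).choose k))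
            • (∑ i ∈ Finset.range (n+1), ∑ j ∈ Finset.range (n+1),
                ((k.choose i : ℤ) * (k.choose j : ℤ)) • coefB M i j) := by
          apply Finset.sum_congr rfl; intro k _
          rw [htayM k k]
      _ = ∑ i ∈ Finset.range (n+1), ∑ j ∈ Finset.range (n+1),
            (∑ k ∈ Finset.range (n+1+1), ((-1:ℤ)^(n+1-k) * ((n+1).choose k))
              * ((k.choose i : ℤ) * (k.choose j : ℤ))) • coefB M i j := push2 _ _ _ _ _
      _ = 0 := by
          apply Finset.sum_eq_zero; intro i hi
          apply Finset.sum_eq_zero; intro j hj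
          rcases le_or_gt (n+1) (i+j) with hij | hij
          · rw [hvanM i j hij, smul_zero]
          · rw [identity3 hij, zero_smul]
  -- continuity
  have hIntAdd : ∀ z ∈ interior J, ∀ a ∈ J, z + a ∈ interior J := by
    intro z hzI a haJ
    have h1 : ((fun y => y + a) '' interior J) ⊆ J := by
      rintro _ ⟨y, hy, rfl⟩
      exact hJadd y (interior_subset hy) a haJ
    have h2 : IsOpen ((fun y => y + a) '' interior J) :=
      (isOpenMap_add_right a) _ isOpen_interior
    exact interior_maximal h1 h2 ⟨z, hzI, rfl⟩
  have p_cont : Continuous p := by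
    rw [continuous_iff_continuousAt]
    intro g0
    obtain ⟨z0, hz0⟩ := hJint
    have hw1 : W g0 + z0 ∈ J := hJadd _ (hW g0) _ (interior_subset hz0)
    set w1 := W g0 + z0 with hw1def
    have hg0w : g0 + w1 ∈ interior J := by
      have he : g0 + w1 = z0 + U g0 := by
        calc g0 + w1 = (g0 + W g0) + z0 := by rw [hw1def]; abel
          _ = U g0 + z0 := by rw [hUWadd g0]
          _ = z0 + U g0 := add_comm _ _
      rw [he]
      exact hIntAdd z0 hz0 _ (hU g0)
    have hmemr : ∀ r : ℕ, g0 + (r+1) • w1 ∈ interior J := by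
      intro r
      induction r with
      | zero => simpa using hg0w
      | succ r ih =>
        have he : g0 + (r+1+1) • w1 = (g0 + (r+1) • w1) + w1 := by
          rw [succ_nsmul]; abel
        rw [he]
        exact hIntAdd _ ih _ hw1
    have hpeq : ∀ g : G, g + w1 ∈ interior J →
        p g = ∑ r ∈ Finset.range (n+1), ((-1:ℤ)^r * ((n+1).choose (r+1)))
          • q (g + (r+1) • w1) := by
      intro g hg
      have hgw : g + w1 ∈ J := interior_subset hg
      rw [p_eq' _ hgw _ hw1 g (by abel)]
      rw [hF]
      apply Finset.sum_congr rfl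
      intro r _
      congr 1
      rw [succ_nsmul]
      abel
    have hVopen : IsOpen {g : G | g + w1 ∈ interior J} :=
      isOpen_interior.preimage (continuous_id.add continuous_const)
    have hcf : ContinuousAt (fun g => ∑ r ∈ Finset.range (n+1),
        ((-1:ℤ)^r * ((n+1).choose (r+1))) • q (g + (r+1) • w1)) g0 := by
      apply tendsto_finset_sum
      intro r _
      refine ContinuousAt.const_smul (M := ℤ) (g := fun b => q (b + (r+1) • w1)) ?_ _
      have hpt : g0 + (r+1) • w1 ∈ interior J := hmemr r
      have hqc : ContinuousAt q (g0 + (r+1) • w1) :=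
        hq_cont.continuousAt (mem_interior_iff_mem_nhds.mp hpt)
      have hcc : ContinuousAt (q ∘ (fun g : G => g + (r+1) • w1)) g0 :=
        ContinuousAt.comp (x := g0) (f := fun g : G => g + (r+1) • w1) hqc
          ((continuous_id.add continuous_const).continuousAt)
      exact hcc
    apply hcf.congr
    filter_upwards [hVopen.mem_nhds hg0w] with g hg
    exact (hpeq g hg).symm
  -- conclusion
  refine ⟨p, ⟨p_cont, p_poly, p_res⟩, ?_⟩
  rintro p' ⟨hc', hp', hr'⟩
  funext g
  have keyval : ∀ pp : G → X, (∀ t : G, (fdiff t)^[n+1] pp = 0) → (∀ t ∈ J, pp t = q t) →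
      ((-1:ℤ)^(n+1)) • pp g
        = - ∑ r ∈ Finset.range (n+1), ((-1:ℤ)^(n+1-(r+1)) * ((n+1).choose (r+1)))
            • q (U g + r • W g) := by
    intro pp hpoly hres
    have h0 : (fwdDiff (W g))^[n+1] pp g = 0 := by
      have hcg := congrFun (hpoly (W g)) g
      exact hcg
    rw [fwdDiff_iter_eq_sum_shift, Finset.sum_range_succ'] at h0
    have hpt : ∀ r ∈ Finset.range (n+1),
        ((-1:ℤ)^(n+1-(r+1)) * ((n+1).choose (r+1))) • pp (g + (r+1) • W g)
          = ((-1:ℤ)^(n+1-(r+1)) * ((n+1).choose (r+1))) • q (U g + r • W g) := by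
      intro r _
      have hmem : U g + r • W g ∈ J := add_nsmul_memD hDJ (hU g) (hW g) r
      have harg : g + (r+1) • W g = U g + r • W g := by
        calc g + (r+1) • W g = (g + W g) + r • W g := by rw [succ_nsmul]; abel
          _ = U g + r • W g := by rw [hUWadd g]
      rw [harg, hres _ hmem]
    rw [Finset.sum_congr rfl hpt] at h0
    have h00 : ((-1:ℤ)^(n+1-0) * ((n+1).choose 0)) • pp (g + 0 • W g)
        = ((-1:ℤ)^(n+1)) • pp g := by
      simp
    rw [h00] at h0
    exact eq_neg_of_add_eq_zero_right h0
  have e1 := keyval p p_poly p_res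
  have e2 := keyval p' hp' hr'
  have hdiff : ((-1:ℤ)^(n+1)) • (p' g - p g) = 0 := by
    rw [smul_sub, e1, e2, sub_self]
  rcases hz _ _ hdiff with h | h
  · exfalso
    have : (-1:ℤ)^(n+1) ≠ 0 := by positivity
    exact this h
  · exact sub_eq_zero.mp h
end

section
/- Let G be a Hausdorff topological abelian group, X a complex Banach space, and J ⊆ G a subsemigroup containing 0, with nonempty interior, such that G = J − J = {u − v : u, v ∈ J}. Fix n ∈ ℕ and suppose that the complex vector space P^n(J,ℂ) is finite dimensional. Then for every p ∈ P^n(J,X) there exist finitely many q_1, …, q_k ∈ P^n(J,ℂ) and x_1, …, x_k ∈ X such that p(t) = Σ_{j=1}^k q_j(t) · x_j for all t ∈ J. -/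
/-- `q` is a polynomial of degree at most `n` on `J`: continuous on `J` and all
iterated differences of order `n+1` by elements of `J` vanish on `J`. -/
def IsPolyOn {G X : Type*} [Add G] [TopologicalSpace G] [AddCommGroup X] [TopologicalSpace X]
    (J : Set G) (n : ℕ) (q : G → X) : Prop :=
  ContinuousOn q J ∧ ∀ v ∈ J, ∀ t ∈ J, (fdiff v)^[n + 1] q t = 0

/-- Iterated differences commute with subtraction-preserving maps. -/
lemma fdiff_iter_comp {G X Y : Type*} [Add G] [Sub X] [Sub Y]
    (L : X → Y) (hL : ∀ a b, L (a - b) = L a - L b) (v : G) (m : ℕ) (p : G → X) (t : G) :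
    (fdiff v)^[m] (fun s => L (p s)) t = L ((fdiff v)^[m] p t) := by
  induction m generalizing p with
  | zero => rfl
  | succ m ih =>
    rw [Function.iterate_succ_apply, Function.iterate_succ_apply]
    have h : fdiff v (fun s => L (p s)) = fun s => L (fdiff v p s) := by
      funext s; simp [fdiff, hL]
    rw [h, ih]

/-- Iterated differences commute with finite linear combinations of scalar functions. -/
lemma fdiff_iter_sum {G : Type*} [Add G] {k : ℕ} (c : Fin k → ℂ) (v : G) (m : ℕ)
    (f : Fin k → G → ℂ) (t : G) :
    (fdiff v)^[m] (fun s => ∑ i, c i * f i s) t = ∑ i, c i * (fdiff v)^[m] (f i) t := by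
  induction m generalizing f with
  | zero => rfl
  | succ m ih =>
    simp only [Function.iterate_succ_apply]
    have h : fdiff v (fun s => ∑ i, c i * f i s) = fun s => ∑ i, c i * fdiff v (f i) s := by
      funext s
      simp [fdiff, ← Finset.sum_sub_distrib, mul_sub]
    rw [h]
    exact ih fun i => fdiff v (f i)

/-- A finite linear combination of scalar polynomials is a polynomial. -/
lemma isPolyOn_sum {G : Type*} [Add G] [TopologicalSpace G] (J : Set G) (n : ℕ) {k : ℕ}
    (b : Fin k → G → ℂ) (hb : ∀ i, IsPolyOn J n (b i)) (c : Fin k → ℂ) :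
    IsPolyOn J n (fun t => ∑ i, c i * b i t) := by
  constructor
  · exact continuousOn_finset_sum _ fun i _ => continuousOn_const.mul (hb i).1
  · intro v hv t ht
    rw [fdiff_iter_sum]
    refine Finset.sum_eq_zero fun i _ => ?_
    rw [(hb i).2 v hv t ht, mul_zero]

/-- Composition with a continuous linear functional preserves polynomials. -/
lemma isPolyOn_comp_clm {G X : Type*} [Add G] [TopologicalSpace G]
    [NormedAddCommGroup X] [NormedSpace ℂ X] (J : Set G) (n : ℕ) {p : G → X}
    (hp : IsPolyOn J n p) (φ : X →L[ℂ] ℂ) : IsPolyOn J n (fun t => φ (p t)) := by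
  constructor
  · exact φ.continuous.comp_continuousOn hp.1
  · intro v hv t ht
    exact (fdiff_iter_comp (fun x => φ x) (fun a b => map_sub φ a b) v (n + 1) p t).trans
      (by rw [hp.2 v hv t ht, map_zero])

/-- if `P^n(J,ℂ)` is finite dimensional (i.e. spanned on `J` by finitely
many of its members), then `P^n(J,X) = P^n(J,ℂ) ⊗ X`: every `X`-valued polynomial on `J`
is a finite sum `Σ q_j(t) • x_j` with `q_j ∈ P^n(J,ℂ)` and `x_j ∈ X`. -/
theorem poly_eq_scalar_combination
    {G : Type*} [AddCommGroup G] [TopologicalSpace G] [IsTopologicalAddGroup G] [T2Space G]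
    {X : Type*} [NormedAddCommGroup X] [NormedSpace ℂ X] [CompleteSpace X]
    (J : Set G) (hJ0 : (0 : G) ∈ J)
    (hJadd : ∀ a ∈ J, ∀ b ∈ J, a + b ∈ J)
    (hJint : (interior J).Nonempty)
    (hJgen : ∀ g : G, ∃ u ∈ J, ∃ v ∈ J, g = u - v)
    (n : ℕ)
    (hfin : ∃ (k : ℕ) (b : Fin k → (G → ℂ)), (∀ i, IsPolyOn J n (b i)) ∧
        ∀ q : G → ℂ, IsPolyOn J n q → ∃ c : Fin k → ℂ, ∀ t ∈ J, q t = ∑ i, c i * b i t)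
    (p : G → X) (hp : IsPolyOn J n p) :
    ∃ (k : ℕ) (qs : Fin k → (G → ℂ)) (xs : Fin k → X),
      (∀ j, IsPolyOn J n (qs j)) ∧ ∀ t ∈ J, p t = ∑ j, qs j t • xs j := by
  classical
  obtain ⟨k, b, hb, hspan⟩ := hfin
  -- the "evaluation vector" map
  set β : G → (Fin k → ℂ) := fun t i => b i t with hβ
  obtain ⟨s, hs_sub, hs_span, hs_li⟩ := exists_linearIndependent ℂ (β '' J)
  have hsfin : s.Finite := hs_li.setFinite
  haveI : Fintype s := hsfin.fintype
  set m := Fintype.card s with hm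
  set e := (Fintype.equivFin s).symm with he
  set w : Fin m → (Fin k → ℂ) := fun j => (e j : Fin k → ℂ) with hw
  have hw_mem : ∀ j, w j ∈ s := fun j => (e j).2
  have hw_li : LinearIndependent ℂ w := hs_li.comp e e.injective
  have hrange : Set.range w = s := by
    rw [hw]
    have : Set.range (fun j : Fin m => (e j : Fin k → ℂ)) =
        Set.range ((fun x : s => (x : Fin k → ℂ)) ∘ e) := rfl
    rw [this, Set.range_comp, e.surjective.range_eq, Set.image_univ, Subtype.range_coe]
  have hspan_eq : Submodule.span ℂ (Set.range w) = Submodule.span ℂ (β '' J) := by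
    rw [hrange, hs_span]
  have hmem : ∀ t ∈ J, β t ∈ Submodule.span ℂ (Set.range w) := by
    intro t ht
    rw [hspan_eq]
    exact Submodule.subset_span ⟨t, ht, rfl⟩
  set S := Submodule.span ℂ (Set.range w) with hS
  let B : Module.Basis (Fin m) ℂ S := Module.Basis.span hw_li
  -- extend the coordinate functionals to the ambient space
  have hext : ∀ j, ∃ g : (Fin k → ℂ) →ₗ[ℂ] ℂ, g.comp S.subtype = B.coord j :=
    fun j => (B.coord j).exists_extend
  choose ℓ hℓ using hext
  -- points of J realizing the basis vectors
  have hwJ : ∀ j, ∃ t, t ∈ J ∧ β t = w j := by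
    intro j
    rcases hs_sub (hw_mem j) with ⟨t, ht, hβt⟩
    exact ⟨t, ht, hβt⟩
  choose T hTJ hTβ using hwJ
  set qs : Fin m → (G → ℂ) := fun j t => ℓ j (β t) with hqs
  -- the key representation of β on J
  have key : ∀ t ∈ J, ∀ i, b i t = ∑ j, qs j t * b i (T j) := by
    intro t ht i
    set x : S := ⟨β t, hmem t ht⟩ with hx
    have hqx : ∀ j, qs j t = B.repr x j := by
      intro j
      have : (ℓ j).comp S.subtype x = B.coord j x := by rw [hℓ j]
      simpa [qs, Module.Basis.coord_apply] using this
    have hsum : (x : Fin k → ℂ) = ∑ j, B.repr x j • w j := by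
      conv_lhs => rw [← B.sum_repr x]
      push_cast [Submodule.coe_sum]
      refine Finset.sum_congr rfl fun j _ => ?_
      congr 1
      exact congrArg Subtype.val (Module.Basis.span_apply hw_li j)
    have := congrFun hsum i
    simp only [Finset.sum_apply, Pi.smul_apply, smul_eq_mul] at this
    have hwi : ∀ j, w j i = b i (T j) := by
      intro j; rw [← hTβ j]
    calc b i t = (x : Fin k → ℂ) i := rfl
      _ = ∑ j, B.repr x j * w j i := this
      _ = ∑ j, qs j t * b i (T j) := by
          refine Finset.sum_congr rfl fun j _ => ?_
          rw [hqx j, hwi j]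
  refine ⟨m, qs, fun j => p (T j), ?_, ?_⟩
  · -- each qs j is a polynomial
    intro j
    have hrep : qs j = fun t => ∑ i, (ℓ j fun j' => if i = j' then 1 else 0) * b i t := by
      funext t
      rw [hqs]
      simp only
      rw [LinearMap.pi_apply_eq_sum_univ (ℓ j) (β t)]
      exact Finset.sum_congr rfl fun i _ => by rw [smul_eq_mul, mul_comm]
    rw [hrep]
    exact isPolyOn_sum J n b hb _
  · -- the representation of p
    intro t ht
    rw [NormedSpace.eq_iff_forall_dual_eq ℂ]
    intro φ
    obtain ⟨c, hc⟩ := hspan (fun t => φ (p t)) (isPolyOn_comp_clm J n hp φ)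
    have lhs : φ (p t) = ∑ j, qs j t * φ (p (T j)) := by
      calc φ (p t) = ∑ i, c i * b i t := hc t ht
        _ = ∑ i, c i * ∑ j, qs j t * b i (T j) := by
            exact Finset.sum_congr rfl fun i _ => by rw [key t ht i]
        _ = ∑ j, qs j t * ∑ i, c i * b i (T j) := by
            simp only [Finset.mul_sum]
            rw [Finset.sum_comm]
            exact Finset.sum_congr rfl fun j _ => Finset.sum_congr rfl fun i _ => by ring
        _ = ∑ j, qs j t * φ (p (T j)) := by
            exact Finset.sum_congr rfl fun j _ => by rw [← hc (T j) (hTJ j)]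
    rw [lhs, map_sum]
    exact Finset.sum_congr rfl fun j _ => by rw [map_smul, smul_eq_mul]
end

section
/- Let G be a locally compact abelian Hausdorff topological group, X a complex Banach space, J a closed subsemigroup of G containing 0, with nonempty interior, such that G = J − J. Let φ : J → X be uniformly continuous with Δ_sφ bounded for every s ∈ J, and fix h ∈ J. Then the following are equivalent: (i) Δ_hφ is Maak ergodic (with some mean); (ii) Δ_{n·h}φ is Maak ergodic for some integer n ≥ 1; (iii) Δ_{n·h}φ is Maak ergodic for every integer n ≥ 1. -/
/-- `ψ : J → X` is Maak ergodic with mean `M`: for every `ε > 0` there is a nonempty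
finite `F ⊆ J` with `‖(1/|F|) Σ_{u∈F} ψ(u+s) - M‖ < ε` for all `s ∈ J`. -/
def MaakOn {G : Type*} [AddCommMonoid G] {X : Type*} [NormedAddCommGroup X] [Module ℝ X]
    (J : Set G) (ψ : G → X) (M : X) : Prop :=
  ∀ ε > 0, ∃ F : Finset G, F.Nonempty ∧ ↑F ⊆ J ∧
    ∀ s ∈ J, ‖(F.card : ℝ)⁻¹ • (∑ u ∈ F, ψ (u + s)) - M‖ < ε

open Finset

section Aux

open scoped Pointwise

set_option linter.unusedSectionVars false

variable {G : Type*} [AddCommGroup G] [DecidableEq G]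

lemma nsmul_mem_J {J : Set G} (hJ0 : (0:G) ∈ J)
    (hJadd : ∀ a ∈ J, ∀ b ∈ J, a + b ∈ J) {h : G} (hh : h ∈ J) (k : ℕ) :
    k • h ∈ J := by
  induction k with
  | zero => simpa using hJ0
  | succ k ih =>
    rw [succ_nsmul]
    exact hJadd _ ih _ hh

def lbox (R : ℕ) : List G → Finset G
  | [] => {0}
  | d :: l => (Finset.range R).image (fun k => k • d) + lbox R l

lemma mem_lbox_cons {R : ℕ} {d : G} {l : List G} {x : G} :
    x ∈ lbox R (d :: l) ↔ ∃ k < R, ∃ y ∈ lbox R l, x = k • d + y := by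
  simp only [lbox, Finset.mem_add, Finset.mem_image, Finset.mem_range]
  constructor
  · rintro ⟨b, ⟨k, hk, rfl⟩, c, hc, rfl⟩
    exact ⟨k, hk, c, hc, rfl⟩
  · rintro ⟨k, hk, y, hy, rfl⟩
    exact ⟨k • d, ⟨k, hk, rfl⟩, y, hy, rfl⟩

lemma zero_mem_lbox {R : ℕ} (hR : 0 < R) (l : List G) : (0:G) ∈ lbox R l := by
  induction l with
  | nil => simp [lbox]
  | cons d l ih =>
    rw [mem_lbox_cons]
    exact ⟨0, hR, 0, ih, by simp⟩

lemma lbox_subset {J : Set G} (hJ0 : (0:G) ∈ J)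
    (hJadd : ∀ a ∈ J, ∀ b ∈ J, a + b ∈ J) {R : ℕ} {l : List G}
    (hl : ∀ d ∈ l, d ∈ J) : ∀ x ∈ lbox R l, x ∈ J := by
  induction l with
  | nil => intro x hx; simp only [lbox, Finset.mem_singleton] at hx; subst hx; exact hJ0
  | cons d l ih =>
    intro x hx
    rw [mem_lbox_cons] at hx
    obtain ⟨k, -, y, hy, rfl⟩ := hx
    exact hJadd _ (nsmul_mem_J hJ0 hJadd (hl d (by simp)) k) _
      (ih (fun e he => hl e (by simp [he])) y hy)

lemma card_lbox_le {R : ℕ} (l : List G) : (lbox R l).card ≤ R ^ l.length := by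
  induction l with
  | nil => simp [lbox]
  | cons d l ih =>
    calc (lbox R (d :: l)).card ≤ ((Finset.range R).image (fun k => k • d)).card * (lbox R l).card :=
          Finset.card_add_le
      _ ≤ R * R ^ l.length := by
          gcongr
          · exact (Finset.card_image_le).trans (by simp)
      _ = R ^ (d :: l).length := by rw [List.length_cons]; ring

lemma lbox_mono {R R' : ℕ} (h : R ≤ R') (l : List G) : lbox R l ⊆ lbox R' l := by
  induction l with
  | nil => simp [lbox]
  | cons d l ih =>
    exact Finset.add_subset_add (Finset.image_subset_image (Finset.range_subset_range.mpr h)) ih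

lemma sum_add_mem_lbox {R : ℕ} {l : List G} {x : G} (hx : x ∈ lbox R l) :
    l.sum + x ∈ lbox (R+1) l := by
  induction l generalizing x with
  | nil => simp only [lbox, Finset.mem_singleton] at hx ⊢; simp [hx]
  | cons d l ih =>
    rw [mem_lbox_cons] at hx
    obtain ⟨k, hk, y, hy, rfl⟩ := hx
    rw [mem_lbox_cons]
    refine ⟨k + 1, by omega, l.sum + y, ih hy, ?_⟩
    rw [List.sum_cons, succ_nsmul]
    abel

lemma single_add_mem_lbox {R : ℕ} {l : List G} {d x : G} (hd : d ∈ l) (hx : x ∈ lbox R l) :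
    d + x ∈ lbox (R+1) l := by
  induction l generalizing x with
  | nil => simp at hd
  | cons e l ih =>
    rw [mem_lbox_cons] at hx
    obtain ⟨k, hk, y, hy, rfl⟩ := hx
    rw [mem_lbox_cons]
    rcases List.mem_cons.mp hd with h1 | h1
    · subst h1
      exact ⟨k + 1, by omega, y, lbox_mono (by omega) l hy, by rw [succ_nsmul]; abel⟩
    · exact ⟨k, by omega, d + y, ih h1 hy, by abel⟩

lemma sum_add_mem_lbox_shift {R : ℕ} {l : List G} {d x : G} (hd : d ∈ l)
    (hx : x ∈ lbox R l) : ∃ y ∈ lbox (R+1) l, l.sum + x = d + y := by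
  induction l generalizing x with
  | nil => simp at hd
  | cons e l ih =>
    rw [mem_lbox_cons] at hx
    obtain ⟨k, hk, y, hy, rfl⟩ := hx
    rcases List.mem_cons.mp hd with h1 | h1
    · subst h1
      refine ⟨k • d + (l.sum + y), ?_, ?_⟩
      · rw [mem_lbox_cons]
        exact ⟨k, by omega, l.sum + y, sum_add_mem_lbox hy, rfl⟩
      · rw [List.sum_cons]; abel
    · obtain ⟨z, hz, hzy⟩ := ih h1 hy
      refine ⟨(k+1) • e + z, ?_, ?_⟩
      · rw [mem_lbox_cons]
        exact ⟨k+1, by omega, z, hz, rfl⟩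
      · rw [List.sum_cons, succ_nsmul]
        have : l.sum + y = d + z := hzy
        calc e + l.sum + (k • e + y) = (k • e + e) + (l.sum + y) := by abel
          _ = (k • e + e) + (d + z) := by rw [this]
          _ = d + (k • e + e + z) := by abel

lemma exists_good_R (m : ℕ) {δ : ℝ} (hδ : 0 < δ) (g : ℕ → ℕ) (hg1 : 1 ≤ g 1)
    (hmono : Monotone g) (hpoly : ∀ R, g R ≤ R ^ m) :
    ∃ R, 1 ≤ R ∧ (g (R+2) : ℝ) ≤ (1+δ) * g R := by
  by_contra hcon
  push_neg at hcon
  have key : ∀ K : ℕ, (1+δ)^K ≤ (g (2*K+1) : ℝ) := by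
    intro K
    induction K with
    | zero => simpa using (by exact_mod_cast hg1 : (1:ℝ) ≤ g 1)
    | succ K ih =>
      have h1 : (1+δ) * g (2*K+1) < g (2*K+1+2) := hcon (2*K+1) (by omega)
      have h2 : (1+δ)^(K+1) = (1+δ) * (1+δ)^K := by ring
      have h3 : (1+δ) * (1+δ)^K ≤ (1+δ) * g (2*K+1) := by
        apply mul_le_mul_of_nonneg_left ih (by linarith)
      have : 2*(K+1)+1 = 2*K+1+2 := by ring
      rw [h2, this]
      linarith
  have hT := tendsto_pow_const_div_const_pow_of_one_lt m (show (1:ℝ) < 1+δ by linarith)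
  have h3pos : (0:ℝ) < ((3:ℝ)^m)⁻¹ := by positivity
  obtain ⟨K, hKlt, hK1⟩ := ((hT.eventually (gt_mem_nhds h3pos)).and
    (Filter.eventually_ge_atTop 1)).exists
  have hpK : (0:ℝ) < (1+δ)^K := by positivity
  have hb1 : (1+δ)^K ≤ ((2*K+1 : ℕ) : ℝ)^m := by
    calc (1+δ)^K ≤ (g (2*K+1) : ℝ) := key K
      _ ≤ ((2*K+1)^m : ℕ) := by exact_mod_cast hpoly (2*K+1)
      _ = ((2*K+1 : ℕ) : ℝ)^m := by push_cast; ring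
  have hb2 : ((2*K+1 : ℕ) : ℝ)^m ≤ (3:ℝ)^m * (K:ℝ)^m := by
    rw [← mul_pow]
    apply pow_le_pow_left₀ (by positivity)
    push_cast
    have : (1:ℝ) ≤ K := by exact_mod_cast hK1
    linarith
  have hb3 : (3:ℝ)^m * (K:ℝ)^m < (3:ℝ)^m * (((3:ℝ)^m)⁻¹ * (1+δ)^K) := by
    apply mul_lt_mul_of_pos_left _ (by positivity)
    have := hKlt
    rw [div_lt_iff₀ hpK] at this
    calc (K:ℝ)^m < ((3:ℝ)^m)⁻¹ * (1+δ)^K := this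
      _ = ((3:ℝ)^m)⁻¹ * (1+δ)^K := rfl
  have : (1+δ)^K < (1+δ)^K := by
    calc (1+δ)^K ≤ ((2*K+1 : ℕ) : ℝ)^m := hb1
      _ ≤ (3:ℝ)^m * (K:ℝ)^m := hb2
      _ < (3:ℝ)^m * (((3:ℝ)^m)⁻¹ * (1+δ)^K) := hb3
      _ = (1+δ)^K := by field_simp
  exact lt_irrefl _ this

lemma exists_folner {J : Set G} (hJ0 : (0:G) ∈ J) (hJadd : ∀ a ∈ J, ∀ b ∈ J, a + b ∈ J)
    (D : Finset G) (hD : ↑D ⊆ J) {δ : ℝ} (hδ : 0 < δ) :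
    ∃ E : Finset G, E.Nonempty ∧ ↑E ⊆ J ∧ ∀ d ∈ D,
      (((E \ E.image (· + d)).card + (E.image (· + d) \ E).card : ℕ) : ℝ) ≤ δ * E.card := by
  set l := D.toList with hl
  have hlJ : ∀ d ∈ l, d ∈ J := fun d hd => hD (by simpa [hl, Finset.mem_toList] using hd)
  set g : ℕ → ℕ := fun R => (lbox R l).card with hg
  have hg1 : 1 ≤ g 1 := Finset.card_pos.mpr ⟨0, zero_mem_lbox one_pos l⟩
  have hmono : Monotone g := fun R R' hR => Finset.card_le_card (lbox_mono hR l)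
  have hpoly : ∀ R, g R ≤ R ^ l.length := fun R => card_lbox_le l
  obtain ⟨R, hR1, hRg⟩ := exists_good_R l.length (half_pos hδ) g hg1 hmono hpoly
  refine ⟨lbox (R+1) l, ⟨0, zero_mem_lbox (by omega) l⟩,
    fun x hx => lbox_subset hJ0 hJadd hlJ x hx, ?_⟩
  intro d hdD
  have hdl : d ∈ l := by rw [hl]; exact Finset.mem_toList.mpr hdD
  set E := lbox (R+1) l with hE
  set E' := E.image (· + d) with hE'
  set Cc := (lbox R l).image (l.sum + ·) with hCc
  have hCE : Cc ⊆ E := by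
    intro x hx
    obtain ⟨y, hy, rfl⟩ := Finset.mem_image.mp hx
    exact sum_add_mem_lbox hy
  have hCE' : Cc ⊆ E' := by
    intro x hx
    obtain ⟨y, hy, rfl⟩ := Finset.mem_image.mp hx
    obtain ⟨z, hz, hzy⟩ := sum_add_mem_lbox_shift hdl hy
    exact Finset.mem_image.mpr ⟨z, hz, by rw [hzy, add_comm]⟩
  have hEbig : E ⊆ lbox (R+2) l := lbox_mono (by omega) l
  have hE'big : E' ⊆ lbox (R+2) l := by
    intro x hx
    obtain ⟨e, he, rfl⟩ := Finset.mem_image.mp hx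
    have h2 := single_add_mem_lbox hdl he
    show e + d ∈ lbox (R+2) l
    rw [add_comm e d]
    exact h2
  have hCcard : Cc.card = g R :=
    Finset.card_image_of_injective _ (fun a b hab => by simpa using hab)
  have h1 : (E \ E').card + g R ≤ g (R+2) := by
    have hdisj : Disjoint (E \ E') Cc :=
      (Finset.sdiff_disjoint).mono_right hCE'
    calc (E \ E').card + g R = ((E \ E') ∪ Cc).card := by
          rw [Finset.card_union_of_disjoint hdisj, hCcard]
      _ ≤ (lbox (R+2) l).card := Finset.card_le_card
          (Finset.union_subset ((Finset.sdiff_subset).trans hEbig) (hCE.trans hEbig))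
  have h2 : (E' \ E).card + g R ≤ g (R+2) := by
    have hdisj : Disjoint (E' \ E) Cc :=
      (Finset.sdiff_disjoint).mono_right hCE
    calc (E' \ E).card + g R = ((E' \ E) ∪ Cc).card := by
          rw [Finset.card_union_of_disjoint hdisj, hCcard]
      _ ≤ (lbox (R+2) l).card := Finset.card_le_card
          (Finset.union_subset ((Finset.sdiff_subset).trans hE'big) (hCE.trans hEbig))
  have hgm : (g R : ℝ) ≤ g (R+1) := by exact_mod_cast hmono (by omega : R ≤ R+1)
  have hEcard : (E.card : ℝ) = g (R+1) := rfl
  have h1' : ((E \ E').card : ℝ) + g R ≤ g (R+2) := by exact_mod_cast h1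
  have h2' : ((E' \ E).card : ℝ) + g R ≤ g (R+2) := by exact_mod_cast h2
  have hδg : (δ/2) * (g R : ℝ) ≤ (δ/2) * (g (R+1) : ℝ) :=
    mul_le_mul_of_nonneg_left hgm (by positivity)
  push_cast
  rw [hEcard]
  linarith

lemma sum_sdiff_bound {X : Type*} [NormedAddCommGroup X] {ι : Type*} [DecidableEq ι]
    (P Q : Finset ι) (f : ι → X) (C : ℝ)
    (hP : ∀ i ∈ P, ‖f i‖ ≤ C) (hQ : ∀ i ∈ Q, ‖f i‖ ≤ C) :
    ‖∑ i ∈ Q, f i - ∑ i ∈ P, f i‖ ≤ C * (((Q \ P).card + (P \ Q).card : ℕ) : ℝ) := by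
  have hQsplit : ∑ i ∈ Q \ (Q ∩ P), f i + ∑ i ∈ Q ∩ P, f i = ∑ i ∈ Q, f i :=
    Finset.sum_sdiff (Finset.inter_subset_left)
  have hPsplit : ∑ i ∈ P \ (P ∩ Q), f i + ∑ i ∈ P ∩ Q, f i = ∑ i ∈ P, f i :=
    Finset.sum_sdiff (Finset.inter_subset_left)
  have hkey : ∑ i ∈ Q, f i - ∑ i ∈ P, f i = ∑ i ∈ Q \ P, f i - ∑ i ∈ P \ Q, f i := by
    rw [← hQsplit, ← hPsplit, Finset.sdiff_inter_self_left, Finset.sdiff_inter_self_left,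
      Finset.inter_comm Q P]
    abel
  rw [hkey]
  have b1 : ‖∑ i ∈ Q \ P, f i‖ ≤ (Q \ P).card * C := by
    calc ‖∑ i ∈ Q \ P, f i‖ ≤ ∑ i ∈ Q \ P, ‖f i‖ := norm_sum_le _ _
      _ ≤ ∑ _i ∈ Q \ P, C := Finset.sum_le_sum (fun i hi => hQ i (Finset.sdiff_subset hi))
      _ = (Q \ P).card * C := by rw [Finset.sum_const, nsmul_eq_mul]
  have b2 : ‖∑ i ∈ P \ Q, f i‖ ≤ (P \ Q).card * C := by
    calc ‖∑ i ∈ P \ Q, f i‖ ≤ ∑ i ∈ P \ Q, ‖f i‖ := norm_sum_le _ _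
      _ ≤ ∑ _i ∈ P \ Q, C := Finset.sum_le_sum (fun i hi => hP i (Finset.sdiff_subset hi))
      _ = (P \ Q).card * C := by rw [Finset.sum_const, nsmul_eq_mul]
  calc ‖∑ i ∈ Q \ P, f i - ∑ i ∈ P \ Q, f i‖ ≤ ‖∑ i ∈ Q \ P, f i‖ + ‖∑ i ∈ P \ Q, f i‖ :=
        norm_sub_le _ _
    _ ≤ (Q \ P).card * C + (P \ Q).card * C := add_le_add b1 b2
    _ = C * (((Q \ P).card + (P \ Q).card : ℕ) : ℝ) := by push_cast; ring

lemma avg_sub_norm_le {X : Type*} [NormedAddCommGroup X] [NormedSpace ℝ X]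
    {ι : Type*} (F : Finset ι) (hF : F.Nonempty) (f : ι → X) (b : X) (r : ℝ)
    (hf : ∀ i ∈ F, ‖f i - b‖ ≤ r) :
    ‖(F.card : ℝ)⁻¹ • ∑ i ∈ F, f i - b‖ ≤ r := by
  have hc : (0:ℝ) < F.card := by exact_mod_cast Finset.card_pos.mpr hF
  have hb : (F.card : ℝ)⁻¹ • (∑ _i ∈ F, b) = b := by
    rw [Finset.sum_const, ← Nat.cast_smul_eq_nsmul ℝ, smul_smul, inv_mul_cancel₀ hc.ne', one_smul]
  have hrw : (F.card : ℝ)⁻¹ • ∑ i ∈ F, f i - b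
      = (F.card : ℝ)⁻¹ • ∑ i ∈ F, (f i - b) := by
    rw [Finset.sum_sub_distrib, smul_sub, hb]
  rw [hrw, norm_smul, norm_inv, Real.norm_natCast]
  have h1 : ‖∑ i ∈ F, (f i - b)‖ ≤ (F.card : ℝ) * r := by
    calc ‖∑ i ∈ F, (f i - b)‖ ≤ ∑ i ∈ F, ‖f i - b‖ := norm_sum_le _ _
      _ ≤ ∑ _i ∈ F, r := Finset.sum_le_sum hf
      _ = (F.card : ℝ) * r := by rw [Finset.sum_const, nsmul_eq_mul]
  calc (F.card : ℝ)⁻¹ * ‖∑ i ∈ F, (f i - b)‖ ≤ (F.card : ℝ)⁻¹ * ((F.card : ℝ) * r) := by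
        apply mul_le_mul_of_nonneg_left h1 (by positivity)
    _ = r := by field_simp
end Aux

section Main

variable {G : Type*} [AddCommGroup G] [DecidableEq G]
variable {X : Type*} [NormedAddCommGroup X] [NormedSpace ℝ X]

lemma fdiff_nsmul_eq_sum (φ : G → X) (h : G) (n : ℕ) (t : G) :
    fdiff (n • h) φ t = ∑ k ∈ Finset.range n, fdiff h φ (t + k • h) := by
  induction n with
  | zero => simp [fdiff]
  | succ n ih =>
    rw [Finset.sum_range_succ, ← ih]
    simp only [fdiff, succ_nsmul, ← add_assoc]
    abel

lemma easy_dir {J : Set G} (hJ0 : (0:G) ∈ J) (hJadd : ∀ a ∈ J, ∀ b ∈ J, a + b ∈ J)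
    (φ : G → X) {h : G} (hh : h ∈ J) {n : ℕ} (hn : 1 ≤ n) {M : X}
    (hM : MaakOn J (fdiff h φ) M) : MaakOn J (fdiff (n • h) φ) (n • M) := by
  intro ε hε
  have hnR : (0:ℝ) < n := by exact_mod_cast hn
  have hε' : 0 < ε / (2 * n) := by positivity
  obtain ⟨F, hFne, hFJ, hF⟩ := hM (ε / (2 * n)) hε'
  refine ⟨F, hFne, hFJ, ?_⟩
  intro s hs
  have hsum : ∑ u ∈ F, fdiff (n • h) φ (u + s)
      = ∑ k ∈ Finset.range n, ∑ u ∈ F, fdiff h φ (u + (s + k • h)) := by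
    calc ∑ u ∈ F, fdiff (n • h) φ (u + s)
        = ∑ u ∈ F, ∑ k ∈ Finset.range n, fdiff h φ (u + (s + k • h)) := by
          refine Finset.sum_congr rfl fun u _ => ?_
          rw [fdiff_nsmul_eq_sum]
          refine Finset.sum_congr rfl fun k _ => ?_
          congr 1
          abel
      _ = ∑ k ∈ Finset.range n, ∑ u ∈ F, fdiff h φ (u + (s + k • h)) := Finset.sum_comm
  have hnM : n • M = ∑ _k ∈ Finset.range n, M := by
    rw [Finset.sum_const, Finset.card_range]
  rw [hsum, Finset.smul_sum, hnM, ← Finset.sum_sub_distrib]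
  have hbound : ∀ k ∈ Finset.range n,
      ‖(F.card : ℝ)⁻¹ • ∑ u ∈ F, fdiff h φ (u + (s + k • h)) - M‖ ≤ ε / (2 * n) := by
    intro k _
    exact le_of_lt (hF (s + k • h) (hJadd s hs _ (nsmul_mem_J hJ0 hJadd hh k)))
  calc ‖∑ k ∈ Finset.range n,
        ((F.card : ℝ)⁻¹ • ∑ u ∈ F, fdiff h φ (u + (s + k • h)) - M)‖
      ≤ ∑ k ∈ Finset.range n, ‖(F.card : ℝ)⁻¹ • ∑ u ∈ F, fdiff h φ (u + (s + k • h)) - M‖ :=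
        norm_sum_le _ _
    _ ≤ ∑ _k ∈ Finset.range n, (ε / (2 * n)) := Finset.sum_le_sum hbound
    _ = n * (ε / (2 * n)) := by rw [Finset.sum_const, Finset.card_range, nsmul_eq_mul]
    _ = ε / 2 := by field_simp
    _ < ε := by linarith

lemma hard_dir {J : Set G} (hJ0 : (0:G) ∈ J) (hJadd : ∀ a ∈ J, ∀ b ∈ J, a + b ∈ J)
    (φ : G → X) {h : G} (hh : h ∈ J) {C : ℝ} (hC0 : 0 < C)
    (hC : ∀ t ∈ J, ‖fdiff h φ t‖ ≤ C)
    {n : ℕ} (hn : 1 ≤ n) {M : X} (hM : MaakOn J (fdiff (n • h) φ) M) :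
    MaakOn J (fdiff h φ) ((n : ℝ)⁻¹ • M) := by
  intro ε hε
  have hε2 : 0 < ε / 2 := by positivity
  obtain ⟨A, hAne, hAJ, hA⟩ := hM (ε / 2) hε2
  have hδ : 0 < ε / (4 * C) := by positivity
  set D : Finset G := (A ×ˢ Finset.range n).image (fun p => p.1 + p.2 • h) with hDdef
  have hDJ : ↑D ⊆ J := by
    intro d hd
    simp only [hDdef, Finset.coe_image, Set.mem_image, Finset.mem_coe,
      Finset.mem_product] at hd
    obtain ⟨⟨u, k⟩, ⟨hu, hk⟩, rfl⟩ := hd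
    exact hJadd _ (hAJ hu) _ (nsmul_mem_J hJ0 hJadd hh k)
  obtain ⟨E, hEne, hEJ, hE⟩ := exists_folner hJ0 hJadd D hDJ hδ
  refine ⟨E, hEne, hEJ, ?_⟩
  intro s hs
  have hAc : (0:ℝ) < A.card := by exact_mod_cast Finset.card_pos.mpr hAne
  have hEc : (0:ℝ) < E.card := by exact_mod_cast Finset.card_pos.mpr hEne
  have hnR : (0:ℝ) < n := by exact_mod_cast hn
  set ψ := fdiff h φ with hψ
  set A₀ : X := (E.card : ℝ)⁻¹ • ∑ u ∈ E, ψ (u + s) with hA₀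
  set W : G × ℕ → X := fun p => (E.card : ℝ)⁻¹ • ∑ e ∈ E, ψ (p.1 + p.2 • h + (e + s))
    with hW
  set V : X := (((A ×ˢ Finset.range n).card : ℝ))⁻¹ • ∑ p ∈ A ×ˢ Finset.range n, W p
    with hV
  have hprodne : (A ×ˢ Finset.range n).Nonempty :=
    hAne.product ⟨0, Finset.mem_range.mpr (by omega)⟩
  -- Part 2 : ‖A₀ - V‖ ≤ ε/4
  have key2 : ∀ p ∈ A ×ˢ Finset.range n, ‖W p - A₀‖ ≤ ε / 4 := by
    intro p hp
    have hdD : p.1 + p.2 • h ∈ D := Finset.mem_image_of_mem _ hp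
    have hdJ : p.1 + p.2 • h ∈ J := hDJ hdD
    have himg : ∑ e ∈ E, ψ (p.1 + p.2 • h + (e + s))
        = ∑ x ∈ E.image (· + (p.1 + p.2 • h)), ψ (x + s) := by
      rw [Finset.sum_image (by intro a _ b _ hab; exact add_left_injective _ hab)]
      refine Finset.sum_congr rfl fun e _ => ?_
      congr 1
      abel
    have hbd1 : ∀ x ∈ E, ‖ψ (x + s)‖ ≤ C :=
      fun x hx => hC _ (hJadd _ (hEJ hx) _ hs)
    have hbd2 : ∀ x ∈ E.image (· + (p.1 + p.2 • h)), ‖ψ (x + s)‖ ≤ C := by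
      intro x hx
      obtain ⟨e, he, rfl⟩ := Finset.mem_image.mp hx
      exact hC _ (hJadd _ (hJadd _ (hEJ he) _ hdJ) _ hs)
    have hsdiff := sum_sdiff_bound E (E.image (· + (p.1 + p.2 • h)))
      (fun x => ψ (x + s)) C hbd1 hbd2
    have hfol := hE _ hdD
    have hWA : W p - A₀ = (E.card : ℝ)⁻¹ •
        (∑ x ∈ E.image (· + (p.1 + p.2 • h)), ψ (x + s) - ∑ u ∈ E, ψ (u + s)) := by
      simp only [hW, hA₀]
      rw [smul_sub, himg]
    rw [hWA, norm_smul, norm_inv, Real.norm_natCast]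
    have hcast : (((E.image (· + (p.1 + p.2 • h)) \ E).card
        + (E \ E.image (· + (p.1 + p.2 • h))).card : ℕ) : ℝ)
        ≤ (ε / (4 * C)) * E.card := by
      push_cast at hfol ⊢
      linarith
    calc (E.card : ℝ)⁻¹ * ‖∑ x ∈ E.image (· + (p.1 + p.2 • h)), ψ (x + s) - ∑ u ∈ E, ψ (u + s)‖
        ≤ (E.card : ℝ)⁻¹ * (C * (((E.image (· + (p.1 + p.2 • h)) \ E).card
            + (E \ E.image (· + (p.1 + p.2 • h))).card : ℕ) : ℝ)) := by
          apply mul_le_mul_of_nonneg_left hsdiff (by positivity)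
      _ ≤ (E.card : ℝ)⁻¹ * (C * ((ε / (4 * C)) * E.card)) := by
          apply mul_le_mul_of_nonneg_left _ (by positivity)
          apply mul_le_mul_of_nonneg_left hcast (le_of_lt hC0)
      _ = ε / 4 := by field_simp
  have part2 : ‖A₀ - V‖ ≤ ε / 4 := by
    rw [norm_sub_rev]
    exact avg_sub_norm_le _ hprodne W A₀ (ε / 4) key2
  -- Part 1 : ‖V - n⁻¹ • M‖ ≤ ε/2
  have hsum : ∑ p ∈ A ×ˢ Finset.range n, ∑ e ∈ E, ψ (p.1 + p.2 • h + (e + s))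
      = ∑ e ∈ E, ∑ u ∈ A, fdiff (n • h) φ (u + (e + s)) := by
    rw [Finset.sum_product]
    calc ∑ u ∈ A, ∑ k ∈ Finset.range n, ∑ e ∈ E, ψ (u + k • h + (e + s))
        = ∑ u ∈ A, ∑ e ∈ E, ∑ k ∈ Finset.range n, ψ ((u + (e + s)) + k • h) := by
          refine Finset.sum_congr rfl fun u _ => ?_
          rw [Finset.sum_comm]
          refine Finset.sum_congr rfl fun e _ => Finset.sum_congr rfl fun k _ => ?_
          congr 1
          abel
      _ = ∑ u ∈ A, ∑ e ∈ E, fdiff (n • h) φ (u + (e + s)) := by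
          refine Finset.sum_congr rfl fun u _ => Finset.sum_congr rfl fun e _ => ?_
          rw [fdiff_nsmul_eq_sum, hψ]
      _ = ∑ e ∈ E, ∑ u ∈ A, fdiff (n • h) φ (u + (e + s)) := Finset.sum_comm
  have hVeq : V = (E.card : ℝ)⁻¹ • ∑ e ∈ E,
      ((n : ℝ)⁻¹ • ((A.card : ℝ)⁻¹ • ∑ u ∈ A, fdiff (n • h) φ (u + (e + s)))) := by
    have h1 : ∑ p ∈ A ×ˢ Finset.range n, W p
        = (E.card : ℝ)⁻¹ • ∑ e ∈ E, ∑ u ∈ A, fdiff (n • h) φ (u + (e + s)) := by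
      simp only [hW]
      rw [← Finset.smul_sum, hsum]
    rw [hV, h1, Finset.card_product, Finset.card_range]
    simp only [Finset.smul_sum, smul_smul]
    refine Finset.sum_congr rfl fun e _ => Finset.sum_congr rfl fun u _ => ?_
    congr 1
    push_cast
    rw [mul_inv]
    ring
  have key1 : ∀ e ∈ E, ‖(n : ℝ)⁻¹ • ((A.card : ℝ)⁻¹ • ∑ u ∈ A, fdiff (n • h) φ (u + (e + s)))
      - (n : ℝ)⁻¹ • M‖ ≤ ε / 2 := by
    intro e he
    rw [← smul_sub, norm_smul, norm_inv, Real.norm_natCast]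
    have hAe := le_of_lt (hA (e + s) (hJadd _ (hEJ he) _ hs))
    have hn1 : (n : ℝ)⁻¹ ≤ 1 := by
      rw [inv_le_one_iff₀]
      right
      exact_mod_cast hn
    calc (n : ℝ)⁻¹ * ‖(A.card : ℝ)⁻¹ • ∑ u ∈ A, fdiff (n • h) φ (u + (e + s)) - M‖
        ≤ 1 * (ε / 2) := by
          apply mul_le_mul hn1 hAe (norm_nonneg _) (by norm_num)
      _ = ε / 2 := by ring
  have part1 : ‖V - (n : ℝ)⁻¹ • M‖ ≤ ε / 2 := by
    rw [hVeq]
    exact avg_sub_norm_le E hEne _ _ (ε / 2) key1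
  calc ‖A₀ - (n : ℝ)⁻¹ • M‖ = ‖(A₀ - V) + (V - (n : ℝ)⁻¹ • M)‖ := by abel_nf
    _ ≤ ‖A₀ - V‖ + ‖V - (n : ℝ)⁻¹ • M‖ := norm_add_le _ _
    _ ≤ ε / 4 + ε / 2 := add_le_add part2 part1
    _ < ε := by linarith

end Main

/-- Lemma 4.5(a): for `φ : J → X` uniformly continuous with bounded
differences and `h ∈ J`, the following are equivalent: `Δ_hφ` is Maak ergodic;
`Δ_{n·h}φ` is Maak ergodic for some `n ≥ 1`; `Δ_{n·h}φ` is Maak ergodic for all `n ≥ 1`. -/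
theorem delta_ergodic_iff_iterates
    {G : Type*} [AddCommGroup G] [TopologicalSpace G] [IsTopologicalAddGroup G]
    [LocallyCompactSpace G] [T2Space G]
    {X : Type*} [NormedAddCommGroup X] [NormedSpace ℂ X] [CompleteSpace X]
    (J : Set G) (hJcl : IsClosed J) (hJ0 : (0 : G) ∈ J)
    (hJadd : ∀ a ∈ J, ∀ b ∈ J, a + b ∈ J)
    (hJint : (interior J).Nonempty)
    (hJgen : ∀ g : G, ∃ u ∈ J, ∃ v ∈ J, g = u - v)
    (φ : G → X)
    (hφ_uc : ∀ ε > 0, ∃ U ∈ nhds (0 : G), ∀ t ∈ J, ∀ t' ∈ J, t' - t ∈ U → ‖φ t' - φ t‖ < ε)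
    (hφ_bd : ∀ s ∈ J, ∃ C : ℝ, ∀ t ∈ J, ‖φ (t + s) - φ t‖ ≤ C)
    (h : G) (hh : h ∈ J) :
    ((∃ M, MaakOn J (fdiff h φ) M) ↔
        ∃ n : ℕ, 1 ≤ n ∧ ∃ M, MaakOn J (fdiff (n • h) φ) M) ∧
      ((∃ M, MaakOn J (fdiff h φ) M) ↔
        ∀ n : ℕ, 1 ≤ n → ∃ M, MaakOn J (fdiff (n • h) φ) M) := by
  classical
  obtain ⟨C₀, hC₀⟩ := hφ_bd h hh
  have hC : ∀ t ∈ J, ‖fdiff h φ t‖ ≤ max C₀ 1 :=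
    fun t ht => le_trans (hC₀ t ht) (le_max_left _ _)
  have hC0 : (0:ℝ) < max C₀ 1 := lt_of_lt_of_le one_pos (le_max_right _ _)
  have easy : ∀ n : ℕ, 1 ≤ n → (∃ M, MaakOn J (fdiff h φ) M) →
      ∃ M, MaakOn J (fdiff (n • h) φ) M := by
    rintro n hn ⟨M, hM⟩
    exact ⟨n • M, easy_dir hJ0 hJadd φ hh hn hM⟩
  have hard : ∀ n : ℕ, 1 ≤ n → (∃ M, MaakOn J (fdiff (n • h) φ) M) →
      ∃ M, MaakOn J (fdiff h φ) M := by
    rintro n hn ⟨M, hM⟩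
    exact ⟨(n : ℝ)⁻¹ • M, hard_dir hJ0 hJadd φ hh hC0 hC hn hM⟩
  refine ⟨⟨fun hP => ⟨1, le_rfl, easy 1 le_rfl hP⟩, fun ⟨n, hn, hM⟩ => hard n hn ⟨hM.choose, hM.choose_spec⟩⟩,
    ⟨fun hP n hn => easy n hn hP, fun H => hard 1 le_rfl (H 1 le_rfl)⟩⟩
end

section
/- Let X be a complex Banach space, let J be either ℝ or [0,∞), and let φ : J → X be uniformly continuous. If Δ_hφ is Maak ergodic for some h > 0, then Δ_sφ is Maak ergodic for every s > 0. -/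
private lemma norm_sum_sub_le_card_mul {ι X : Type*} [NormedAddCommGroup X]
    (s : Finset ι) (f g : ι → X) (c : ℝ)
    (hc : ∀ i ∈ s, ‖f i - g i‖ ≤ c) :
    ‖(∑ i ∈ s, f i) - ∑ i ∈ s, g i‖ ≤ (s.card : ℝ) * c := by
  rw [← Finset.sum_sub_distrib]
  refine (norm_sum_le _ _).trans ?_
  have := Finset.sum_le_card_nsmul s (fun i => ‖f i - g i‖) c hc
  simpa [nsmul_eq_mul] using this

set_option maxHeartbeats 1600000 in
/-- Corollary 4.6: for `J = ℝ` or `J = [0,∞)` and `φ : J → X` uniformly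
continuous, if `Δ_hφ` is Maak ergodic for some `h > 0` then `Δ_sφ` is Maak ergodic
for every `s > 0`. -/
theorem delta_ergodic_all_of_one
    {X : Type*} [NormedAddCommGroup X] [NormedSpace ℂ X] [CompleteSpace X]
    (J : Set ℝ) (hJ : J = Set.univ ∨ J = Set.Ici (0 : ℝ))
    (φ : ℝ → X) (hφ_uc : UniformContinuousOn φ J)
    (h : ℝ) (hh : 0 < h) (hE : ∃ M, MaakOn J (fdiff h φ) M) :
    ∀ s : ℝ, 0 < s → ∃ M, MaakOn J (fdiff s φ) M := by
  classical
  obtain ⟨M, hM⟩ := hE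
  intro r hr
  refine ⟨(r / h) • M, ?_⟩
  intro ε hε
  -- J is closed under adding nonnegative numbers
  have hcl2 : ∀ u s c : ℝ, u ∈ J → s ∈ J → 0 ≤ c → u + s + c ∈ J := by
    rcases hJ with rfl | rfl
    · intro u s c _ _ _; exact Set.mem_univ _
    · intro u s c hu hs hc
      simp only [Set.mem_Ici] at *
      linarith
  have hcl : ∀ s c : ℝ, s ∈ J → 0 ≤ c → s + c ∈ J := by
    rcases hJ with rfl | rfl
    · intro s c _ _; exact Set.mem_univ _
    · intro s c hs hc; simp only [Set.mem_Ici] at *; linarith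
  -- uniform continuity modulus
  have hεu : (0:ℝ) < ε / 8 := by linarith
  obtain ⟨δ0, hδ0, huc⟩ := Metric.uniformContinuousOn_iff.1 hφ_uc (ε / 8) hεu
  have hMpos : (0:ℝ) < ‖M‖ + 1 := by positivity
  set δ : ℝ := min (min δ0 r) (min h (ε * h / (4 * (‖M‖ + 1)))) with hδdef
  have hδpos : 0 < δ :=
    lt_min (lt_min hδ0 hr) (lt_min hh (div_pos (mul_pos hε hh) (by positivity)))
  have hδδ0 : δ ≤ δ0 := (min_le_left _ _).trans (min_le_left _ _)
  have hδr : δ ≤ r := (min_le_left _ _).trans (min_le_right _ _)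
  have hδh : δ ≤ h := (min_le_right _ _).trans (min_le_left _ _)
  have hδM : δ ≤ ε * h / (4 * (‖M‖ + 1)) := (min_le_right _ _).trans (min_le_right _ _)
  -- Dirichlet approximation : find q, p with |q r - p h| < δ/2
  obtain ⟨n, hn⟩ := exists_nat_gt (2 * h / δ)
  have hnpos : 0 < n := by
    have h1 : (0:ℝ) < 2 * h / δ := div_pos (by linarith) hδpos
    have : (0:ℝ) < (n:ℝ) := lt_trans h1 hn
    exact_mod_cast this
  obtain ⟨j, k, hk0, hkn, hjk⟩ := Real.exists_int_int_abs_mul_sub_le (r / h) hnpos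
  have hk0' : (0:ℝ) < (k:ℝ) := by exact_mod_cast hk0
  have hk1' : (1:ℝ) ≤ (k:ℝ) := by exact_mod_cast hk0
  have hkey : |(k:ℝ) * r - (j:ℝ) * h| < δ / 2 := by
    have h2 : (1:ℝ)/(n+1) < δ/(2*h) := by
      rw [div_lt_div_iff₀ (by positivity) (by positivity)]
      have h4 : 2 * h < (n:ℝ) * δ := (div_lt_iff₀ hδpos).1 hn
      nlinarith
    have h3 : ((k:ℝ) * (r/h) - j) * h = (k:ℝ)*r - j*h := by
      field_simp
    calc |(k:ℝ) * r - (j:ℝ) * h| = |(k:ℝ) * (r/h) - j| * h := by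
          rw [← h3, abs_mul, abs_of_pos hh]
      _ ≤ (1/(n+1)) * h := mul_le_mul_of_nonneg_right hjk (le_of_lt hh)
      _ < (δ/(2*h)) * h := mul_lt_mul_of_pos_right h2 hh
      _ = δ / 2 := by field_simp; try ring
  have hj1 : (0:ℝ) < (j:ℝ) := by
    by_contra hc
    push_neg at hc
    have hp1 : 0 ≤ ((k:ℝ) - 1) * r := mul_nonneg (by linarith) hr.le
    have hp2 : (j:ℝ) * h ≤ 0 := mul_nonpos_of_nonpos_of_nonneg hc hh.le
    have h1 : r ≤ (k:ℝ)*r - (j:ℝ)*h := by nlinarith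
    have h2 : (k:ℝ)*r - (j:ℝ)*h ≤ |(k:ℝ)*r - (j:ℝ)*h| := le_abs_self _
    linarith
  set q : ℕ := k.toNat with hqdef
  set p : ℕ := j.toNat with hpdef
  have hqcast : ((q:ℕ):ℝ) = (k:ℝ) := by
    rw [hqdef]; exact_mod_cast Int.toNat_of_nonneg (le_of_lt hk0)
  have hpcast : ((p:ℕ):ℝ) = (j:ℝ) := by
    have hj0 : 0 < j := by exact_mod_cast hj1
    rw [hpdef]; exact_mod_cast Int.toNat_of_nonneg (le_of_lt hj0)
  have hq0' : (0:ℝ) < (q:ℝ) := by rw [hqcast]; exact hk0'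
  have hq1' : (1:ℝ) ≤ (q:ℝ) := by rw [hqcast]; exact hk1'
  have hq1 : 1 ≤ q := by exact_mod_cast hq1'
  have hp0' : (0:ℝ) < (p:ℝ) := by rw [hpcast]; exact hj1
  have hqr : |(q:ℝ) * r - (p:ℝ) * h| < δ / 2 := by rw [hqcast, hpcast]; exact hkey
  have hqh : (0:ℝ) < (q:ℝ) * h := mul_pos hq0' hh
  -- bound on p/q
  have hpq_close : |(p:ℝ)/q - r/h| ≤ δ / (2*h) := by
    have e : (p:ℝ)/q - r/h = -(((q:ℝ)*r - p*h) / ((q:ℝ)*h)) := by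
      field_simp
      ring
    rw [e, abs_neg, abs_div, abs_of_pos hqh, div_le_div_iff₀ hqh (by positivity)]
    have h5 : |(q:ℝ)*r - (p:ℝ)*h| ≤ δ/2 := hqr.le
    calc |(q:ℝ)*r - (p:ℝ)*h| * (2*h) ≤ (δ/2) * (2*h) :=
          mul_le_mul_of_nonneg_right h5 (by positivity)
      _ = δ * h := by ring
      _ ≤ δ * ((q:ℝ)*h) := by nlinarith [mul_le_mul_of_nonneg_left hq1' (mul_pos hδpos hh).le]
  set C : ℝ := r/h + 1 with hCdef
  have hC : 0 < C := by rw [hCdef]; positivity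
  have hpqC : (p:ℝ)/q ≤ C := by
    have h1 : (p:ℝ)/q - r/h ≤ δ/(2*h) := (le_abs_self _).trans hpq_close
    have h2 : δ/(2*h) ≤ 1 := by rw [div_le_one (by positivity)]; linarith
    rw [hCdef]; linarith
  -- ergodicity witness for fdiff h φ
  have hε1 : (0:ℝ) < ε / (4*C) := div_pos hε (by linarith)
  obtain ⟨F, hFne, hFJ, hF⟩ := hM (ε/(4*C)) hε1
  -- pick η avoiding collisions
  set T : Finset (ℝ × ℝ × ℕ × ℕ) := F ×ˢ F ×ˢ Finset.range q ×ˢ Finset.range q with hTdef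
  set B : Finset ℝ :=
    T.image (fun t => (t.1 - t.2.1)/((t.2.2.2:ℝ) - (t.2.2.1:ℝ)) - r) with hBdef
  have hδ2q : (0:ℝ) < δ/(2*q) := div_pos hδpos (by positivity)
  obtain ⟨η, hηmem⟩ := ((Set.Ioo_infinite hδ2q).diff B.finite_toSet).nonempty
  obtain ⟨hηIoo, hηB⟩ := hηmem
  obtain ⟨hη0, hηlt⟩ := hηIoo
  set ρ : ℝ := r + η with hρdef
  have hρpos : 0 < ρ := by rw [hρdef]; linarith
  have hηδ : η < δ := by
    refine lt_of_lt_of_le hηlt ?_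
    rw [div_le_iff₀ (by positivity)]
    nlinarith
  have hqη : (q:ℝ) * η < δ/2 := by
    have h6 := (lt_div_iff₀ (by positivity : (0:ℝ) < 2*(q:ℝ))).1 hηlt
    nlinarith
  have hqρ : |(q:ℝ)*ρ - (p:ℝ)*h| < δ := by
    have e : (q:ℝ)*ρ - p*h = ((q:ℝ)*r - p*h) + (q:ℝ)*η := by rw [hρdef]; ring
    rw [e]
    calc |((q:ℝ)*r - p*h) + (q:ℝ)*η| ≤ |(q:ℝ)*r - p*h| + |(q:ℝ)*η| := abs_add_le _ _
      _ < δ/2 + δ/2 := by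
          refine add_lt_add hqr ?_
          rw [abs_of_nonneg (mul_nonneg (Nat.cast_nonneg q) hη0.le)]
          exact hqη
      _ = δ := by ring
  -- the averaging set
  set g : ℝ × ℕ → ℝ := fun x => x.1 + (x.2:ℝ) * ρ with hgdef
  set P : Finset (ℝ × ℕ) := F ×ˢ Finset.range q with hPdef
  have hinj : ∀ x ∈ P, ∀ y ∈ P, g x = g y → x = y := by
    rintro ⟨u, a⟩ hx ⟨v, b⟩ hy hxy
    simp only [hPdef, Finset.mem_product, Finset.mem_range] at hx hy
    simp only [hgdef] at hxy
    by_cases hab : a = b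
    · subst hab
      have : u = v := by linarith [hxy]
      simp [this]
    · exfalso
      apply hηB
      have hne : ((b:ℝ) - (a:ℝ)) ≠ 0 := by
        intro hc
        have : (a:ℝ) = (b:ℝ) := by linarith
        exact hab (by exact_mod_cast this)
      have hρeq : ρ = (u - v)/((b:ℝ) - (a:ℝ)) := by
        rw [eq_div_iff hne]
        linear_combination -hxy
      refine Finset.mem_coe.2 (Finset.mem_image.2 ⟨(u, v, a, b), ?_, ?_⟩)
      · simp [hTdef, Finset.mem_product, hx.1, hy.1, hx.2, hy.2]
      · show (u - v)/((b:ℝ) - (a:ℝ)) - r = η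
        rw [← hρeq, hρdef]; ring
  have hinjOn : Set.InjOn g ↑P := fun x hx y hy hxy =>
    hinj x (Finset.mem_coe.1 hx) y (Finset.mem_coe.1 hy) hxy
  refine ⟨P.image g, ?_, ?_, ?_⟩
  · refine Finset.Nonempty.image ?_ _
    rw [hPdef, Finset.nonempty_product]
    exact ⟨hFne, Finset.nonempty_range_iff.2 (by omega)⟩
  · intro v hv
    obtain ⟨⟨u, a⟩, hmem, hveq⟩ := Finset.mem_image.1 (Finset.mem_coe.1 hv)
    simp only [hPdef, Finset.mem_product, Finset.mem_range] at hmem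
    have hu : u ∈ J := hFJ hmem.1
    have h7 : u + (a:ℝ)*ρ ∈ J :=
      hcl u ((a:ℝ)*ρ) hu (mul_nonneg (Nat.cast_nonneg a) hρpos.le)
    rw [← hveq]
    simpa only [hgdef] using h7
  intro s hs
  -- cardinality
  have hcard : (((P.image g).card : ℕ) : ℝ) = (F.card : ℝ) * q := by
    rw [Finset.card_image_of_injOn hinjOn, hPdef, Finset.card_product, Finset.card_range]
    push_cast; ring
  have hFcard0 : (0:ℝ) < (F.card : ℝ) := by exact_mod_cast hFne.card_pos
  -- rewrite the sum over the image
  have hsum : ∑ v ∈ P.image g, fdiff r φ (v + s)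
      = ∑ x ∈ P, fdiff r φ (g x + s) :=
    Finset.sum_image hinj
  set S1 : X := ∑ x ∈ P, fdiff r φ (g x + s) with hS1def
  set S2 : X := ∑ x ∈ P, fdiff ρ φ (g x + s) with hS2def
  set S3 : X := ∑ u ∈ F, (φ (u + s + (p:ℝ)*h) - φ (u + s)) with hS3def
  set N : ℝ := ((F.card : ℝ) * q)⁻¹ with hNdef
  have hNpos : 0 < N := by
    rw [hNdef]; exact inv_pos.2 (mul_pos hFcard0 hq0')
  -- memberships helper
  have hmemJ : ∀ u ∈ F, ∀ c : ℝ, 0 ≤ c → u + s + c ∈ J := fun u hu c hc =>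
    hcl2 u s c (hFJ hu) hs hc
  -- bound 1 : S1 vs S2
  have hE1 : ‖S1 - S2‖ ≤ ((F.card : ℝ) * q) * (ε/8) := by
    have hb := norm_sum_sub_le_card_mul P
      (fun x => fdiff r φ (g x + s))
      (fun x => fdiff ρ φ (g x + s)) (ε/8) ?_
    · calc ‖S1 - S2‖ ≤ ((P.card : ℕ) : ℝ) * (ε/8) := hb
        _ = ((F.card : ℝ) * q) * (ε/8) := by
            rw [hPdef, Finset.card_product, Finset.card_range]; push_cast; ring
    rintro ⟨u, a⟩ hx
    simp only [hPdef, Finset.mem_product, Finset.mem_range] at hx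
    have hu : u ∈ F := hx.1
    simp only [hgdef]
    have heq : fdiff r φ (u + (a:ℝ)*ρ + s) - fdiff ρ φ (u + (a:ℝ)*ρ + s)
        = φ (u + (a:ℝ)*ρ + s + r) - φ (u + (a:ℝ)*ρ + s + ρ) := by
      simp only [fdiff]; abel
    rw [heq]
    have hann : (0:ℝ) ≤ (a:ℝ)*ρ := mul_nonneg (Nat.cast_nonneg a) hρpos.le
    have hm1 : u + (a:ℝ)*ρ + s + r ∈ J := by
      have e : u + (a:ℝ)*ρ + s + r = u + s + ((a:ℝ)*ρ + r) := by ring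
      rw [e]; exact hmemJ u hu _ (by linarith)
    have hm2 : u + (a:ℝ)*ρ + s + ρ ∈ J := by
      have e : u + (a:ℝ)*ρ + s + ρ = u + s + ((a:ℝ)*ρ + ρ) := by ring
      rw [e]; exact hmemJ u hu _ (by linarith)
    have hd : dist (u + (a:ℝ)*ρ + s + r) (u + (a:ℝ)*ρ + s + ρ) < δ0 := by
      rw [Real.dist_eq]
      have e : u + (a:ℝ)*ρ + s + r - (u + (a:ℝ)*ρ + s + ρ) = -η := by rw [hρdef]; ring
      rw [e, abs_neg, abs_of_pos hη0]
      exact lt_of_lt_of_le hηδ hδδ0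
    have h8 := huc _ hm1 _ hm2 hd
    rw [dist_eq_norm] at h8
    exact le_of_lt h8
  -- telescoping for S2
  have hS2eq : S2 = ∑ u ∈ F, (φ (u + s + (q:ℝ)*ρ) - φ (u + s)) := by
    rw [hS2def, hPdef, Finset.sum_product]
    refine Finset.sum_congr rfl fun u _ => ?_
    have tele := Finset.sum_range_sub (fun a : ℕ => φ (u + s + (a:ℝ)*ρ)) q
    have hterm : ∀ a ∈ Finset.range q,
        fdiff ρ φ (g (u, a) + s)
          = (fun a : ℕ => φ (u + s + (a:ℝ)*ρ)) (a+1) - (fun a : ℕ => φ (u + s + (a:ℝ)*ρ)) a := by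
      intro a _
      simp only [hgdef, fdiff]
      have e1 : u + (a:ℝ)*ρ + s + ρ = u + s + (((a+1:ℕ)):ℝ)*ρ := by push_cast; ring
      have e2 : u + (a:ℝ)*ρ + s = u + s + (a:ℝ)*ρ := by ring
      rw [e1, e2]
    rw [Finset.sum_congr rfl hterm, tele]
    norm_num
  -- bound 2 : S2 vs S3
  have hE2 : ‖S2 - S3‖ ≤ (F.card : ℝ) * (ε/8) := by
    rw [hS2eq, hS3def]
    refine norm_sum_sub_le_card_mul F _ _ (ε/8) ?_
    intro u hu
    have heq : (φ (u + s + (q:ℝ)*ρ) - φ (u + s)) - (φ (u + s + (p:ℝ)*h) - φ (u + s))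
        = φ (u + s + (q:ℝ)*ρ) - φ (u + s + (p:ℝ)*h) := by abel
    rw [heq]
    have hm1 : u + s + (q:ℝ)*ρ ∈ J :=
      hmemJ u hu _ (mul_nonneg (Nat.cast_nonneg q) hρpos.le)
    have hm2 : u + s + (p:ℝ)*h ∈ J :=
      hmemJ u hu _ (mul_nonneg (Nat.cast_nonneg p) hh.le)
    have hd : dist (u + s + (q:ℝ)*ρ) (u + s + (p:ℝ)*h) < δ0 := by
      rw [Real.dist_eq]
      have e : u + s + (q:ℝ)*ρ - (u + s + (p:ℝ)*h) = (q:ℝ)*ρ - (p:ℝ)*h := by ring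
      rw [e]
      exact lt_of_lt_of_le hqρ hδδ0
    have h8 := huc _ hm1 _ hm2 hd
    rw [dist_eq_norm] at h8
    exact le_of_lt h8
  -- S3 as a double sum of the h-difference
  have hS3eq : S3 = ∑ a ∈ Finset.range p, ∑ u ∈ F, fdiff h φ (u + ((a:ℝ)*h + s)) := by
    rw [hS3def, Finset.sum_comm]
    refine Finset.sum_congr rfl fun u _ => ?_
    have tele := Finset.sum_range_sub (fun a : ℕ => φ (u + s + (a:ℝ)*h)) p
    have hterm : ∀ a ∈ Finset.range p,
        fdiff h φ (u + ((a:ℝ)*h + s))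
          = (fun a : ℕ => φ (u + s + (a:ℝ)*h)) (a+1) - (fun a : ℕ => φ (u + s + (a:ℝ)*h)) a := by
      intro a _
      simp only [fdiff]
      have e1 : u + ((a:ℝ)*h + s) + h = u + s + (((a+1:ℕ)):ℝ)*h := by push_cast; ring
      have e2 : u + ((a:ℝ)*h + s) = u + s + (a:ℝ)*h := by ring
      rw [e1, e2]
    rw [Finset.sum_congr rfl hterm, tele]
    norm_num
  -- bound 3 : averaged S3 vs p • M
  have hE3 : ‖(F.card : ℝ)⁻¹ • S3 - (p:ℝ) • M‖ ≤ (p:ℝ) * (ε/(4*C)) := by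
    rw [hS3eq, Finset.smul_sum]
    have hpM : (p:ℝ) • M = ∑ _a ∈ Finset.range p, M := by
      rw [Finset.sum_const, Finset.card_range, Nat.cast_smul_eq_nsmul]
    rw [hpM, ← Finset.sum_sub_distrib]
    refine (norm_sum_le _ _).trans ?_
    have hb : ∀ a ∈ Finset.range p,
        ‖(F.card : ℝ)⁻¹ • (∑ u ∈ F, fdiff h φ (u + ((a:ℝ)*h + s))) - M‖ ≤ ε/(4*C) := by
      intro a _
      have hmem : (a:ℝ)*h + s ∈ J := by
        have := hcl s ((a:ℝ)*h) hs (mul_nonneg (Nat.cast_nonneg a) hh.le)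
        rwa [add_comm] at this
      exact le_of_lt (hF _ hmem)
    have := Finset.sum_le_card_nsmul (Finset.range p) _ (ε/(4*C)) hb
    simpa [nsmul_eq_mul, Finset.card_range] using this
  -- assemble
  rw [hsum, hcard, ← hNdef]
  have key1 : ‖N • S1 - N • S2‖ ≤ ε/8 := by
    rw [← smul_sub, norm_smul, Real.norm_eq_abs, abs_of_pos hNpos]
    calc N * ‖S1 - S2‖ ≤ N * (((F.card : ℝ) * q) * (ε/8)) :=
          mul_le_mul_of_nonneg_left hE1 (le_of_lt hNpos)
      _ = ε/8 := by
          rw [hNdef, inv_mul_cancel_left₀ (ne_of_gt (mul_pos hFcard0 hq0'))]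
  have key2 : ‖N • S2 - N • S3‖ ≤ ε/8 := by
    rw [← smul_sub, norm_smul, Real.norm_eq_abs, abs_of_pos hNpos]
    calc N * ‖S2 - S3‖ ≤ N * ((F.card : ℝ) * (ε/8)) :=
          mul_le_mul_of_nonneg_left hE2 (le_of_lt hNpos)
      _ = (q:ℝ)⁻¹ * (ε/8) := by
          rw [hNdef]
          field_simp
      _ ≤ 1 * (ε/8) := by
          refine mul_le_mul_of_nonneg_right ?_ (by positivity)
          rw [inv_eq_one_div, div_le_one hq0']
          exact hq1'
      _ = ε/8 := by ring
  have key3 : ‖N • S3 - ((p:ℝ)/q) • M‖ ≤ ε/4 := by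
    have e1 : N • S3 = (q:ℝ)⁻¹ • ((F.card : ℝ)⁻¹ • S3) := by
      rw [hNdef, smul_smul, mul_inv, mul_comm]
    have e2 : ((p:ℝ)/q) • M = (q:ℝ)⁻¹ • ((p:ℝ) • M) := by
      rw [smul_smul, div_eq_inv_mul]
    rw [e1, e2, ← smul_sub, norm_smul, Real.norm_eq_abs,
      abs_of_pos (inv_pos.2 hq0')]
    have hC0 : C ≠ 0 := ne_of_gt hC
    calc (q:ℝ)⁻¹ * ‖(F.card : ℝ)⁻¹ • S3 - (p:ℝ) • M‖
        ≤ (q:ℝ)⁻¹ * ((p:ℝ) * (ε/(4*C))) :=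
          mul_le_mul_of_nonneg_left hE3 (by positivity)
      _ = ((p:ℝ)/q) * (ε/(4*C)) := by ring
      _ ≤ C * (ε/(4*C)) :=
          mul_le_mul_of_nonneg_right hpqC (le_of_lt hε1)
      _ = ε/4 := by field_simp [hC0]; try ring
  have key4 : ‖((p:ℝ)/q) • M - (r/h) • M‖ ≤ ε/8 := by
    rw [← sub_smul, norm_smul, Real.norm_eq_abs]
    have h1 : |(p:ℝ)/q - r/h| ≤ ε/(8*(‖M‖+1)) := by
      refine hpq_close.trans ?_
      rw [div_le_div_iff₀ (by positivity) (by positivity)]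
      have hδM' : δ * (4*(‖M‖+1)) ≤ ε * h := (le_div_iff₀ (by positivity)).1 hδM
      nlinarith
    calc |(p:ℝ)/q - r/h| * ‖M‖ ≤ (ε/(8*(‖M‖+1))) * ‖M‖ :=
          mul_le_mul_of_nonneg_right h1 (norm_nonneg _)
      _ ≤ ε/8 := by
          rw [div_mul_eq_mul_div, div_le_div_iff₀ (by positivity) (by norm_num)]
          nlinarith [norm_nonneg M]
  calc ‖N • S1 - (r/h) • M‖
      ≤ ‖N • S1 - N • S2‖ + ‖N • S2 - N • S3‖ + ‖N • S3 - ((p:ℝ)/q) • M‖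
        + ‖((p:ℝ)/q) • M - (r/h) • M‖ := by
        have t1 := norm_sub_le_norm_sub_add_norm_sub (N • S1) (N • S2) ((r/h) • M)
        have t2 := norm_sub_le_norm_sub_add_norm_sub (N • S2) (N • S3) ((r/h) • M)
        have t3 := norm_sub_le_norm_sub_add_norm_sub (N • S3) (((p:ℝ)/q) • M) ((r/h) • M)
        linarith
    _ ≤ ε/8 + ε/8 + ε/4 + ε/8 := by linarith
    _ < ε := by linarith
end

section
/- Let G be a locally compact abelian Hausdorff topological group, X a complex Banach space, J a closed subsemigroup of G containing 0, with nonempty interior, such that G = J − J, and let w be a standard weight on G. Let F be a closed linear subspace of BC_w(J,X) that is translation invariant (φ ∈ F and t ∈ J imply φ_t ∈ F). Suppose φ ∈ BC_w(J,X), p is a polynomial on J belonging to BC_w(J,X), (φ − p)/w is Maak ergodic with mean 0, and Δ_tφ ∈ F for every t ∈ J. Then φ − p belongs to the closure in (BC_w(J,X), ‖·‖_{w,∞}) of the subspace F + C_{w,0}(J,X); moreover, if w ≡ 1, then φ − p ∈ F. -/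
/-- A standard weight: conditions (1.1)-(1.3) and (2.1)-(2.3) of the paper. -/
def IsStdWeight {G : Type*} [AddCommGroup G] [TopologicalSpace G] (w : G → ℝ) : Prop :=
  Continuous w ∧ (∀ t : G, 1 ≤ w t) ∧ (∀ s t : G, w (s + t) ≤ w s * w t) ∧
    (∀ t : G, w (-t) = w t) ∧
    (∀ t : G, Summable fun n : ℕ => Real.log (w (n • t)) / (n : ℝ) ^ 2) ∧
    ((∀ t : G, w t = 1) ∨ ∀ ε > 0, IsCompact {t : G | ε ≤ 1 / w t}) ∧
    (∀ h : G, ∀ ε > 0, IsCompact {t : G | ε ≤ |(w (t + h) - w t) / w t|}) ∧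
    (∀ ε > 0, ∃ U ∈ nhds (0 : G), ∀ h ∈ U, ∀ t : G, |w (t + h) - w t| ≤ ε * w t)

/-- `ψ : J → X` is Maak ergodic with mean `M`. -/
def MaakMean {J : Type*} [AddCommMonoid J] {X : Type*} [NormedAddCommGroup X] [Module ℝ X]
    (ψ : J → X) (M : X) : Prop :=
  ∀ ε > 0, ∃ F : Finset J, F.Nonempty ∧
    ∀ s : J, ‖(F.card : ℝ)⁻¹ • (∑ u ∈ F, ψ (u + s)) - M‖ < ε

set_option linter.unusedSectionVars false
set_option maxHeartbeats 1000000

section auxA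
variable {M : Type*} [AddCommMonoid M] {X : Type*} [NormedAddCommGroup X] [NormedSpace ℝ X]

private lemma fdiff_telescope (h : M) (f : M → X) (t : M) (n : ℕ) :
    f (t + n • h) - f t = ∑ k ∈ Finset.range n, fdiff h f (t + k • h) := by
  induction n with
  | zero => simp
  | succ n ih =>
      rw [Finset.sum_range_succ, ← ih, succ_nsmul, ← add_assoc]
      simp only [fdiff]
      abel

private lemma norm_nsmul_real (n : ℕ) (x : X) : ‖n • x‖ = n * ‖x‖ := by
  rw [← Nat.cast_smul_eq_nsmul ℝ, norm_smul]; simp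

private lemma poly_bounded_fdiff_eq_zero (h : M) :
    ∀ (m : ℕ) (p : M → X) (C : ℝ), (∀ t, (fdiff h)^[m + 1] p t = 0) → (∀ t, ‖p t‖ ≤ C) →
      ∀ t, fdiff h p t = 0 := by
  intro m
  induction m with
  | zero => intro p C h1 _ t; simpa using h1 t
  | succ m ih =>
    intro p C h1 hb t
    set q := fdiff h p with hq
    have hq1 : ∀ s, (fdiff h)^[m + 1] q s = 0 := by
      intro s; rw [hq, ← Function.iterate_succ_apply]; exact h1 s
    have hqb : ∀ s, ‖q s‖ ≤ 2 * C := by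
      intro s
      calc ‖p (s + h) - p s‖ ≤ ‖p (s + h)‖ + ‖p s‖ := norm_sub_le _ _
        _ ≤ 2 * C := by have := hb (s + h); have := hb s; linarith
    have hqd : ∀ s, fdiff h q s = 0 := ih q (2 * C) hq1 hqb
    have hqk : ∀ (s : M) (k : ℕ), q (s + k • h) = q s := by
      intro s k
      have h2 := fdiff_telescope h q s k
      simp only [hqd, Finset.sum_const_zero] at h2
      exact sub_eq_zero.mp h2
    have key : ∀ n : ℕ, ‖n • q t‖ ≤ 2 * C := by
      intro n
      have h2 := fdiff_telescope h p t n
      simp only [← hq, hqk] at h2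
      rw [Finset.sum_const, Finset.card_range] at h2
      rw [← h2]
      calc ‖p (t + n • h) - p t‖ ≤ ‖p (t + n • h)‖ + ‖p t‖ := norm_sub_le _ _
        _ ≤ 2 * C := by have := hb (t + n • h); have := hb t; linarith
    by_contra hne
    have hpos : 0 < ‖q t‖ := norm_pos_iff.mpr hne
    obtain ⟨n, hn⟩ := exists_nat_gt (2 * C / ‖q t‖)
    have := key n
    rw [norm_nsmul_real] at this
    rw [div_lt_iff₀ hpos] at hn
    linarith

end auxA

section auxB
variable {G : Type*} [AddCommGroup G] [TopologicalSpace G] [IsTopologicalAddGroup G]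
  {X : Type*} [NormedAddCommGroup X] [NormedSpace ℝ X]

private lemma weight_nsmul_le (w : G → ℝ) (hw1 : ∀ t, 1 ≤ w t)
    (hwm : ∀ s t, w (s + t) ≤ w s * w t) (g : G) (j : ℕ) : w (j • g) ≤ w 0 * w g ^ j := by
  induction j with
  | zero => simpa using le_mul_of_one_le_right (by linarith [hw1 (0:G)]) le_rfl
  | succ j ih =>
      have h1 : w ((j + 1) • g) ≤ w (j • g) * w g := by rw [succ_nsmul]; exact hwm _ _
      have h2 : w (j • g) * w g ≤ (w 0 * w g ^ j) * w g :=
        mul_le_mul_of_nonneg_right ih (by linarith [hw1 g])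
      calc w ((j+1) • g) ≤ (w 0 * w g ^ j) * w g := le_trans h1 h2
        _ = w 0 * w g ^ (j+1) := by ring

private lemma poly_fdiff_small (w : G → ℝ) (hw1 : ∀ t, 1 ≤ w t)
    (hwm : ∀ s t, w (s + t) ≤ w s * w t)
    (h7 : ∀ h : G, ∀ ε > 0, IsCompact {t : G | ε ≤ |(w (t + h) - w t) / w t|})
    (S : AddSubmonoid G) (h : ↥S) :
    ∀ (m : ℕ) (p : ↥S → X) (C : ℝ), (∀ t, (fdiff h)^[m + 1] p t = 0) →
      (∀ t, ‖p t‖ ≤ C * w ↑t) → ∀ δ > 0, ∃ K : Set G, IsCompact K ∧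
      ∀ t : ↥S, ↑t ∉ K → ‖fdiff h p t‖ ≤ δ * w ↑t := by
  have hwpos : ∀ t : G, 0 < w t := fun t => lt_of_lt_of_le one_pos (hw1 t)
  intro m
  induction m with
  | zero =>
      intro p C h1 _ δ hδ
      refine ⟨∅, isCompact_empty, fun t _ => ?_⟩
      have : fdiff h p t = 0 := by simpa using h1 t
      rw [this, norm_zero]
      exact mul_nonneg hδ.le (le_trans zero_le_one (hw1 _))
  | succ m ih =>
      intro p C h1 hb δ hδ
      have hC0 : 0 ≤ C := by
        have h0 := hb 0
        have := norm_nonneg (p 0)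
        nlinarith [hwpos ((0:↥S) : G)]
      set q := fdiff h p with hqdef
      have hq1 : ∀ s, (fdiff h)^[m + 1] q s = 0 := by
        intro s; rw [hqdef, ← Function.iterate_succ_apply]; exact h1 s
      have hqb : ∀ s, ‖q s‖ ≤ (C * (w ↑h + 1)) * w ↑s := by
        intro s
        have hcoe : ((s + h : ↥S) : G) = (s : G) + (h : G) := rfl
        calc ‖p (s + h) - p s‖ ≤ ‖p (s + h)‖ + ‖p s‖ := norm_sub_le _ _
          _ ≤ C * w ((s : G) + h) + C * w s := by
              have := hb (s + h); rw [hcoe] at this; linarith [hb s]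
          _ ≤ C * (w (s:G) * w h) + C * w s :=
              add_le_add_left (mul_le_mul_of_nonneg_left (hwm _ _) hC0) _
          _ = (C * (w ↑h + 1)) * w ↑s := by ring
      set n : ℕ := ⌈6 * C / δ⌉₊ + 1 with hn
      have hn1 : 1 ≤ n := Nat.le_add_left 1 _
      have hnpos : (0:ℝ) < n := by rw [hn]; positivity
      have h3C : 3 * C ≤ n * (δ / 2) := by
        have h6 : 6 * C / δ ≤ (n : ℝ) := le_trans (Nat.le_ceil _) (by exact_mod_cast Nat.le_succ _)
        rw [div_le_iff₀ hδ] at h6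
        nlinarith
      set Wb : ℝ := w 0 * w ↑h ^ n with hWb
      have hWb1 : 1 ≤ Wb := by
        have h1' := hw1 (0 : G)
        have h2' : (1:ℝ) ≤ w (h:G) ^ n := one_le_pow₀ (hw1 _)
        rw [hWb]; nlinarith
      have hWbpos : 0 < Wb := lt_of_lt_of_le one_pos hWb1
      set δ' : ℝ := δ / (2 * n * Wb) with hδ'
      have hδ'pos : 0 < δ' := by positivity
      obtain ⟨K₂, hK₂c, hK₂⟩ := ih q (C * (w ↑h + 1)) hq1 hqb δ' hδ'pos
      set K₁ : Set G := {g | 1 ≤ |(w (g + n • (h:G)) - w g) / w g|} with hK₁def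
      have hK₁c : IsCompact K₁ := h7 (n • (h:G)) 1 one_pos
      set K : Set G := K₁ ∪ ⋃ j ∈ Finset.range n, (fun g : G => g + j • (h:G)) ⁻¹' K₂ with hK
      have hKc : IsCompact K := by
        apply hK₁c.union
        apply (Finset.range n).finite_toSet.isCompact_biUnion
        intro j _
        exact (Homeomorph.addRight (j • (h:G))).isCompact_preimage.2 hK₂c
      refine ⟨K, hKc, fun t ht => ?_⟩
      have ht1 : (t:G) ∉ K₁ := fun hx => ht (Set.mem_union_left _ hx)
      have ht2 : ∀ j ∈ Finset.range n, ((t:G) + j • (h:G)) ∉ K₂ := by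
        intro j hj hx
        exact ht (Set.mem_union_right _ (Set.mem_biUnion hj hx))
      have hw2 : w ((t:G) + n • (h:G)) ≤ 2 * w (t:G) := by
        have : ¬ (1 ≤ |(w ((t:G) + n • (h:G)) - w (t:G)) / w (t:G)|) := ht1
        push_neg at this
        rw [abs_div, abs_of_pos (hwpos _), div_lt_one (hwpos _)] at this
        have := abs_lt.mp this
        linarith [this.2]
      have hcoen : ((t + n • h : ↥S) : G) = (t:G) + n • (h:G) := by
        push_cast [AddSubmonoidClass.coe_nsmul]
        rfl
      have hpn : ‖p (t + n • h)‖ ≤ 2 * C * w (t:G) := by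
        calc ‖p (t + n • h)‖ ≤ C * w ((t + n • h : ↥S) : G) := hb _
          _ = C * w ((t:G) + n • (h:G)) := by rw [hcoen]
          _ ≤ C * (2 * w (t:G)) := mul_le_mul_of_nonneg_left hw2 hC0
          _ = 2 * C * w (t:G) := by ring
      have hterm : ∀ j ∈ Finset.range n, ‖fdiff h q (t + j • h)‖ ≤ δ' * (Wb * w (t:G)) := by
        intro j hj
        have hcoej : ((t + j • h : ↥S) : G) = (t:G) + j • (h:G) := by
          push_cast [AddSubmonoidClass.coe_nsmul]; rfl
        have h4 := hK₂ (t + j • h) (by rw [hcoej]; exact ht2 j hj)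
        rw [hcoej] at h4
        have h5 : w ((t:G) + j • (h:G)) ≤ w (t:G) * (w 0 * w (h:G) ^ j) :=
          le_trans (hwm _ _) (mul_le_mul_of_nonneg_left (weight_nsmul_le w hw1 hwm _ j)
            (le_of_lt (hwpos _)))
        have h6 : w (h:G) ^ j ≤ w (h:G) ^ n :=
          pow_le_pow_right₀ (hw1 _) (le_of_lt (Finset.mem_range.mp hj))
        have h7' : w ((t:G) + j • (h:G)) ≤ Wb * w (t:G) := by
          have h8' : w 0 * w (h:G) ^ j ≤ Wb := by
            rw [hWb]; exact mul_le_mul_of_nonneg_left h6 (le_of_lt (hwpos _))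
          calc w ((t:G) + j • (h:G)) ≤ w (t:G) * (w 0 * w (h:G) ^ j) := h5
            _ ≤ w (t:G) * Wb := mul_le_mul_of_nonneg_left h8' (le_of_lt (hwpos _))
            _ = Wb * w (t:G) := mul_comm _ _
        calc ‖fdiff h q (t + j • h)‖ ≤ δ' * w ((t:G) + j • (h:G)) := h4
          _ ≤ δ' * (Wb * w (t:G)) := mul_le_mul_of_nonneg_left h7' (le_of_lt hδ'pos)
      have htel : ∀ k : ℕ, q (t + k • h) = q t + ∑ j ∈ Finset.range k, fdiff h q (t + j • h) := by
        intro k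
        have := fdiff_telescope h q t k
        rw [sub_eq_iff_eq_add] at this
        rw [this]; abel
      have hkey : (n • q t : X) = (p (t + n • h) - p t) -
          ∑ k ∈ Finset.range n, ∑ j ∈ Finset.range k, fdiff h q (t + j • h) := by
        have h8 : p (t + n • h) - p t = ∑ k ∈ Finset.range n, q (t + k • h) :=
          fdiff_telescope h p t n
        have h9 : ∑ k ∈ Finset.range n, q (t + k • h)
            = ∑ k ∈ Finset.range n,
              (q t + ∑ j ∈ Finset.range k, fdiff h q (t + j • h)) :=
          Finset.sum_congr rfl (fun k _ => htel k)
        rw [h8, h9, Finset.sum_add_distrib, Finset.sum_const, Finset.card_range]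
        abel
      have hsum : ‖∑ k ∈ Finset.range n, ∑ j ∈ Finset.range k, fdiff h q (t + j • h)‖ ≤
          n * (n * (δ' * (Wb * w (t:G)))) := by
        calc ‖∑ k ∈ Finset.range n, ∑ j ∈ Finset.range k, fdiff h q (t + j • h)‖
            ≤ ∑ k ∈ Finset.range n, ‖∑ j ∈ Finset.range k, fdiff h q (t + j • h)‖ :=
              norm_sum_le _ _
          _ ≤ ∑ k ∈ Finset.range n, (n * (δ' * (Wb * w (t:G)))) := by
              apply Finset.sum_le_sum
              intro k hk
              calc ‖∑ j ∈ Finset.range k, fdiff h q (t + j • h)‖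
                  ≤ ∑ j ∈ Finset.range k, ‖fdiff h q (t + j • h)‖ := norm_sum_le _ _
                _ ≤ ∑ j ∈ Finset.range k, (δ' * (Wb * w (t:G))) := by
                    apply Finset.sum_le_sum
                    intro j hj
                    exact hterm j (Finset.mem_range.mpr
                      (lt_of_lt_of_le (Finset.mem_range.mp hj)
                        (le_of_lt (Finset.mem_range.mp hk))))
                _ = k * (δ' * (Wb * w (t:G))) := by
                    rw [Finset.sum_const, Finset.card_range, nsmul_eq_mul]
                _ ≤ n * (δ' * (Wb * w (t:G))) := by
                    apply mul_le_mul_of_nonneg_right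
                    · exact_mod_cast le_of_lt (Finset.mem_range.mp hk)
                    · exact mul_nonneg (le_of_lt hδ'pos)
                        (mul_nonneg (le_of_lt hWbpos) (le_of_lt (hwpos _)))
          _ = n * (n * (δ' * (Wb * w (t:G)))) := by
              rw [Finset.sum_const, Finset.card_range, nsmul_eq_mul]
      have hnq : (n:ℝ) * ‖q t‖ ≤ n * (δ * w (t:G)) := by
        have h9 : ‖(n • q t : X)‖ ≤ 3 * C * w (t:G) + n * (n * (δ' * (Wb * w (t:G)))) := by
          rw [hkey]
          calc ‖(p (t + n • h) - p t) - ∑ k ∈ Finset.range n, ∑ j ∈ Finset.range k,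
                fdiff h q (t + j • h)‖
              ≤ ‖p (t + n • h) - p t‖ + ‖∑ k ∈ Finset.range n, ∑ j ∈ Finset.range k,
                fdiff h q (t + j • h)‖ := norm_sub_le _ _
            _ ≤ (‖p (t + n • h)‖ + ‖p t‖) + n * (n * (δ' * (Wb * w (t:G)))) :=
                add_le_add (norm_sub_le _ _) hsum
            _ ≤ (2 * C * w (t:G) + C * w (t:G)) + n * (n * (δ' * (Wb * w (t:G)))) :=
                add_le_add (add_le_add hpn (hb t)) le_rfl
            _ = 3 * C * w (t:G) + n * (n * (δ' * (Wb * w (t:G)))) := by ring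
        rw [norm_nsmul_real] at h9
        have h10 : (n:ℝ) * (n * (δ' * (Wb * w (t:G)))) = n * (δ / 2) * w (t:G) := by
          rw [hδ']
          field_simp
        have h11 : 3 * C * w (t:G) ≤ n * (δ / 2) * w (t:G) :=
          mul_le_mul_of_nonneg_right h3C (le_of_lt (hwpos _))
        rw [h10] at h9
        nlinarith [hwpos ((t:G))]
      exact le_of_mul_le_mul_left hnq hnpos

end auxB

section auxC
variable {G : Type*} [AddCommGroup G] [TopologicalSpace G]
  {X : Type*} [NormedAddCommGroup X] [NormedSpace ℂ X]

private lemma main_construction (w : G → ℝ) (hw1 : ∀ t, 1 ≤ w t)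
    (S : AddSubmonoid G) (𝓕 : Set (↥S → X))
    (h𝓕zero : (0 : ↥S → X) ∈ 𝓕)
    (h𝓕add : ∀ ψ ∈ 𝓕, ∀ χ ∈ 𝓕, ψ + χ ∈ 𝓕)
    (h𝓕smul : ∀ c : ℂ, ∀ ψ ∈ 𝓕, c • ψ ∈ 𝓕)
    (φ : ↥S → X) (p : ↥S → X)
    (hmean : MaakMean (fun t : ↥S => (w ↑t)⁻¹ • (φ t - p t)) (0 : X))
    (hdiff : ∀ t : ↥S, fdiff t φ ∈ 𝓕) (ε : ℝ) (hε : 0 < ε) :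
    ∃ F : Finset ↥S, F.Nonempty ∧ ∃ ψf ∈ 𝓕, ∀ t : ↥S,
      ‖(φ t - p t) - (ψf t +
        (((F.card : ℝ)⁻¹ • ∑ u ∈ F, (p (t + u) - p t)) +
         ((F.card : ℝ)⁻¹ • ∑ u ∈ F, (w ↑(t + u) - w ↑t) •
            ((w ↑(t + u))⁻¹ • (φ (t + u) - p (t + u))))))‖ ≤ (ε / 2) * w ↑t := by
  have hwpos : ∀ t : G, 0 < w t := fun t => lt_of_lt_of_le one_pos (hw1 t)
  obtain ⟨F, hFne, hF⟩ := hmean (ε / 2) (by positivity)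
  have hcardpos : 0 < F.card := Finset.card_pos.mpr hFne
  have hcardne : ((F.card : ℝ)) ≠ 0 := by positivity
  set N : ℝ := (F.card : ℝ)⁻¹ with hN
  set ψm : ↥S → X := fun s => (w ↑s)⁻¹ • (φ s - p s) with hψm
  refine ⟨F, hFne, ?_⟩
  set ψf : ↥S → X := fun t => (-N) • ∑ u ∈ F, (φ (t + u) - φ t) with hψf
  have hψfmem : ψf ∈ 𝓕 := by
    have hsummem : (∑ u ∈ F, fdiff u φ) ∈ 𝓕 :=
      Finset.sum_induction (fun u => fdiff u φ) (· ∈ 𝓕)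
        (fun a b ha hb => h𝓕add a ha b hb) h𝓕zero (fun u _ => hdiff u)
    have := h𝓕smul (((-N : ℝ) : ℂ)) _ hsummem
    convert this using 1
    funext t
    rw [Pi.smul_apply, Complex.coe_smul, hψf]
    simp only [Finset.sum_apply, fdiff]
  refine ⟨ψf, hψfmem, fun t => ?_⟩
  have hrec : ∀ s : ↥S, w ↑s • ψm s = φ s - p s := fun s =>
    smul_inv_smul₀ (ne_of_gt (hwpos ↑s)) _
  have hterm : ∀ u ∈ F, (φ (t + u) - φ t) - (p (t + u) - p t) -
      (w ↑(t + u) - w ↑t) • ψm (t + u) - w ↑t • ψm (t + u) = -(φ t - p t) := by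
    intro u _
    have h1 : (w ↑(t + u) - w ↑t) • ψm (t + u) + w ↑t • ψm (t + u)
        = w ↑(t + u) • ψm (t + u) := by rw [← add_smul]; ring_nf
    have h2 := hrec (t + u)
    rw [sub_sub (((φ (t + u) - φ t) - (p (t + u) - p t))), h1, h2]
    abel
  have hsum : ∑ u ∈ F, ((φ (t + u) - φ t) - (p (t + u) - p t) -
      (w ↑(t + u) - w ↑t) • ψm (t + u) - w ↑t • ψm (t + u))
      = F.card • (-(φ t - p t)) := by
    rw [Finset.sum_congr rfl hterm, Finset.sum_const]
  have hident : (φ t - p t) - (ψf t +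
      ((N • ∑ u ∈ F, (p (t + u) - p t)) +
       (N • ∑ u ∈ F, (w ↑(t + u) - w ↑t) • ψm (t + u))))
      = w ↑t • (N • ∑ u ∈ F, ψm (t + u)) := by
    have e1 : w ↑t • (N • ∑ u ∈ F, ψm (t + u)) = N • ∑ u ∈ F, w ↑t • ψm (t + u) := by
      rw [smul_comm, Finset.smul_sum]
    rw [← sub_eq_zero, e1, hψf]
    have e2 : (φ t - p t) - ((-N) • ∑ u ∈ F, (φ (t + u) - φ t) +
        ((N • ∑ u ∈ F, (p (t + u) - p t)) +
         (N • ∑ u ∈ F, (w ↑(t + u) - w ↑t) • ψm (t + u))))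
        - N • ∑ u ∈ F, w ↑t • ψm (t + u)
        = (φ t - p t) + N • (∑ u ∈ F, (φ (t + u) - φ t) - ∑ u ∈ F, (p (t + u) - p t)
            - ∑ u ∈ F, (w ↑(t + u) - w ↑t) • ψm (t + u)
            - ∑ u ∈ F, w ↑t • ψm (t + u)) := by
      module
    rw [e2]
    have e3 : ∑ u ∈ F, (φ (t + u) - φ t) - ∑ u ∈ F, (p (t + u) - p t)
        - ∑ u ∈ F, (w ↑(t + u) - w ↑t) • ψm (t + u)
        - ∑ u ∈ F, w ↑t • ψm (t + u)
        = ∑ u ∈ F, ((φ (t + u) - φ t) - (p (t + u) - p t) -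
            (w ↑(t + u) - w ↑t) • ψm (t + u) - w ↑t • ψm (t + u)) := by
      rw [← Finset.sum_sub_distrib, ← Finset.sum_sub_distrib, ← Finset.sum_sub_distrib]
    rw [e3, hsum, ← Nat.cast_smul_eq_nsmul ℝ, smul_smul, hN,
      inv_mul_cancel₀ hcardne, one_smul]
    abel
  have hB : ‖N • ∑ u ∈ F, ψm (t + u)‖ ≤ ε / 2 := by
    have h3 := hF t
    rw [sub_zero] at h3
    have h4 : ∑ u ∈ F, ψm (u + t) = ∑ u ∈ F, ψm (t + u) :=
      Finset.sum_congr rfl (fun u _ => by rw [add_comm])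
    rw [h4] at h3
    exact le_of_lt h3
  calc ‖(φ t - p t) - (ψf t +
        ((N • ∑ u ∈ F, (p (t + u) - p t)) +
         (N • ∑ u ∈ F, (w ↑(t + u) - w ↑t) • ψm (t + u))))‖
      = ‖w ↑t • (N • ∑ u ∈ F, ψm (t + u))‖ := by rw [hident]
    _ = w ↑t * ‖N • ∑ u ∈ F, ψm (t + u)‖ := by
        rw [norm_smul, Real.norm_eq_abs, abs_of_pos (hwpos _)]
    _ ≤ w ↑t * (ε / 2) := mul_le_mul_of_nonneg_left hB (le_of_lt (hwpos _))
    _ = (ε / 2) * w ↑t := mul_comm _ _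

end auxC

/-- Theorem 4.12: if `𝓕` is a translation invariant closed subspace of
`BC_w(J,X)`, `φ ∈ BC_w(J,X)` is `w`-ergodic with `w`-mean the polynomial `p`, and
`Δ_tφ ∈ 𝓕` for all `t ∈ J`, then `φ - p` lies in the closure of `𝓕 + C_{w,0}(J,X)`;
and if `w ≡ 1`, then `φ - p ∈ 𝓕`. Here `J` is realized as a closed submonoid `S`. -/
theorem difference_theorem
    {G : Type*} [AddCommGroup G] [TopologicalSpace G] [IsTopologicalAddGroup G]
    [LocallyCompactSpace G] [T2Space G]
    {X : Type*} [NormedAddCommGroup X] [NormedSpace ℂ X] [CompleteSpace X]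
    (w : G → ℝ) (hw : IsStdWeight w)
    (S : AddSubmonoid G) (hScl : IsClosed (S : Set G))
    (hSint : (interior (S : Set G)).Nonempty)
    (hSgen : ∀ g : G, ∃ u ∈ S, ∃ v ∈ S, g = u - v)
    (𝓕 : Set (↥S → X))
    (h𝓕sub : ∀ ψ ∈ 𝓕, Continuous ψ ∧ ∃ C : ℝ, ∀ t : ↥S, ‖ψ t‖ ≤ C * w ↑t)
    (h𝓕zero : (0 : ↥S → X) ∈ 𝓕)
    (h𝓕add : ∀ ψ ∈ 𝓕, ∀ χ ∈ 𝓕, ψ + χ ∈ 𝓕)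
    (h𝓕smul : ∀ c : ℂ, ∀ ψ ∈ 𝓕, c • ψ ∈ 𝓕)
    (h𝓕trans : ∀ ψ ∈ 𝓕, ∀ t : ↥S, (fun s => ψ (s + t)) ∈ 𝓕)
    (h𝓕closed : ∀ ψ : ↥S → X, Continuous ψ → (∃ C : ℝ, ∀ t : ↥S, ‖ψ t‖ ≤ C * w ↑t) →
      (∀ ε > 0, ∃ χ ∈ 𝓕, ∀ t : ↥S, ‖ψ t - χ t‖ ≤ ε * w ↑t) → ψ ∈ 𝓕)
    (φ : ↥S → X) (hφc : Continuous φ) (Cφ : ℝ) (hφb : ∀ t : ↥S, ‖φ t‖ ≤ Cφ * w ↑t)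
    (p : ↥S → X) (hpc : Continuous p)
    (m : ℕ) (hp_poly : ∀ v t : ↥S, (fdiff v)^[m + 1] p t = 0)
    (Cp : ℝ) (hpb : ∀ t : ↥S, ‖p t‖ ≤ Cp * w ↑t)
    (hmean : MaakMean (fun t : ↥S => (w ↑t)⁻¹ • (φ t - p t)) (0 : X))
    (hdiff : ∀ t : ↥S, fdiff t φ ∈ 𝓕) :
    (∀ ε > 0, ∃ ψ ∈ 𝓕, ∃ ξ : ↥S → X, Continuous ξ ∧
        (∀ δ > 0, IsCompact {t : ↥S | δ ≤ ‖ξ t‖ / w ↑t}) ∧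
        ∀ t : ↥S, ‖(φ t - p t) - (ψ t + ξ t)‖ ≤ ε * w ↑t) ∧
      ((∀ t : G, w t = 1) → φ - p ∈ 𝓕) := by
  obtain ⟨hwc, hw1, hwm, hwsym, hwsum, hw6, hw7, hw8⟩ := hw
  have hwpos : ∀ t : G, 0 < w t := fun t => lt_of_lt_of_le one_pos (hw1 t)
  have hCφ0 : 0 ≤ Cφ := by
    have h0 := hφb 0
    have := norm_nonneg (φ 0)
    nlinarith [hwpos ((0:↥S) : G)]
  have hCp0 : 0 ≤ Cp := by
    have h0 := hpb 0
    have := norm_nonneg (p 0)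
    nlinarith [hwpos ((0:↥S) : G)]
  set C₀ : ℝ := Cφ + Cp + 1 with hC₀
  have hC₀pos : 0 < C₀ := by rw [hC₀]; positivity
  have hφp : ∀ s : ↥S, ‖φ s - p s‖ ≤ (Cφ + Cp) * w ↑s := by
    intro s
    calc ‖φ s - p s‖ ≤ ‖φ s‖ + ‖p s‖ := norm_sub_le _ _
      _ ≤ (Cφ + Cp) * w ↑s := by have := hφb s; have := hpb s; linarith
  have hψmb : ∀ s : ↥S, ‖(w ↑s)⁻¹ • (φ s - p s)‖ ≤ C₀ := by
    intro s
    rw [norm_smul, Real.norm_eq_abs, abs_of_pos (inv_pos.mpr (hwpos _))]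
    rw [inv_mul_le_iff₀ (hwpos _)]
    calc ‖φ s - p s‖ ≤ (Cφ + Cp) * w ↑s := hφp s
      _ ≤ w ↑s * C₀ := by rw [hC₀]; nlinarith [hwpos ((s:↥S):G), hw1 ((s:↥S):G)]
  have hwcS : Continuous (fun t : ↥S => w ↑t) := hwc.comp continuous_subtype_val
  constructor
  · -- part 1
    intro ε hε
    obtain ⟨F, hFne, ψf, hψfmem, hbound⟩ :=
      main_construction w hw1 S 𝓕 h𝓕zero h𝓕add h𝓕smul φ p hmean hdiff ε hε
    have hcardpos : 0 < F.card := Finset.card_pos.mpr hFne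
    have hcardposR : (0:ℝ) < (F.card : ℝ) := by exact_mod_cast hcardpos
    set N : ℝ := (F.card : ℝ)⁻¹ with hN
    have hNpos : 0 < N := inv_pos.mpr hcardposR
    set Qf : ↥S → X := fun t => N • ∑ u ∈ F, (p (t + u) - p t) with hQf
    set Rf : ↥S → X := fun t => N • ∑ u ∈ F, (w ↑(t + u) - w ↑t) •
        ((w ↑(t + u))⁻¹ • (φ (t + u) - p (t + u))) with hRf
    have htrans : ∀ u : ↥S, Continuous (fun t : ↥S => t + u) := fun u =>
      continuous_id.add continuous_const
    have hψmc : Continuous (fun s : ↥S => (w ↑s)⁻¹ • (φ s - p s)) :=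
      (hwcS.inv₀ (fun s => ne_of_gt (hwpos _))).smul (hφc.sub hpc)
    have hQc : Continuous Qf := by
      apply Continuous.const_smul
      exact continuous_finset_sum F fun u _ => (hpc.comp (htrans u)).sub hpc
    have hRc : Continuous Rf := by
      apply Continuous.const_smul
      refine continuous_finset_sum F fun u _ => Continuous.smul ?_ (hψmc.comp (htrans u))
      exact Complex.continuous_ofReal.comp (((hwcS.comp (htrans u))).sub hwcS)
    refine ⟨ψf, hψfmem, fun t => Qf t + Rf t, hQc.add hRc, ?_, ?_⟩
    · -- compactness of sublevel sets
      intro δ hδ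
      have hKQ : ∀ u : ↥S, ∃ K : Set G, IsCompact K ∧
          ∀ t : ↥S, ↑t ∉ K → ‖fdiff u p t‖ ≤ (δ/4) * w ↑t := fun u =>
        poly_fdiff_small w hw1 hwm hw7 S u m p Cp (hp_poly u) hpb (δ/4) (by positivity)
      choose KQ hKQc hKQb using hKQ
      set εR : ℝ := δ / (4 * C₀) with hεR
      have hεRpos : 0 < εR := by rw [hεR]; positivity
      set KR : ↥S → Set G := fun u => {g : G | εR ≤ |(w (g + ↑u) - w g) / w g|} with hKR
      have hKRc : ∀ u, IsCompact (KR u) := fun u => hw7 ↑u εR hεRpos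
      set K : Set G := (⋃ u ∈ F, KQ u) ∪ (⋃ u ∈ F, KR u) with hK
      have hKc : IsCompact K :=
        (F.finite_toSet.isCompact_biUnion fun u _ => hKQc u).union
          (F.finite_toSet.isCompact_biUnion fun u _ => hKRc u)
      have hTcl : IsClosed {t : ↥S | δ ≤ ‖Qf t + Rf t‖ / w ↑t} :=
        isClosed_le continuous_const
          ((hQc.add hRc).norm.div hwcS (fun t => ne_of_gt (hwpos _)))
      apply IsCompact.of_isClosed_subset
        ((hScl.isClosedEmbedding_subtypeVal).isCompact_preimage hKc) hTcl
      intro t ht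
      have hδwt : δ * w ↑t ≤ ‖Qf t + Rf t‖ := by
        have ht' : δ ≤ ‖Qf t + Rf t‖ / w ↑t := ht
        rw [le_div_iff₀ (hwpos _)] at ht'
        exact ht'
      show (t : G) ∈ K
      by_contra htK
      have htQ : ∀ u ∈ F, (t:G) ∉ KQ u := by
        intro u hu hx
        exact htK (Set.mem_union_left _ (Set.mem_biUnion hu hx))
      have htR : ∀ u ∈ F, (t:G) ∉ KR u := by
        intro u hu hx
        exact htK (Set.mem_union_right _ (Set.mem_biUnion hu hx))
      have hQb : ‖Qf t‖ ≤ δ/4 * w ↑t := by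
        show ‖N • ∑ u ∈ F, (p (t + u) - p t)‖ ≤ δ/4 * w ↑t
        rw [norm_smul, Real.norm_eq_abs, abs_of_pos hNpos]
        calc N * ‖∑ u ∈ F, (p (t + u) - p t)‖
            ≤ N * ∑ u ∈ F, ‖p (t + u) - p t‖ :=
              mul_le_mul_of_nonneg_left (norm_sum_le _ _) (le_of_lt hNpos)
          _ ≤ N * ∑ u ∈ F, (δ/4 * w ↑t) := by
              apply mul_le_mul_of_nonneg_left _ (le_of_lt hNpos)
              exact Finset.sum_le_sum fun u hu => hKQb u t (htQ u hu)
          _ = N * (F.card * (δ/4 * w ↑t)) := by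
              rw [Finset.sum_const, nsmul_eq_mul]
          _ = δ/4 * w ↑t := by
              rw [hN]
              field_simp

      have hRb : ‖Rf t‖ ≤ δ/4 * w ↑t := by
        show ‖N • ∑ u ∈ F, (w ↑(t + u) - w ↑t) •
          ((w ↑(t + u))⁻¹ • (φ (t + u) - p (t + u)))‖ ≤ δ/4 * w ↑t
        rw [norm_smul, Real.norm_eq_abs, abs_of_pos hNpos]
        have hterm : ∀ u ∈ F, ‖(w ↑(t + u) - w ↑t) •
            ((w ↑(t + u))⁻¹ • (φ (t + u) - p (t + u)))‖ ≤ δ/4 * w ↑t := by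
          intro u hu
          have hcoe : ((t + u : ↥S) : G) = (t:G) + (u:G) := rfl
          have h1 : |w ((t:G) + (u:G)) - w (t:G)| ≤ εR * w ↑t := by
            have h2 : ¬ (εR ≤ |(w ((t:G) + ↑u) - w (t:G)) / w (t:G)|) := htR u hu
            push_neg at h2
            rw [abs_div, abs_of_pos (hwpos _), div_lt_iff₀ (hwpos _)] at h2
            linarith
          rw [norm_smul, Real.norm_eq_abs, hcoe]
          calc |w ((t:G) + ↑u) - w (t:G)| * ‖(w ((t:G) + ↑u))⁻¹ • (φ (t + u) - p (t + u))‖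
              ≤ (εR * w ↑t) * C₀ := by
                apply mul_le_mul h1 _ (norm_nonneg _) (mul_nonneg hεRpos.le (hwpos _).le)
                have := hψmb (t + u)
                rw [hcoe] at this
                exact this
            _ = δ/4 * w ↑t := by
                rw [hεR]
                field_simp
        calc N * ‖∑ u ∈ F, (w ↑(t + u) - w ↑t) •
              ((w ↑(t + u))⁻¹ • (φ (t + u) - p (t + u)))‖
            ≤ N * ∑ u ∈ F, ‖(w ↑(t + u) - w ↑t) •
              ((w ↑(t + u))⁻¹ • (φ (t + u) - p (t + u)))‖ :=
              mul_le_mul_of_nonneg_left (norm_sum_le _ _) (le_of_lt hNpos)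
          _ ≤ N * ∑ u ∈ F, (δ/4 * w ↑t) := by
              apply mul_le_mul_of_nonneg_left _ (le_of_lt hNpos)
              exact Finset.sum_le_sum hterm
          _ = N * (F.card * (δ/4 * w ↑t)) := by rw [Finset.sum_const, nsmul_eq_mul]
          _ = δ/4 * w ↑t := by rw [hN]; field_simp
      have := norm_add_le (Qf t) (Rf t)
      nlinarith [hwpos ((t:↥S):G)]
    · -- the bound
      intro t
      have h1 := hbound t
      have h2 : ε / 2 * w ↑t ≤ ε * w ↑t := by nlinarith [hwpos ((t:↥S):G)]
      calc ‖(φ t - p t) - (ψf t + (Qf t + Rf t))‖ ≤ ε / 2 * w ↑t := h1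
        _ ≤ ε * w ↑t := h2
  · -- part 2 : w ≡ 1
    intro hwone
    apply h𝓕closed (φ - p) (hφc.sub hpc)
    · exact ⟨Cφ + Cp, fun t => by rw [Pi.sub_apply]; exact hφp t⟩
    · intro ε hε
      obtain ⟨F, hFne, ψf, hψfmem, hbound⟩ :=
        main_construction w hw1 S 𝓕 h𝓕zero h𝓕add h𝓕smul φ p hmean hdiff ε hε
      refine ⟨ψf, hψfmem, fun t => ?_⟩
      have hpz : ∀ u : ↥S, p (t + u) - p t = 0 := by
        intro u
        have hb1 : ∀ s : ↥S, ‖p s‖ ≤ Cp := by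
          intro s
          have := hpb s
          rw [hwone] at this
          simpa using this
        exact poly_bounded_fdiff_eq_zero u m p Cp (hp_poly u) hb1 t
      have hQz : ∑ u ∈ F, (p (t + u) - p t) = 0 := Finset.sum_eq_zero fun u _ => hpz u
      have hRz : ∑ u ∈ F, (w ↑(t + u) - w ↑t) •
          ((w ↑(t + u))⁻¹ • (φ (t + u) - p (t + u))) = (0:X) :=
        Finset.sum_eq_zero fun u _ => by rw [hwone, hwone, sub_self, zero_smul]
      have h1 := hbound t
      simp only [hQz, hRz, smul_zero, add_zero] at h1
      have h2 : ε / 2 * w ↑t ≤ ε * w ↑t := by nlinarith [hwpos ((t:↥S):G)]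
      calc ‖(φ - p) t - ψf t‖ = ‖(φ t - p t) - ψf t‖ := by rw [Pi.sub_apply]
        _ ≤ ε / 2 * w ↑t := h1
        _ ≤ ε * w ↑t := h2
end
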